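/- arXiv:1203.5169 — 5 statements merged into one kernel-verified Lean document; each statement's English description precedes it below -/
import Mathlib

section
/- Let n ≥ 2 and let M be a multiset of n natural numbers, and let A(M) be the set of all permutations of M. Then there exists a universal cycle for A(M)⁻ = {w₁…w_{n−1} : w ∈ A(M)}, the set of prefixes of elements of A(M) (a set of strings of length n−1 whose cardinality equals |A(M)|). -/
namespace UCyc

variable {E V : Type} [DecidableEq E] [DecidableEq V] (s t : E → V)

def IsTrail (R : Finset E) (es : List E) : Prop :=
  es.Nodup ∧ (∀ e ∈ es, e ∈ R) ∧ es.Chain' (fun e f => t e = s f)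

/-- For a chain, the targets list is the tail of sources plus the last target. -/
lemma map_t_eq (es : List E) (h : es.Chain' (fun e f => t e = s f)) (hne : es ≠ []) :
    es.map t = (es.map s).tail ++ [t (es.getLast hne)] := by
  induction es with
  | nil => simp at hne
  | cons e l ih =>
    cases l with
    | nil => simp
    | cons f l' =>
      have hch : (f :: l').Chain' (fun e f => t e = s f) := (List.isChain_cons_cons.mp h).2
      have hts : t e = s f := (List.isChain_cons_cons.mp h).1
      have hlast : (e :: f :: l').getLast hne = (f :: l').getLast (by simp) :=
        List.getLast_cons (by simp)
      rw [List.map_cons, ih hch (by simp), hlast]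
      simp only [List.map_cons, List.tail_cons]
      rw [hts]
      simp

lemma countP_eq_count_map (es : List E) (f : E → V) (u : V) :
    es.countP (fun e => decide (f e = u)) = (es.map f).count u := by
  rw [List.count, List.countP_map]
  congr 1

/-- Counting: in a trail from `v` ending at `u ≠ v`, edges into `u` exceed edges out by 1. -/
lemma count_lemma (es : List E) (h : es.Chain' (fun e f => t e = s f)) (hne : es ≠ [])
    (u : V) (hu : u ≠ s (es.head hne)) (hend : t (es.getLast hne) = u) :
    es.countP (fun e => decide (t e = u)) = es.countP (fun e => decide (s e = u)) + 1 := by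
  rw [countP_eq_count_map, countP_eq_count_map, map_t_eq s t es h hne, hend]
  have hms : es.map s = s (es.head hne) :: (es.map s).tail := by
    cases es with
    | nil => simp at hne
    | cons e l => simp
  rw [List.count_append]
  conv_rhs => rw [hms]
  rw [List.count_cons]
  simp [hu, Ne.symm hu]

/-- For a closed trail, counts of sources and targets agree at every vertex. -/
lemma count_closed (es : List E) (h : es.Chain' (fun e f => t e = s f)) (hne : es ≠ [])
    (hclosed : t (es.getLast hne) = s (es.head hne)) (u : V) :
    es.countP (fun e => decide (t e = u)) = es.countP (fun e => decide (s e = u)) := by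
  rw [countP_eq_count_map, countP_eq_count_map, map_t_eq s t es h hne, hclosed]
  have hms : es.map s = s (es.head hne) :: (es.map s).tail := by
    cases es with
    | nil => simp at hne
    | cons e l => simp
  conv_rhs => rw [hms]
  rw [List.count_append, List.count_cons]
  by_cases hq : s (es.head hne) = u
  · simp [hq]
  · simp [hq, Ne.symm hq]

lemma countP_eq_card_filter_toFinset (es : List E) (hnd : es.Nodup) (p : E → Prop)
    [DecidablePred p] :
    es.countP (fun e => decide (p e)) = (es.toFinset.filter p).card := by
  classical
  have h : es.toFinset.filter p = (es.filter (fun e => decide (p e))).toFinset := by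
    ext x; simp
  rw [h, List.card_toFinset, (hnd.filter _).dedup, List.countP_eq_length_filter]

lemma trail_length_le (R : Finset E) (es : List E) (h : IsTrail s t R es) :
    es.length ≤ R.card := by
  obtain ⟨hnd, hsub, -⟩ := h
  calc es.length = es.toFinset.card := (List.toFinset_card_of_nodup hnd).symm
    _ ≤ R.card := Finset.card_le_card (fun e he => hsub e (List.mem_toFinset.mp he))

/-- Extension: a non-closed trail in a balanced edge set can be extended. -/
lemma extend (R : Finset E)
    (bal : ∀ u, (R.filter (fun e => s e = u)).card = (R.filter (fun e => t e = u)).card)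
    (es : List E) (h : IsTrail s t R es) (hne : es ≠ [])
    (hnc : t (es.getLast hne) ≠ s (es.head hne)) :
    ∃ e ∈ R, e ∉ es ∧ s e = t (es.getLast hne) := by
  classical
  by_contra hcon
  push_neg at hcon
  set u := t (es.getLast hne) with hu
  obtain ⟨hnd, hsub, hch⟩ := h
  have hsubfil : R.filter (fun e => s e = u) ⊆ es.toFinset.filter (fun e => s e = u) := by
    intro e he
    rw [Finset.mem_filter] at he ⊢
    exact ⟨List.mem_toFinset.mpr (by by_contra hmem; exact (hcon e he.1 hmem) he.2), he.2⟩
  have h1 : (R.filter (fun e => s e = u)).card ≤ es.countP (fun e => decide (s e = u)) := by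
    rw [countP_eq_card_filter_toFinset _ hnd]
    exact Finset.card_le_card hsubfil
  have h2 : es.countP (fun e => decide (t e = u)) ≤ (R.filter (fun e => t e = u)).card := by
    rw [countP_eq_card_filter_toFinset _ hnd]
    exact Finset.card_le_card (fun e he => by
      rw [Finset.mem_filter] at he ⊢
      exact ⟨hsub e (List.mem_toFinset.mp he.1), he.2⟩)
  have h3 := count_lemma s t es hch hne u hnc hu.symm
  have := bal u
  omega

/-- Lemma A: existence of a nonempty closed trail from `v` within balanced `R`. -/
lemma exists_closed_trail (R : Finset E)
    (bal : ∀ u, (R.filter (fun e => s e = u)).card = (R.filter (fun e => t e = u)).card)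
    (v : V) (e₀ : E) (he₀ : e₀ ∈ R) (hs0 : s e₀ = v) :
    ∃ es, IsTrail s t R es ∧ ∃ h : es ≠ [],
      s (es.head h) = v ∧ t (es.getLast h) = v := by
  classical
  suffices H : ∀ k (es : List E) (h : IsTrail s t R es) (hne : es ≠ []),
      s (es.head hne) = v → R.card - es.length ≤ k →
      ∃ es', IsTrail s t R es' ∧ ∃ h' : es' ≠ [],
        s (es'.head h') = v ∧ t (es'.getLast h') = v by
    refine H R.card [e₀] ⟨by simp, ?_, List.isChain_singleton _⟩ (by simp) (by simpa using hs0) (by omega)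
    intro e he; simp at he; subst he; exact he₀
  intro k
  induction k with
  | zero =>
    intro es h hne hhead hk
    by_cases hcl : t (es.getLast hne) = s (es.head hne)
    · exact ⟨es, h, hne, hhead, by rw [hcl, hhead]⟩
    · exfalso
      obtain ⟨e, heR, hnotmem, hse⟩ := extend s t R bal es h hne hcl
      have hlen := trail_length_le s t R (es ++ [e]) ?_
      · have := trail_length_le s t R es h
        simp at hlen
        omega
      · obtain ⟨hnd, hsub, hch⟩ := h
        refine ⟨?_, ?_, ?_⟩
        · simp [List.nodup_append, hnd, hnotmem]; exact fun a ha h => hnotmem (h ▸ ha)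
        · intro f hf
          rcases List.mem_append.mp hf with hf | hf
          · exact hsub f hf
          · simp at hf; subst hf; exact heR
        · rw [List.Chain', List.isChain_append]
          refine ⟨hch, by simp, ?_⟩
          intro x hx y hy
          simp only [List.head?_cons, Option.mem_def, Option.some.injEq] at hy
          rw [List.getLast?_eq_getLast hne] at hx
          simp at hx
          subst hx; subst hy
          exact hse.symm
  | succ k ih =>
    intro es h hne hhead hk
    by_cases hcl : t (es.getLast hne) = s (es.head hne)
    · exact ⟨es, h, hne, hhead, by rw [hcl, hhead]⟩
    · obtain ⟨e, heR, hnotmem, hse⟩ := extend s t R bal es h hne hcl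
      obtain ⟨hnd, hsub, hch⟩ := h
      have htrail' : IsTrail s t R (es ++ [e]) := by
        refine ⟨?_, ?_, ?_⟩
        · simp [List.nodup_append, hnd, hnotmem]; exact fun a ha h => hnotmem (h ▸ ha)
        · intro f hf
          rcases List.mem_append.mp hf with hf | hf
          · exact hsub f hf
          · simp at hf; subst hf; exact heR
        · rw [List.Chain', List.isChain_append]
          refine ⟨hch, by simp, ?_⟩
          intro x hx y hy
          simp only [List.head?_cons, Option.mem_def, Option.some.injEq] at hy
          rw [List.getLast?_eq_getLast hne] at hx
          simp at hx
          subst hx; subst hy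
          exact hse.symm
      have hne' : es ++ [e] ≠ [] := by simp
      refine ih (es ++ [e]) htrail' hne' ?_ ?_
      · rw [List.head_append_of_ne_nil hne]
        exact hhead
      · simp only [List.length_append, List.length_singleton]
        omega


lemma t_mem_sources (C : List E) (hch : C.Chain' (fun e f => t e = s f)) (hne : C ≠ [])
    (hclosed : t (C.getLast hne) = s (C.head hne)) (e : E) (he : e ∈ C) :
    t e ∈ C.map s := by
  have h1 : t e ∈ C.map t := List.mem_map_of_mem (f := t) he
  rw [map_t_eq s t C hch hne, hclosed] at h1
  rcases List.mem_append.mp h1 with h | h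
  · exact List.mem_of_mem_tail h
  · simp only [List.mem_singleton] at h
    rw [h]
    exact List.mem_map_of_mem (f := s) (List.head_mem hne)

lemma find_attached (edges : Finset E) (C : List E) (hC : IsTrail s t edges C)
    (hne : C ≠ []) (hclosed : t (C.getLast hne) = s (C.head hne))
    (conn : ∀ e ∈ edges, ∀ f ∈ edges,
      Relation.ReflTransGen (fun u v => ∃ g ∈ edges, s g = u ∧ t g = v) (t e) (s f))
    (f : E) (hf : f ∈ edges) (hfC : f ∉ C) :
    ∃ e ∈ edges, e ∉ C ∧ s e ∈ C.map s := by
  obtain ⟨hnd, hsub, hch⟩ := hC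
  have key : ∀ u w, Relation.ReflTransGen (fun u v => ∃ g ∈ edges, s g = u ∧ t g = v) u w →
      u ∈ C.map s → (∃ e ∈ edges, e ∉ C ∧ s e ∈ C.map s) ∨ w ∈ C.map s := by
    intro u w h
    induction h using Relation.ReflTransGen.head_induction_on with
    | refl => intro hu; exact Or.inr hu
    | head hstep _ ih =>
      intro hu
      obtain ⟨g, hg, hsg, htg⟩ := hstep
      by_cases hgC : g ∈ C
      · exact ih (by rw [← htg]; exact t_mem_sources s t C hch hne hclosed g hgC)
      · exact Or.inl ⟨g, hg, hgC, by rw [hsg]; exact hu⟩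
  have hglast : C.getLast hne ∈ edges := hsub _ (List.getLast_mem hne)
  have := key (t (C.getLast hne)) (s f) (conn _ hglast _ hf)
    (by rw [hclosed]; exact List.mem_map_of_mem (f := s) (List.head_mem hne))
  rcases this with h | h
  · exact h
  · exact ⟨f, hf, hfC, h⟩

lemma sub_balance (edges : Finset E)
    (bal : ∀ u, (edges.filter (fun e => s e = u)).card = (edges.filter (fun e => t e = u)).card)
    (C : List E) (hC : IsTrail s t edges C) (hne : C ≠ [])
    (hclosed : t (C.getLast hne) = s (C.head hne)) (u : V) :
    ((edges \ C.toFinset).filter (fun e => s e = u)).card =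
      ((edges \ C.toFinset).filter (fun e => t e = u)).card := by
  classical
  obtain ⟨hnd, hsub, hch⟩ := hC
  have hsf : ∀ (f : E → V), (edges \ C.toFinset).filter (fun e => f e = u) =
      edges.filter (fun e => f e = u) \ C.toFinset.filter (fun e => f e = u) := by
    intro f; ext x; simp [Finset.mem_filter, Finset.mem_sdiff]; tauto
  have hsub1 : ∀ (f : E → V), C.toFinset.filter (fun e => f e = u) ⊆
      edges.filter (fun e => f e = u) := by
    intro f x hx
    rw [Finset.mem_filter] at hx ⊢
    exact ⟨hsub x (List.mem_toFinset.mp hx.1), hx.2⟩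
  rw [hsf s, hsf t, Finset.card_sdiff_of_subset (hsub1 s), Finset.card_sdiff_of_subset (hsub1 t)]
  have hc : (C.toFinset.filter (fun e => s e = u)).card =
      (C.toFinset.filter (fun e => t e = u)).card := by
    rw [← countP_eq_card_filter_toFinset _ hnd, ← countP_eq_card_filter_toFinset _ hnd]
    exact (count_closed s t C hch hne hclosed u).symm
  rw [bal u, hc]

lemma splice (edges : Finset E)
    (bal : ∀ u, (edges.filter (fun e => s e = u)).card = (edges.filter (fun e => t e = u)).card)
    (conn : ∀ e ∈ edges, ∀ f ∈ edges,
      Relation.ReflTransGen (fun u v => ∃ g ∈ edges, s g = u ∧ t g = v) (t e) (s f))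
    (C : List E) (hC : IsTrail s t edges C) (hne : C ≠ [])
    (hclosed : t (C.getLast hne) = s (C.head hne)) (hncov : C.toFinset ≠ edges) :
    ∃ C', IsTrail s t edges C' ∧ ∃ hne' : C' ≠ [],
      t (C'.getLast hne') = s (C'.head hne') ∧ C.length < C'.length := by
  classical
  have hss : C.toFinset ⊂ edges :=
    ⟨fun x hx => hC.2.1 x (List.mem_toFinset.mp hx), fun h => hncov (Finset.Subset.antisymm
      (fun x hx => hC.2.1 x (List.mem_toFinset.mp hx)) h)⟩
  obtain ⟨f, hf, hfC⟩ := Finset.exists_of_ssubset hss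
  rw [List.mem_toFinset] at hfC
  obtain ⟨e, he, heC, hse⟩ := find_attached s t edges C hC hne hclosed conn f hf hfC
  set R := edges \ C.toFinset with hR
  have heR : e ∈ R := Finset.mem_sdiff.mpr ⟨he, fun h => heC (List.mem_toFinset.mp h)⟩
  have balR := sub_balance s t edges bal C hC hne hclosed
  obtain ⟨D, hD, hneD, hheadD, hlastD⟩ := exists_closed_trail s t R balR (s e) e heR rfl
  -- find the occurrence of s e in C
  obtain ⟨g, hgC, hsg⟩ := List.mem_map.mp hse
  obtain ⟨C₁, C₂, hsplit⟩ := List.append_of_mem hgC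
  obtain ⟨hndC, hsubC, hchC⟩ := hC
  obtain ⟨hndD, hsubD, hchD⟩ := hD
  have hDC : ∀ x ∈ D, x ∉ C := by
    intro x hx hxC
    have := hsubD x hx
    rw [hR, Finset.mem_sdiff] at this
    exact this.2 (List.mem_toFinset.mpr hxC)
  have hsubD' : ∀ x ∈ D, x ∈ edges := fun x hx => (Finset.mem_sdiff.mp (hsubD x hx)).1
  refine ⟨C₁ ++ (D ++ g :: C₂), ⟨?_, ?_, ?_⟩, ?_, ?_, ?_⟩
  · -- Nodup
    subst hsplit
    rw [List.nodup_append] at hndC ⊢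
    refine ⟨hndC.1, ?_, ?_⟩
    · rw [List.nodup_append]
      exact ⟨hndD, hndC.2.1, fun x hx y hy hxy => hDC x hx (List.mem_append_right _ (hxy ▸ hy))⟩
    · intro x hx
      intro y hy hxy; subst hxy; rcases List.mem_append.mp hy with h | h
      · exact hDC x h (List.mem_append_left _ hx)
      · exact hndC.2.2 x hx x h rfl
  · intro x hx
    rcases List.mem_append.mp hx with h | h
    · exact hsubC x (hsplit ▸ List.mem_append_left _ h)
    · rcases List.mem_append.mp h with h | h
      · exact hsubD' x h
      · exact hsubC x (hsplit ▸ List.mem_append_right _ h)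
  · -- Chain'
    subst hsplit
    rw [List.Chain', List.isChain_append] at hchC ⊢
    refine ⟨hchC.1, ?_, ?_⟩
    · rw [List.isChain_append]
      refine ⟨hchD, hchC.2.1, ?_⟩
      intro x hx y hy
      rw [List.getLast?_eq_getLast hneD] at hx
      simp only [Option.mem_def, Option.some.injEq, List.head?_cons] at hx hy
      subst hx; subst hy
      rw [hlastD, hsg]
    · intro x hx y hy
      rw [List.head?_eq_head (by simp : D ++ g :: C₂ ≠ [])] at hy
      simp only [Option.mem_def, Option.some.injEq] at hy
      subst hy
      rw [List.head_append_of_ne_nil hneD]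
      have := hchC.2.2 x hx g (by simp)
      rw [this, hsg, ← hheadD]
  · simp
  · -- closed
    have h1 : (C₁ ++ (D ++ g :: C₂)).getLast (by simp) = (g :: C₂).getLast (by simp) := by
      rw [List.getLast_append_of_ne_nil _ (by simp : D ++ g :: C₂ ≠ []),
        List.getLast_append_of_ne_nil _ (by simp : g :: C₂ ≠ [])]
    have h2 : t ((g :: C₂).getLast (by simp)) = s (C.head hne) := by
      have hgl : C.getLast hne = (g :: C₂).getLast (by simp) := by
        subst hsplit
        exact List.getLast_append_of_ne_nil _ (by simp)
      rw [← hgl]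
      exact hclosed
    have h3 : s ((C₁ ++ (D ++ g :: C₂)).head (by simp)) = s (C.head hne) := by
      rcases C₁ with _ | ⟨c, C₁'⟩
      · subst hsplit
        show s ((D ++ g :: C₂).head (by simp)) = s ((g :: C₂).head (by simp))
        rw [List.head_append_of_ne_nil hneD, hheadD, List.head_cons, hsg]
      · subst hsplit
        rw [List.head_append_of_ne_nil (by simp : c :: C₁' ≠ []),
          List.head_append_of_ne_nil (by simp : c :: C₁' ≠ [])]
    rw [h1, h2]
    exact h3.symm
  · subst hsplit
    have : 0 < D.length := List.length_pos_iff.mpr hneD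
    simp only [List.length_append, List.length_cons]
    omega

theorem euler_circuit (edges : Finset E) (hnem : edges.Nonempty)
    (bal : ∀ u, (edges.filter (fun e => s e = u)).card = (edges.filter (fun e => t e = u)).card)
    (conn : ∀ e ∈ edges, ∀ f ∈ edges,
      Relation.ReflTransGen (fun u v => ∃ g ∈ edges, s g = u ∧ t g = v) (t e) (s f)) :
    ∃ es, IsTrail s t edges es ∧ es.toFinset = edges ∧ ∃ h : es ≠ [],
      t (es.getLast h) = s (es.head h) := by
  classical
  suffices H : ∀ k (C : List E) (hC : IsTrail s t edges C) (hne : C ≠ []),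
      t (C.getLast hne) = s (C.head hne) → edges.card - C.length ≤ k →
      ∃ es, IsTrail s t edges es ∧ es.toFinset = edges ∧ ∃ h : es ≠ [],
        t (es.getLast h) = s (es.head h) by
    obtain ⟨e₀, he₀⟩ := hnem
    obtain ⟨C, hC, hne, hhead, hlast⟩ := exists_closed_trail s t edges bal (s e₀) e₀ he₀ rfl
    exact H edges.card C hC hne (by rw [hlast, hhead]) (by omega)
  intro k
  induction k with
  | zero =>
    intro C hC hne hclosed hk
    by_cases hcov : C.toFinset = edges
    · exact ⟨C, hC, hcov, hne, hclosed⟩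
    · exfalso
      obtain ⟨C', hC', hne', hclosed', hlen⟩ :=
        splice s t edges bal conn C hC hne hclosed hcov
      have h1 := trail_length_le s t edges C' hC'
      have h2 := trail_length_le s t edges C hC
      omega
  | succ k ih =>
    intro C hC hne hclosed hk
    by_cases hcov : C.toFinset = edges
    · exact ⟨C, hC, hcov, hne, hclosed⟩
    · obtain ⟨C', hC', hne', hclosed', hlen⟩ :=
        splice s t edges bal conn C hC hne hclosed hcov
      exact ih C' hC' hne' hclosed' (by omega)

noncomputable def edgesF (M : Multiset ℕ) : Finset (List ℕ) :=
  (M.toList.permutations.map List.dropLast).toFinset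

lemma mem_edgesF {n : ℕ} {M : Multiset ℕ} (hM : Multiset.card M = n) (hn : 2 ≤ n)
    (e : List ℕ) : e ∈ edgesF M ↔ e.length = n - 1 ∧ (↑e : Multiset ℕ) ≤ M := by
  constructor
  · intro he
    rw [edgesF, List.mem_toFinset, List.mem_map] at he
    obtain ⟨w, hw, rfl⟩ := he
    rw [List.mem_permutations] at hw
    have hwM : (↑w : Multiset ℕ) = M := by
      rw [Multiset.coe_eq_coe.mpr hw, Multiset.coe_toList]
    have hlen : w.length = n := by
      have := congrArg Multiset.card hwM
      simpa [hM] using this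
    constructor
    · rw [List.length_dropLast, hlen]
    · rw [← hwM]
      exact Multiset.coe_le.mpr (List.dropLast_sublist w).subperm
  · rintro ⟨hlen, hle⟩
    have hcard : Multiset.card (M - (↑e : Multiset ℕ)) = 1 := by
      rw [Multiset.card_sub hle, hM, Multiset.coe_card, hlen]
      omega
    obtain ⟨z, hz⟩ := Multiset.card_eq_one.mp hcard
    rw [edgesF, List.mem_toFinset, List.mem_map]
    refine ⟨e ++ [z], ?_, by simp⟩
    rw [List.mem_permutations, ← Multiset.coe_eq_coe, Multiset.coe_toList]
    show ((e ++ [z] : List ℕ) : Multiset ℕ) = M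
    have : ((e ++ [z] : List ℕ) : Multiset ℕ) = ↑e + (M - ↑e) := by
      rw [hz]
      rfl
    rw [this, add_tsub_cancel_of_le hle]

lemma edgesF_nonempty (M : Multiset ℕ) : (edgesF M).Nonempty := by
  refine ⟨M.toList.dropLast, ?_⟩
  rw [edgesF, List.mem_toFinset, List.mem_map]
  exact ⟨M.toList, List.mem_permutations.mpr (List.Perm.refl _), rfl⟩



inductive AdjStep : List ℕ → List ℕ → Prop
  | mk (l₁ l₂ : List ℕ) (a b : ℕ) : AdjStep (l₁ ++ a :: b :: l₂) (l₁ ++ b :: a :: l₂)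

lemma AdjStep.perm {p q : List ℕ} (h : AdjStep p q) : p.Perm q := by
  rcases h with ⟨l₁, l₂, a, b⟩
  exact List.Perm.append_left l₁ (List.Perm.swap b a l₂)

lemma rtg_adj_perm {p q : List ℕ} (h : Relation.ReflTransGen AdjStep p q) : p.Perm q := by
  induction h with
  | refl => exact List.Perm.refl _
  | tail hrtg hstep ih => exact ih.trans hstep.perm

lemma perm_adjsteps {p q : List ℕ} (h : p.Perm q) : Relation.ReflTransGen AdjStep p q := by
  induction h with
  | nil => exact Relation.ReflTransGen.refl
  | cons x h ih =>
    exact Relation.ReflTransGen.lift (r := AdjStep) (p := AdjStep) (x :: ·) (fun a b hab => by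
      rcases hab with ⟨l₁, l₂, a, b⟩
      exact AdjStep.mk (x :: l₁) l₂ a b) _ _ ih
  | swap x y l => exact Relation.ReflTransGen.single (AdjStep.mk [] l y x)
  | trans h1 h2 ih1 ih2 => exact ih1.trans ih2




def Step (M : Multiset ℕ) (u v : List ℕ) : Prop :=
  ∃ g ∈ edgesF M, g.dropLast = u ∧ g.tail = v

lemma coe_rotate (l : List ℕ) (k : ℕ) : ((l.rotate k : List ℕ) : Multiset ℕ) = ↑l :=
  Multiset.coe_eq_coe.mpr (List.rotate_perm l k)

section Conn

variable {n : ℕ} {M : Multiset ℕ} (hM : Multiset.card M = n) (hn : 2 ≤ n)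

include hM hn

lemma len_of_coe {p : List ℕ} (hp : (↑p : Multiset ℕ) = M) : p.length = n := by
  have := congrArg Multiset.card hp
  simpa [hM] using this

lemma step_rot (p : List ℕ) (hp : (↑p : Multiset ℕ) = M) :
    Step M (p.take (n-2)) ((p.rotate 1).take (n-2)) := by
  have hplen : p.length = n := len_of_coe hM hn hp
  refine ⟨p.take (n-1), ?_, ?_, ?_⟩
  · rw [mem_edgesF hM hn]
    constructor
    · rw [List.length_take, hplen]; omega
    · rw [← hp]; exact Multiset.coe_le.mpr (List.take_sublist _ _).subperm
  · have helen : (p.take (n-1)).length = n-1 := by rw [List.length_take, hplen]; omega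
    rw [List.dropLast_eq_take, helen, List.take_take]
    congr 1
    omega
  · cases p with
    | nil => simp at hplen; omega
    | cons a l =>
      have hl : l.length = n - 1 := by simp at hplen; omega
      have h1 : (a :: l).take (n-1) = a :: l.take (n-2) := by
        have h : n - 1 = (n-2) + 1 := by omega
        rw [h, List.take_succ_cons]
      rw [h1]
      have h2 : (a :: l).rotate 1 = l ++ [a] := by rw [List.rotate_cons_succ]; simp
      rw [h2, List.take_append_of_le_length (by omega)]
      rfl

lemma reach_rot (p : List ℕ) (hp : (↑p : Multiset ℕ) = M) (k : ℕ) :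
    Relation.ReflTransGen (Step M) (p.take (n-2)) ((p.rotate k).take (n-2)) := by
  induction k with
  | zero => rw [List.rotate_zero]
  | succ k ih =>
    have hs := step_rot hM hn (p.rotate k) (by rw [coe_rotate]; exact hp)
    rw [List.rotate_rotate] at hs
    exact ih.tail hs

lemma reach_rot_back (p : List ℕ) (hp : (↑p : Multiset ℕ) = M) (k : ℕ) :
    Relation.ReflTransGen (Step M) ((p.rotate k).take (n-2)) (p.take (n-2)) := by
  have hnpos : 0 < n := by omega
  have hplen : p.length = n := len_of_coe hM hn hp
  have h := reach_rot hM hn (p.rotate k) (by rw [coe_rotate]; exact hp) (n - k % n)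
  rw [List.rotate_rotate] at h
  have hcancel : p.rotate (k + (n - k % n)) = p := by
    have h1 : k % n < n := Nat.mod_lt _ hnpos
    have hq : n * (k / n) + k % n = k := Nat.div_add_mod k n
    have h2 : k + (n - k % n) = n * (k / n + 1) := by
      nth_rewrite 1 [← hq]
      rw [Nat.add_assoc, Nat.add_sub_cancel' (le_of_lt h1), Nat.mul_succ]
    rw [h2, ← hplen, List.rotate_length_mul]
  rw [hcancel] at h
  exact h

lemma step_swap (q : List ℕ) (y z : ℕ) (hq : ((q ++ [y, z] : List ℕ) : Multiset ℕ) = M) :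
    Step M ((q ++ [y, z]).take (n-2)) (((q ++ [z, y]).rotate 1).take (n-2)) := by
  have hqlen : q.length = n - 2 := by
    have := len_of_coe hM hn hq
    simp at this
    omega
  have hperm : ((q ++ [z, y] : List ℕ) : Multiset ℕ) = M := by
    rw [← hq]
    exact Multiset.coe_eq_coe.mpr (List.Perm.append_left q (List.Perm.swap y z []))
  have htake : (q ++ [y, z]).take (n-2) = q := List.take_left' hqlen
  rw [htake]
  refine ⟨q ++ [z], ?_, List.dropLast_concat, ?_⟩
  · rw [mem_edgesF hM hn]
    refine ⟨by simp [hqlen]; omega, ?_⟩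
    rw [← hperm]
    exact Multiset.coe_le.mpr (List.Sublist.subperm
      ((show [z].Sublist [z, y] by simp).append_left q))
  · cases q with
    | nil =>
      have h0 : n = 2 := by simp at hqlen; omega
      simp [h0]
    | cons c q' =>
      have hq' : q'.length + 1 = n - 2 := by simpa using hqlen
      have h2 : ((c :: q') ++ [z, y]).rotate 1 = (q' ++ [z, y]) ++ [c] := by
        show (c :: (q' ++ [z, y])).rotate 1 = (q' ++ [z, y]) ++ [c]
        rw [List.rotate_cons_succ]
        simp
      have h5 : n - 2 - q'.length = 1 := by omega
      rw [h2, List.take_append_of_le_length (by simp; omega),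
        List.take_append, List.take_of_length_le (by omega), h5]
      rfl

lemma reach_adj (p q : List ℕ) (hstep : AdjStep p q) (hp : (↑p : Multiset ℕ) = M) :
    Relation.ReflTransGen (Step M) (p.take (n-2)) (q.take (n-2)) := by
  rcases hstep with ⟨l₁, l₂, a, b⟩
  set i := l₁.length with hi
  have hp' : ((l₁ ++ b :: a :: l₂ : List ℕ) : Multiset ℕ) = M := by
    rw [← hp]
    exact (Multiset.coe_eq_coe.mpr (List.Perm.append_left l₁ (List.Perm.swap b a l₂))).symm
  have hrot : ∀ (x y : ℕ), (l₁ ++ x :: y :: l₂).rotate (i+2) = (l₂ ++ l₁) ++ [x, y] := by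
    intro x y
    have hxy : l₁ ++ x :: y :: l₂ = (l₁ ++ [x, y]) ++ l₂ := by simp
    have hlen2 : (l₁ ++ [x, y]).length = i + 2 := by simp [hi]
    rw [hxy, List.rotate_eq_drop_append_take
      (by simp only [List.length_append, List.length_cons]; omega),
      List.drop_left' hlen2, List.take_left' hlen2, ← List.append_assoc]
  have h1 := reach_rot hM hn _ hp (i+2)
  have h2 := step_swap hM hn (l₂ ++ l₁) a b
    (by rw [← hrot a b, coe_rotate]; exact hp)
  rw [← hrot a b, ← hrot b a, List.rotate_rotate] at h2
  have h3 := reach_rot_back hM hn _ hp' (i+2+1)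
  exact (h1.tail h2).trans h3

lemma reach_of_perm (p q : List ℕ) (hp : (↑p : Multiset ℕ) = M) (hq : (↑q : Multiset ℕ) = M) :
    Relation.ReflTransGen (Step M) (p.take (n-2)) (q.take (n-2)) := by
  have h := perm_adjsteps (Multiset.coe_eq_coe.mp (hp.trans hq.symm))
  clear hq
  induction h with
  | refl => exact Relation.ReflTransGen.refl
  | tail hrtg hstep ih =>
    refine ih.trans (reach_adj hM hn _ _ hstep ?_)
    rw [← hp]
    exact (Multiset.coe_eq_coe.mpr (rtg_adj_perm hrtg)).symm

lemma conn_vertices (u v : List ℕ) (hu1 : u.length = n-2) (hu2 : (↑u : Multiset ℕ) ≤ M)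
    (hv1 : v.length = n-2) (hv2 : (↑v : Multiset ℕ) ≤ M) :
    Relation.ReflTransGen (Step M) u v := by
  have hco : ∀ (w : List ℕ), (↑w : Multiset ℕ) ≤ M →
      ((w ++ (M - ↑w).toList : List ℕ) : Multiset ℕ) = M := by
    intro w hw
    have h0 : ((w ++ (M - ↑w).toList : List ℕ) : Multiset ℕ) = ↑w + ↑((M - ↑w).toList) := rfl
    rw [h0, Multiset.coe_toList, add_tsub_cancel_of_le hw]
  have h := reach_of_perm hM hn (u ++ (M - ↑u).toList) (v ++ (M - ↑v).toList)
    (hco u hu2) (hco v hv2)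
  rwa [List.take_left' hu1, List.take_left' hv1] at h

lemma edge_ne_nil {e : List ℕ} (he : e ∈ edgesF M) : e ≠ [] := by
  intro h
  obtain ⟨h1, -⟩ := (mem_edgesF hM hn e).mp he
  subst h
  simp at h1
  omega

lemma balance (u : List ℕ) :
    ((edgesF M).filter (fun e => e.dropLast = u)).card =
      ((edgesF M).filter (fun e => e.tail = u)).card := by
  classical
  refine Finset.card_bij'
    (fun e he => e.getLast (edge_ne_nil hM hn (Finset.mem_filter.mp he).1) :: e.dropLast)
    (fun e he => e.tail ++ [e.head (edge_ne_nil hM hn (Finset.mem_filter.mp he).1)])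
    ?_ ?_ ?_ ?_
  · intro e he
    obtain ⟨heF, heu⟩ := Finset.mem_filter.mp he
    obtain ⟨hlen, hle⟩ := (mem_edgesF hM hn e).mp heF
    have hne := edge_ne_nil hM hn heF
    have hperm : (e.getLast hne :: e.dropLast).Perm e := by
      conv_rhs => rw [← List.dropLast_append_getLast hne]
      exact (List.perm_append_singleton _ _).symm
    rw [Finset.mem_filter]
    refine ⟨(mem_edgesF hM hn _).mpr ⟨?_, ?_⟩, by simp [heu]⟩
    · simp only [List.length_cons, List.length_dropLast, hlen]
      omega
    · rw [Multiset.coe_eq_coe.mpr hperm]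
      exact hle
  · intro e he
    obtain ⟨heF, heu⟩ := Finset.mem_filter.mp he
    obtain ⟨hlen, hle⟩ := (mem_edgesF hM hn e).mp heF
    have hne := edge_ne_nil hM hn heF
    have hperm : (e.tail ++ [e.head hne]).Perm e := by
      refine (List.perm_append_singleton _ _).trans ?_
      rw [List.cons_head_tail]
    rw [Finset.mem_filter]
    refine ⟨(mem_edgesF hM hn _).mpr ⟨?_, ?_⟩, by simp [List.dropLast_concat, heu]⟩
    · have := List.length_tail (l := e)
      simp only [List.length_append, List.length_singleton, List.length_tail, hlen]
      omega
    · rw [Multiset.coe_eq_coe.mpr hperm]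
      exact hle
  · intro e he
    simp only [List.tail_cons, List.head_cons]
    exact List.dropLast_append_getLast _
  · intro e he
    have hne := edge_ne_nil hM hn (Finset.mem_filter.mp he).1
    simp only [List.dropLast_concat, List.getLast_concat]
    exact List.cons_head_tail hne

end Conn

end UCyc

/-- `A(M)`: the set of all permutations of the multiset `M`, i.e. the words whose
multiset of letters is `M`. -/
def multisetPerms (M : Multiset ℕ) : Set (List ℕ) :=
  {w | (w : Multiset ℕ) = M}

/-- `IsUCycle m N C a` says the cyclic sequence `a₀ a₁ … a_{N-1}` is a universal
cycle for the set `C` of strings of length `m`: every cyclic window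
`a_i a_{i+1} ⋯ a_{i+m-1}` (indices mod `N`) lies in `C`, and every element of `C`
arises from exactly one of the `N` cyclic windows. -/
def IsUCycle (m N : ℕ) (C : Set (List ℕ)) (a : ℕ → ℕ) : Prop :=
  (∀ i < N, (List.ofFn fun j : Fin m => a ((i + j.val) % N)) ∈ C) ∧
    ∀ c ∈ C, ∃! i, i < N ∧ (List.ofFn fun j : Fin m => a ((i + j.val) % N)) = c

/-- For `n ≥ 2` and a multiset `M` of `n` natural numbers, there exists a
universal cycle for `A(M)⁻`, the set of prefixes (first `n-1` letters) of the
permutations of `M`. -/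
theorem exists_ucycle_multisetPerms_prefixes (n : ℕ) (hn : 2 ≤ n) (M : Multiset ℕ)
    (hM : Multiset.card M = n) :
    ∃ a : ℕ → ℕ,
      IsUCycle (n - 1) (Nat.card (List.dropLast '' multisetPerms M))
        (List.dropLast '' multisetPerms M) a := by
  classical
  have hCset : List.dropLast '' multisetPerms M = ↑(UCyc.edgesF M) := by
    ext w
    constructor
    · rintro ⟨p, hp, rfl⟩
      rw [Finset.mem_coe, UCyc.edgesF, List.mem_toFinset, List.mem_map]
      refine ⟨p, List.mem_permutations.mpr ?_, rfl⟩
      have hp' : (↑p : Multiset ℕ) = ↑M.toList := by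
        rw [Multiset.coe_toList]; exact hp
      exact Multiset.coe_eq_coe.mp hp'
    · intro hw
      rw [Finset.mem_coe, UCyc.edgesF, List.mem_toFinset, List.mem_map] at hw
      obtain ⟨p, hpm, rfl⟩ := hw
      refine ⟨p, ?_, rfl⟩
      show (↑p : Multiset ℕ) = M
      rw [Multiset.coe_eq_coe.mpr (List.mem_permutations.mp hpm), Multiset.coe_toList]
  have hconn : ∀ e ∈ UCyc.edgesF M, ∀ f ∈ UCyc.edgesF M,
      Relation.ReflTransGen
        (fun u v => ∃ g ∈ UCyc.edgesF M, List.dropLast g = u ∧ List.tail g = v)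
        (List.tail e) (List.dropLast f) := by
    intro e he f hf
    obtain ⟨hel, hele⟩ := (UCyc.mem_edgesF hM hn e).mp he
    obtain ⟨hfl, hfle⟩ := (UCyc.mem_edgesF hM hn f).mp hf
    exact UCyc.conn_vertices hM hn e.tail f.dropLast
      (by rw [List.length_tail, hel]; omega)
      (le_trans (Multiset.coe_le.mpr (List.tail_sublist e).subperm) hele)
      (by rw [List.length_dropLast, hfl]; omega)
      (le_trans (Multiset.coe_le.mpr (List.dropLast_sublist f).subperm) hfle)
  obtain ⟨es, ⟨hnd, hsub, hch⟩, hcov, hnee, hclosed⟩ :=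
    UCyc.euler_circuit List.dropLast List.tail (UCyc.edgesF M) (UCyc.edgesF_nonempty M)
      (UCyc.balance hM hn) hconn
  set L := es.length with hL
  have hLpos : 0 < L := List.length_pos_iff.mpr hnee
  have hNL : Nat.card (List.dropLast '' multisetPerms M) = L := by
    rw [hCset, Nat.card_coe_set_eq, Set.ncard_coe_finset, ← hcov,
      List.toFinset_card_of_nodup hnd]
  have hlenall : ∀ e ∈ es, e.length = n - 1 := fun e he =>
    ((UCyc.mem_edgesF hM hn e).mp (hsub e he)).1
  have hcyc : ∀ (i : ℕ) (h : i < L),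
      (es[(i+1) % L]'(Nat.mod_lt _ hLpos)).dropLast = (es[i]'h).tail := by
    intro i h
    by_cases hi : i + 1 < L
    · have hmod : (i+1) % L = i + 1 := Nat.mod_eq_of_lt hi
      have hstep := List.isChain_iff_getElem.mp hch i (by omega)
      have he1 : es[(i+1) % L]'(Nat.mod_lt _ hLpos) = es[i+1]'hi := by congr 1
      rw [he1]
      exact hstep.symm
    · have hmod : (i+1) % L = 0 := by rw [show i+1 = L by omega]; exact Nat.mod_self L
      have h0 : es[(i+1) % L]'(Nat.mod_lt _ hLpos) = es.head hnee := by
        rw [List.head_eq_getElem]; congr 1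
      have h1 : es[i]'h = es.getLast hnee := by
        rw [List.getLast_eq_getElem]; congr 1; omega
      rw [h0, h1]
      exact hclosed.symm
  have hnenil : ∀ (i : ℕ) (h : i < L), es[i]'h ≠ [] := by
    intro i h hcon
    have := hlenall _ (es.getElem_mem h)
    rw [hcon] at this
    simp at this
    omega
  have hwin : ∀ (j : ℕ), j < n - 1 → ∀ (i : ℕ) (h : i < L),
      (es[i]'h).getD j 0 = (es[(i + j) % L]'(Nat.mod_lt _ hLpos)).headI := by
    intro j
    induction j with
    | zero =>
      intro _ i h
      have he1 : es[(i + 0) % L]'(Nat.mod_lt _ hLpos) = es[i]'h := by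
        congr 1
        rw [Nat.add_zero, Nat.mod_eq_of_lt h]
      rw [he1]
      obtain ⟨x, xs, hxe⟩ := List.exists_cons_of_ne_nil (hnenil i h)
      rw [hxe]
      rfl
    | succ j ih =>
      intro hj i h
      obtain ⟨x, xs, hxe⟩ := List.exists_cons_of_ne_nil (hnenil i h)
      have step1 : (es[i]'h).getD (j+1) 0 = ((es[i]'h).tail).getD j 0 := by
        rw [hxe]; rfl
      rw [step1, ← hcyc i h]
      have hlen2 : (es[(i+1) % L]'(Nat.mod_lt _ hLpos)).length = n - 1 :=
        hlenall _ (es.getElem_mem _)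
      have hb1 : j < ((es[(i+1) % L]'(Nat.mod_lt _ hLpos)).dropLast).length := by
        rw [List.length_dropLast, hlen2]; omega
      have hb2 : j < (es[(i+1) % L]'(Nat.mod_lt _ hLpos)).length := by
        rw [hlen2]; omega
      have hdl : ((es[(i+1) % L]'(Nat.mod_lt _ hLpos)).dropLast).getD j 0 =
          (es[(i+1) % L]'(Nat.mod_lt _ hLpos)).getD j 0 := by
        rw [List.getD_eq_getElem _ _ hb1, List.getD_eq_getElem _ _ hb2,
          List.getElem_dropLast]
      rw [hdl, ih (by omega) ((i+1) % L) (Nat.mod_lt _ hLpos)]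
      congr 2
      rw [Nat.mod_add_mod]
      congr 1
      omega
  refine ⟨fun i => (es.getD (i % L) []).headI, ?_⟩
  rw [hNL]
  have hwineq : ∀ (i : ℕ) (h : i < L),
      (List.ofFn fun j : Fin (n-1) =>
        (es.getD ((i + j.val) % L % L) []).headI) = es[i]'h := by
    intro i h
    apply List.ext_getElem
    · rw [List.length_ofFn, hlenall _ (es.getElem_mem h)]
    · intro j h1 h2
      rw [List.getElem_ofFn]
      show (es.getD ((i + j) % L % L) []).headI = _
      rw [Nat.mod_mod_of_dvd _ (dvd_refl L),
        List.getD_eq_getElem _ _ (Nat.mod_lt _ hLpos)]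
      rw [← hwin j (by rw [List.length_ofFn] at h1; omega) i h,
        List.getD_eq_getElem _ _ h2]
  refine ⟨?_, ?_⟩
  · intro i hi
    rw [hwineq i hi, hCset, Finset.mem_coe, ← hcov, List.mem_toFinset]
    exact es.getElem_mem hi
  · intro c hc
    rw [hCset, Finset.mem_coe, ← hcov, List.mem_toFinset] at hc
    obtain ⟨⟨idx, hidx⟩, rfl⟩ := List.mem_iff_get.mp hc
    refine ⟨idx, ⟨hidx, ?_⟩, ?_⟩
    · rw [hwineq idx hidx]
      simp [List.get_eq_getElem]
    · rintro i' ⟨hi', hwi'⟩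
      have heq : es[i']'hi' = es.get ⟨idx, hidx⟩ := by
        rw [← hwineq i' hi']
        exact hwi'
      have heq2 : es.get ⟨i', hi'⟩ = es.get ⟨idx, hidx⟩ := by
        rw [List.get_eq_getElem]
        exact heq
      have := hnd.get_inj_iff.mp heq2
      exact congrArg Fin.val this
end

section
/- For every integer n ≥ 2, there exists a universal cycle for the set of prefixes (first n−1 letters) of the n! permutations of {0,1,…,n−1}: a cyclic sequence of length n! over {0,1,…,n−1} whose n! cyclic windows of length n−1 are exactly these prefixes, each occurring exactly once. -/
/-- The permutations of `{0, 1, …, n-1}` regarded as strings of length `n`. -/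
def permWords (n : ℕ) : Set (List ℕ) :=
  {w | w.Perm (List.range n)}

namespace EulerAux

variable {β α : Type*} [DecidableEq α] [DecidableEq β] (s t : β → α)

def IsTrail : α → α → List β → Prop
  | u, v, [] => u = v
  | u, v, e :: l => s e = u ∧ IsTrail (t e) v l

variable {s t}

@[simp] lemma isTrail_nil {u v : α} : IsTrail s t u v [] ↔ u = v := Iff.rfl

@[simp] lemma isTrail_cons {u v : α} {e : β} {l : List β} :
    IsTrail s t u v (e :: l) ↔ s e = u ∧ IsTrail s t (t e) v l := Iff.rfl

lemma IsTrail.append {u v w : α} {l1 l2 : List β} (h1 : IsTrail s t u v l1)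
    (h2 : IsTrail s t v w l2) : IsTrail s t u w (l1 ++ l2) := by
  induction l1 generalizing u with
  | nil => rw [isTrail_nil] at h1; subst h1; simpa using h2
  | cons e l ih => exact ⟨h1.1, ih h1.2⟩

lemma IsTrail.split {u w : α} {l1 l2 : List β} (h : IsTrail s t u w (l1 ++ l2)) :
    ∃ v, IsTrail s t u v l1 ∧ IsTrail s t v w l2 := by
  induction l1 generalizing u with
  | nil => exact ⟨u, rfl, h⟩
  | cons e l ih =>
      obtain ⟨v, h1, h2⟩ := ih h.2
      exact ⟨v, ⟨h.1, h1⟩, h2⟩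

lemma IsTrail.countP {u v : α} {l : List β} (h : IsTrail s t u v l) (w : α) :
    (l.countP fun e => decide (s e = w)) + (if w = v then 1 else 0)
      = (l.countP fun e => decide (t e = w)) + (if w = u then 1 else 0) := by
  induction l generalizing u with
  | nil => rw [isTrail_nil] at h; subst h; rfl
  | cons e l ih =>
      have H := ih h.2
      have he : s e = u := h.1
      subst he
      simp only [List.countP_cons, decide_eq_true_eq]
      have g1 : (if s e = w then 1 else 0) = (if w = s e then (1:ℕ) else 0) := by
        by_cases h1 : s e = w
        · rw [if_pos h1, if_pos h1.symm]
        · rw [if_neg h1, if_neg fun h => h1 h.symm]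
      have g2 : (if t e = w then 1 else 0) = (if w = t e then (1:ℕ) else 0) := by
        by_cases h2 : t e = w
        · rw [if_pos h2, if_pos h2.symm]
        · rw [if_neg h2, if_neg fun h => h2 h.symm]
      rw [g1, g2]
      omega

lemma countP_le_card {E : Finset β} {l : List β} (hn : l.Nodup) (hE : ∀ e ∈ l, e ∈ E)
    (p : β → Prop) [DecidablePred p] :
    (l.countP fun e => decide (p e)) ≤ (E.filter p).card := by
  rw [List.countP_eq_length_filter]
  have hnd : (l.filter fun e => decide (p e)).Nodup := hn.filter _
  rw [← List.toFinset_card_of_nodup hnd]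
  apply Finset.card_le_card
  intro x hx
  rw [List.mem_toFinset, List.mem_filter] at hx
  simp only [Finset.mem_filter]
  exact ⟨hE x hx.1, of_decide_eq_true hx.2⟩

lemma toFinset_filter_card {l : List β} (hn : l.Nodup) (p : β → Prop) [DecidablePred p] :
    (l.toFinset.filter p).card = l.countP fun e => decide (p e) := by
  rw [List.countP_eq_length_filter]
  have hnd : (l.filter fun e => decide (p e)).Nodup := hn.filter _
  rw [← List.toFinset_card_of_nodup hnd]
  congr 1
  ext x
  simp only [Finset.mem_filter, List.mem_toFinset, List.mem_filter, decide_eq_true_eq]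

/-- Extend a trail to a closed trail in a balanced graph. -/
lemma extend_to_closed (E : Finset β)
    (hbal : ∀ w : α, (E.filter fun e => s e = w).card = (E.filter fun e => t e = w).card) :
    ∀ (k : ℕ) (l : List β) (u v : α), (E \ l.toFinset).card ≤ k →
      IsTrail s t u v l → l.Nodup → (∀ e ∈ l, e ∈ E) →
      ∃ l', IsTrail s t u u (l ++ l') ∧ (l ++ l').Nodup ∧ ∀ e ∈ l ++ l', e ∈ E := by
  intro k
  induction k with
  | zero =>
      intro l u v hk h hnd hsub
      by_cases huv : u = v
      · subst huv; exact ⟨[], by simpa using h, by simpa using hnd, by simpa using hsub⟩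
      -- find an unused edge out of v : contradiction with card ≤ 0 will come later;
      · exfalso
        have hcount := h.countP v
        rw [if_pos rfl, if_neg fun h => huv h.symm] at hcount
        have h1 : (l.countP fun e => decide (s e = v)) + 1
            = l.countP fun e => decide (t e = v) := by omega
        have h2 : (l.countP fun e => decide (t e = v)) ≤ (E.filter fun e => t e = v).card :=
          countP_le_card hnd hsub _
        have h3 : (l.countP fun e => decide (s e = v)) < (E.filter fun e => s e = v).card := by
          rw [hbal v]; omega
        -- so there is an unused out-edge at v, contradicting E \ l.toFinset = ∅
        have hempty : E \ l.toFinset = ∅ := Finset.card_eq_zero.mp (Nat.le_zero.mp hk)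
        have hEsub : E ⊆ l.toFinset := by
          intro x hx
          by_contra hxl
          exact absurd (Finset.mem_sdiff.mpr ⟨hx, hxl⟩) (by simp [hempty])
        have : (E.filter fun e => s e = v).card ≤ (l.toFinset.filter fun e => s e = v).card :=
          Finset.card_le_card (Finset.filter_subset_filter _ hEsub)
        rw [toFinset_filter_card hnd] at this
        omega
  | succ k ih =>
      intro l u v hk h hnd hsub
      by_cases huv : u = v
      · subst huv; exact ⟨[], by simpa using h, by simpa using hnd, by simpa using hsub⟩
      · have hcount := h.countP v
        rw [if_pos rfl, if_neg fun h => huv h.symm] at hcount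
        have h2 : (l.countP fun e => decide (t e = v)) ≤ (E.filter fun e => t e = v).card :=
          countP_le_card hnd hsub _
        have h3 : (l.toFinset.filter fun e => s e = v).card < (E.filter fun e => s e = v).card := by
          rw [toFinset_filter_card hnd, hbal v]; omega
        have hex : ∃ e ∈ E, e ∉ l ∧ s e = v := by
          by_contra hno
          push_neg at hno
          refine absurd (Finset.card_le_card ?_) (not_le.mpr h3)
          intro x hx
          rw [Finset.mem_filter] at hx
          rw [Finset.mem_filter, List.mem_toFinset]
          by_cases hxl : x ∈ l
          · exact ⟨hxl, hx.2⟩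
          · exact absurd hx.2 (hno x hx.1 hxl)
        obtain ⟨e, heE, hel, hse⟩ := hex
        have htrail : IsTrail s t u (t e) (l ++ [e]) := h.append ⟨hse, rfl⟩
        have hnd' : (l ++ [e]).Nodup := by
          rw [List.nodup_append]
          exact ⟨hnd, List.nodup_singleton e, by intro a ha b hb hab; rw [List.mem_singleton.mp hb] at hab; exact hel (hab ▸ ha)⟩
        have hsub' : ∀ x ∈ l ++ [e], x ∈ E := by
          intro x hx
          rcases List.mem_append.mp hx with hx | hx
          · exact hsub x hx
          · rw [List.mem_singleton.mp hx]; exact heE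
        have hk' : (E \ (l ++ [e]).toFinset).card ≤ k := by
          have he' : e ∈ E \ l.toFinset := Finset.mem_sdiff.mpr ⟨heE, by simpa using hel⟩
          have : E \ (l ++ [e]).toFinset = (E \ l.toFinset).erase e := by
            ext x
            simp only [Finset.mem_erase, Finset.mem_sdiff, List.toFinset_append,
              List.toFinset_cons, List.toFinset_nil, Finset.mem_union, List.mem_toFinset,
              Finset.mem_insert, Finset.notMem_empty, or_false]
            tauto
          rw [this]
          have := Finset.card_erase_of_mem he'
          omega
        obtain ⟨l', hl1, hl2, hl3⟩ := ih (l ++ [e]) u (t e) hk' htrail hnd' hsub'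
        refine ⟨[e] ++ l', ?_, ?_, ?_⟩
        · rw [show l ++ ([e] ++ l') = (l ++ [e]) ++ l' from (List.append_assoc _ _ _).symm]
          exact hl1
        · rw [show l ++ ([e] ++ l') = (l ++ [e]) ++ l' from (List.append_assoc _ _ _).symm]
          exact hl2
        · intro x hx
          apply hl3
          rw [show (l ++ [e]) ++ l' = l ++ ([e] ++ l') from List.append_assoc _ _ _]
          exact hx

lemma IsTrail.exists_next {u v : α} {l : List β} (h : IsTrail s t u v l) (g : β) (hg : g ∈ l) :
    t g = v ∨ ∃ g' ∈ l, s g' = t g := by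
  induction l generalizing u with
  | nil => cases hg
  | cons e l ih =>
      rcases List.mem_cons.mp hg with rfl | hg
      · cases l with
        | nil => exact Or.inl h.2
        | cons f l' => exact Or.inr ⟨f, by simp, h.2.1⟩
      · rcases ih h.2 hg with h' | ⟨g', hg', hs⟩
        · exact Or.inl h'
        · exact Or.inr ⟨g', List.mem_cons_of_mem _ hg', hs⟩

lemma crossing {r : β → β → Prop} {S : Finset β} {x y : β} (h : Relation.ReflTransGen r x y)
    (hx : x ∈ S) (hy : y ∉ S) : ∃ a b, r a b ∧ a ∈ S ∧ b ∉ S := by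
  induction h with
  | refl => exact absurd hx hy
  | tail h1 h2 ih =>
      rename_i b c
      by_cases hb : b ∈ S
      · exact ⟨b, c, h2, hb, hy⟩
      · exact ih hb

lemma closed_countP {u : α} {l : List β} (h : IsTrail s t u u l) (w : α) :
    (l.countP fun e => decide (s e = w)) = l.countP fun e => decide (t e = w) := by
  have := h.countP w
  omega

/-- The main Hierholzer loop. -/
lemma close_up (E : Finset β)
    (hbal : ∀ w : α, (E.filter fun e => s e = w).card = (E.filter fun e => t e = w).card)
    (hconn : ∀ e ∈ E, ∀ f ∈ E,
      Relation.ReflTransGen (fun x y => y ∈ E ∧ t x = s y) e f) :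
    ∀ (k : ℕ) (l : List β) (u : α), (E \ l.toFinset).card ≤ k →
      l ≠ [] → IsTrail s t u u l → l.Nodup → (∀ e ∈ l, e ∈ E) →
      ∃ (m : List β) (u' : α), m ≠ [] ∧ IsTrail s t u' u' m ∧ m.Nodup ∧ m.toFinset = E := by
  intro k
  induction k with
  | zero =>
      intro l u hk hne h hnd hsub
      refine ⟨l, u, hne, h, hnd, ?_⟩
      have hempty : E \ l.toFinset = ∅ := Finset.card_eq_zero.mp (Nat.le_zero.mp hk)
      have hEsub : E ⊆ l.toFinset := by
        intro x hx
        by_contra hxl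
        have hmem : x ∈ E \ l.toFinset := Finset.mem_sdiff.mpr ⟨hx, hxl⟩
        rw [hempty] at hmem
        exact absurd hmem (Finset.notMem_empty x)
      exact Finset.Subset.antisymm (fun x hx => hsub x (List.mem_toFinset.mp hx)) hEsub
  | succ k ih =>
      intro l u hk hne h hnd hsub
      by_cases hfull : l.toFinset = E
      · exact ⟨l, u, hne, h, hnd, hfull⟩
      -- find a fresh edge adjacent to the trail
      have hLsub : l.toFinset ⊆ E := fun x hx => hsub x (List.mem_toFinset.mp hx)
      obtain ⟨f, hfE, hfl⟩ : ∃ f ∈ E, f ∉ l.toFinset := by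
        by_contra hno
        push_neg at hno
        exact hfull (Finset.Subset.antisymm hLsub hno)
      obtain ⟨g0, hg0⟩ : ∃ g0, g0 ∈ l := List.exists_mem_of_ne_nil l hne
      obtain ⟨g, hsen, hr, hgS, hhS⟩ :=
        crossing (hconn g0 (hsub _ hg0) f hfE) (List.mem_toFinset.mpr hg0) hfl
      -- rename: g ∈ l.toFinset, hsen ∉ l.toFinset, hr : hsen ∈ E ∧ t g = s hsen
      obtain ⟨hhE, hts⟩ := hr
      have hgl : g ∈ l := List.mem_toFinset.mp hgS
      set hedge := hsen with hh
      -- get a closed trail based at w := s hedge = t g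
      have hvert : t g = u ∨ ∃ g' ∈ l, s g' = t g := h.exists_next g hgl
      have hrot : ∃ l', IsTrail s t (t g) (t g) l' ∧ l'.Nodup ∧ l'.toFinset = l.toFinset ∧
          l' ≠ [] := by
        rcases hvert with hvu | ⟨g', hg'l, hsg'⟩
        · exact ⟨l, by rw [hvu]; exact h, hnd, rfl, hne⟩
        · obtain ⟨l1, l2, rfl⟩ := List.append_of_mem hg'l
          obtain ⟨v', h1, h2⟩ := h.split
          have hv' : s g' = v' := h2.1
          refine ⟨(g' :: l2) ++ l1, ?_, ?_, ?_, by simp⟩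
          · have hveq : t g = v' := hsg'.symm.trans hv'
            rw [hveq]
            exact h2.append h1
          · have : ((g' :: l2) ++ l1).Perm (l1 ++ g' :: l2) := List.perm_append_comm
            exact this.nodup_iff.mpr hnd
          · have hp : ((g' :: l2) ++ l1).Perm (l1 ++ g' :: l2) := List.perm_append_comm
            exact Finset.ext fun x => by simp only [List.mem_toFinset]; exact hp.mem_iff
      obtain ⟨l', hl'tr, hl'nd, hl'fin, hl'ne⟩ := hrot
      -- the complement is balanced
      have hbal' : ∀ w : α, ((E \ l.toFinset).filter fun e => s e = w).card
          = ((E \ l.toFinset).filter fun e => t e = w).card := by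
        intro w
        have key : ∀ p : β → Prop, ∀ inst : DecidablePred p,
            ((E \ l.toFinset).filter p).card = (E.filter p).card - (l.countP fun e => decide (p e)) := by
          intro p inst
          have h1 : (E \ l.toFinset).filter p = E.filter p \ (E.filter p ∩ l.toFinset) := by
            ext x
            simp only [Finset.mem_filter, Finset.mem_sdiff, Finset.mem_inter]
            tauto
          have h2 : E.filter p ∩ l.toFinset = l.toFinset.filter p := by
            ext x
            simp only [Finset.mem_filter, Finset.mem_inter, List.mem_toFinset]
            exact ⟨fun hx => ⟨hx.2, hx.1.2⟩, fun hx => ⟨⟨hLsub (List.mem_toFinset.mpr hx.1), hx.2⟩, hx.1⟩⟩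
          rw [h1, Finset.card_sdiff_of_subset Finset.inter_subset_left, h2, toFinset_filter_card hnd]
        rw [key _ _, key _ _, closed_countP h w, hbal w]
      -- extend the fresh edge to a closed trail in the complement
      have h1edge : IsTrail s t (t g) (t hedge) [hedge] := ⟨hts.symm, rfl⟩
      have hsub1 : ∀ e ∈ [hedge], e ∈ E \ l.toFinset := by
        intro e he
        rw [List.mem_singleton.mp he]
        exact Finset.mem_sdiff.mpr ⟨hhE, hhS⟩
      obtain ⟨m', hm'tr, hm'nd, hm'sub⟩ :=
        extend_to_closed (E \ l.toFinset) hbal' ((E \ l.toFinset).card) [hedge] (t g) (t hedge)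
          (Finset.card_le_card (Finset.sdiff_subset)) h1edge (List.nodup_singleton _) hsub1
      -- combine
      set M := ([hedge] ++ m') ++ l' with hM
      have hMtr : IsTrail s t (t g) (t g) M := hm'tr.append hl'tr
      have hMnd : M.Nodup := by
        rw [hM, List.nodup_append]
        refine ⟨hm'nd, hl'nd, ?_⟩
        intro x hx y hx' hxy; subst hxy
        have hxc : x ∈ E \ l.toFinset := hm'sub x hx
        have hx2 : x ∈ l.toFinset := hl'fin ▸ List.mem_toFinset.mpr hx'
        exact absurd hx2 (Finset.mem_sdiff.mp hxc).2
      have hMsub : ∀ e ∈ M, e ∈ E := by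
        intro e he
        rcases List.mem_append.mp he with he | he
        · exact (Finset.mem_sdiff.mp (hm'sub e he)).1
        · exact hLsub (hl'fin ▸ List.mem_toFinset.mpr he)
      have hMne : M ≠ [] := by simp [hM]
      have hMk : (E \ M.toFinset).card ≤ k := by
        have hsubM : l.toFinset ⊆ M.toFinset := by
          intro x hx
          rw [hM]
          simp only [List.toFinset_append, Finset.mem_union]
          exact Or.inr (hl'fin ▸ hx)
        have hhM : hedge ∈ M.toFinset := by
          rw [hM]
          simp only [List.toFinset_append, Finset.mem_union, List.toFinset_cons,
            List.mem_toFinset]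
          left; left; simp
        have hstep : E \ M.toFinset ⊆ (E \ l.toFinset).erase hedge := by
          intro x hx
          rw [Finset.mem_sdiff] at hx
          rw [Finset.mem_erase, Finset.mem_sdiff]
          refine ⟨fun hxe => hx.2 (hxe ▸ hhM), hx.1, fun hxl => hx.2 (hsubM hxl)⟩
        have h5 : hedge ∈ E \ l.toFinset := Finset.mem_sdiff.mpr ⟨hhE, hhS⟩
        have := Finset.card_le_card hstep
        have := Finset.card_erase_of_mem h5
        omega
      exact ih M (t g) hMk hMne hMtr hMnd hMsub

/-- Existence of an Eulerian circuit in a balanced connected digraph. -/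
theorem exists_euler (E : Finset β) (hE : E.Nonempty)
    (hbal : ∀ w : α, (E.filter fun e => s e = w).card = (E.filter fun e => t e = w).card)
    (hconn : ∀ e ∈ E, ∀ f ∈ E,
      Relation.ReflTransGen (fun x y => y ∈ E ∧ t x = s y) e f) :
    ∃ (m : List β) (u : α), m ≠ [] ∧ IsTrail s t u u m ∧ m.Nodup ∧ m.toFinset = E := by
  obtain ⟨e, heE⟩ := hE
  have h1 : IsTrail s t (s e) (t e) [e] := ⟨rfl, rfl⟩
  obtain ⟨l', hl'tr, hl'nd, hl'sub⟩ :=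
    extend_to_closed E hbal (E \ [e].toFinset).card [e] (s e) (t e) le_rfl h1
      (List.nodup_singleton _) (by intro x hx; rw [List.mem_singleton.mp hx]; exact heE)
  exact close_up E hbal hconn (E \ ([e] ++ l').toFinset).card ([e] ++ l') (s e) le_rfl
    (by simp) hl'tr hl'nd hl'sub

lemma IsTrail.getElem_succ {u v : α} {l : List β} (h : IsTrail s t u v l)
    (i : ℕ) (hi : i + 1 < l.length) :
    t (l[i]'(by omega)) = s (l[i+1]'hi) := by
  induction l generalizing i u with
  | nil => simp at hi
  | cons e l ih =>
      cases i with
      | zero =>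
          cases l with
          | nil => simp at hi
          | cons f l' => exact h.2.1.symm
      | succ j =>
          have := ih h.2 j (by simpa using hi)
          simpa using this

lemma IsTrail.s_head {u v : α} {l : List β} (h : IsTrail s t u v l) (hne : l ≠ []) :
    s (l[0]'(List.length_pos_iff.mpr hne)) = u := by
  cases l with
  | nil => exact absurd rfl hne
  | cons e l => exact h.1

lemma IsTrail.t_last {u v : α} {l : List β} (h : IsTrail s t u v l) (hne : l ≠ []) :
    t (l[l.length - 1]'(by have := List.length_pos_iff.mpr hne; omega)) = v := by
  induction l generalizing u with
  | nil => exact absurd rfl hne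
  | cons e l ih =>
      cases l with
      | nil => exact h.2
      | cons f l' =>
          have := ih h.2 (by simp)
          simpa using this

end EulerAux

section ListPermAux

open Equiv Equiv.Perm

lemma ofFn_val_perm {K : ℕ} (π : Equiv.Perm (Fin K)) :
    (List.ofFn fun k => ((π k : Fin K) : ℕ)).Perm (List.range K) := by
  have h1 : (List.ofFn fun k => ((π k : Fin K) : ℕ)) = (List.ofFn ⇑π).map Fin.val := by
    rw [List.map_ofFn]; rfl
  have h2 : (List.ofFn ⇑π).Perm (List.finRange K) := by
    apply List.perm_of_nodup_nodup_toFinset_eq (List.nodup_ofFn.mpr π.injective)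
      (List.nodup_finRange _)
    ext x
    simp only [List.mem_toFinset, List.mem_ofFn, List.mem_finRange, iff_true]
    exact ⟨π.symm x, π.apply_symm_apply x⟩
  rw [h1, show List.range K = (List.finRange K).map Fin.val from List.ext_getElem (by simp) (by simp)]
  exact h2.map _

lemma dropLast_inj_on_perm {K : ℕ} (hK : 0 < K) {u v : List ℕ} (hu : u.Perm (List.range K))
    (hv : v.Perm (List.range K)) (h : u.dropLast = v.dropLast) : u = v := by
  have hul : u.length = K := hu.length_eq.trans List.length_range
  have hvl : v.length = K := hv.length_eq.trans List.length_range
  have hune : u ≠ [] := by intro h0; rw [h0] at hul; simp at hul; omega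
  have hvne : v ≠ [] := by intro h0; rw [h0] at hvl; simp at hvl; omega
  have hmul : (u : Multiset ℕ) = (v : Multiset ℕ) := by
    rw [Multiset.coe_eq_coe]; exact hu.trans hv.symm
  have h1 := List.dropLast_append_getLast hune
  have h2 := List.dropLast_append_getLast hvne
  have hlast : u.getLast hune = v.getLast hvne := by
    rw [← h1, ← h2, h] at hmul
    rw [Multiset.coe_eq_coe] at hmul
    have := (List.perm_append_left_iff _).mp hmul
    simpa using this
  rw [← h1, ← h2, h, hlast]

lemma exists_perm_ofFn {K : ℕ} {w : List ℕ} (hw : w.Perm (List.range K)) :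
    ∃ π : Equiv.Perm (Fin K), (List.ofFn fun k => ((π k : Fin K) : ℕ)) = w := by
  have hlen : w.length = K := hw.length_eq.trans List.length_range
  have hnd : w.Nodup := hw.nodup_iff.mpr List.nodup_range
  have hlt : ∀ (j : ℕ) (hj : j < K), w[j]'(by omega) < K := by
    intro j hj
    have hmem : w[j]'(by omega) ∈ w := List.getElem_mem _
    have := hw.subset hmem
    simpa [List.mem_range] using this
  have hinj : Function.Injective (fun k : Fin K => (⟨w[k.val]'(by omega), hlt k.val k.isLt⟩ : Fin K)) := by
    intro a b hab
    have hval : w[a.val]'(by omega) = w[b.val]'(by omega) := congrArg Fin.val hab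
    have := (List.Nodup.getElem_inj_iff hnd).mp hval
    exact Fin.ext this
  refine ⟨Equiv.ofBijective _ (Finite.injective_iff_bijective.mp hinj), ?_⟩
  apply List.ext_getElem (by simp [hlen])
  intro j h1 h2
  simp only [List.getElem_ofFn, Equiv.ofBijective_apply]

end ListPermAux

open Equiv Equiv.Perm

/-- For every `n ≥ 2`, there is a universal cycle for the set of prefixes (first
`n-1` letters) of the `n!` permutations of `{0, 1, …, n-1}`: a cyclic sequence of
length `n!` over `{0, 1, …, n-1}` whose `n!` cyclic windows of length `n-1` are
exactly these prefixes, each occurring exactly once. -/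
theorem exists_ucycle_permWords_prefixes (n : ℕ) (hn : 2 ≤ n) :
    ∃ a : ℕ → ℕ, (∀ i < n.factorial, a i < n) ∧
      IsUCycle (n - 1) n.factorial (List.dropLast '' permWords n) a := by
  obtain ⟨m, rfl⟩ : ∃ m, n = m + 2 := ⟨n - 2, by omega⟩
  clear hn
  classical
  set c : Perm (Fin (m+2)) := finRotate (m+2) with hcdef
  set τ : Perm (Fin (m+2)) := Equiv.swap ⟨m, by omega⟩ ⟨m+1, by omega⟩ with hτdef
  set s : Perm (Fin (m+2)) → List ℕ :=
    fun π => List.ofFn fun k : Fin m => ((π ⟨k.val, by have := k.isLt; omega⟩ : Fin (m+2)) : ℕ)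
    with hsdef
  set t : Perm (Fin (m+2)) → List ℕ :=
    fun π => List.ofFn fun k : Fin m => ((π ⟨k.val + 1, by have := k.isLt; omega⟩ : Fin (m+2)) : ℕ)
    with htdef
  have hcm' : ∀ (k : ℕ) (hk : k < m + 1),
      c (⟨k, by omega⟩ : Fin (m+2)) = (⟨k+1, by omega⟩ : Fin (m+2)) := by
    intro k hk
    rw [hcdef, finRotate_succ_apply]
    apply Fin.ext
    rw [Fin.add_def]
    show ((k : ℕ) + (1 : Fin (m+2)).val) % (m+2) = k + 1
    rw [Fin.val_one]
    exact Nat.mod_eq_of_lt (by omega)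
  have hts : ∀ π : Perm (Fin (m+2)), t π = s (π * c) := by
    intro π
    rw [hsdef, htdef]
    simp only
    apply congrArg List.ofFn
    funext k
    have hk := k.isLt
    rw [Perm.mul_apply]
    have hstep : c (⟨k.val, by omega⟩ : Fin (m+2)) = (⟨k.val+1, by omega⟩ : Fin (m+2)) :=
      hcm' k.val (by omega)
    rw [hstep]
  have hts2 : ∀ π : Perm (Fin (m+2)), t π = s (π * (c * τ)) := by
    intro π
    rw [hsdef, htdef]
    simp only
    apply congrArg List.ofFn
    funext k
    have hk := k.isLt
    rw [Perm.mul_apply, Perm.mul_apply]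
    have hτk : τ (⟨k.val, by omega⟩ : Fin (m+2)) = (⟨k.val, by omega⟩ : Fin (m+2)) := by
      rw [hτdef]
      apply Equiv.swap_apply_of_ne_of_ne
      · exact Fin.ne_of_val_ne (show (k.val : ℕ) ≠ m by omega)
      · exact Fin.ne_of_val_ne (show (k.val : ℕ) ≠ m + 1 by omega)
    rw [hτk]
    have hstep : c (⟨k.val, by omega⟩ : Fin (m+2)) = (⟨k.val+1, by omega⟩ : Fin (m+2)) :=
      hcm' k.val (by omega)
    rw [hstep]
  -- balance
  have hbal : ∀ w : List ℕ,
      ((Finset.univ : Finset (Perm (Fin (m+2)))).filter fun e => s e = w).card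
        = ((Finset.univ : Finset (Perm (Fin (m+2)))).filter fun e => t e = w).card := by
    intro w
    apply Finset.card_bij' (fun π _ => π * c⁻¹) (fun π _ => π * c)
    · intro π hπ
      rw [Finset.mem_filter] at hπ ⊢
      refine ⟨Finset.mem_univ _, ?_⟩
      rw [hts (π * c⁻¹), inv_mul_cancel_right]
      exact hπ.2
    · intro π hπ
      rw [Finset.mem_filter] at hπ ⊢
      refine ⟨Finset.mem_univ _, ?_⟩
      rw [← hπ.2, hts π]
    · intro π hπ; rw [inv_mul_cancel_right]
    · intro π hπ; rw [mul_inv_cancel_right]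
  -- connectivity
  have hsubgrp : Subgroup.closure ({c, c * τ} : Set (Perm (Fin (m+2)))) = ⊤ := by
    have hcm : c (⟨m, by omega⟩ : Fin (m+2)) = (⟨m+1, by omega⟩ : Fin (m+2)) :=
      hcm' m (by omega)
    have h1 : Subgroup.closure
        ({c, Equiv.swap (⟨m, by omega⟩ : Fin (m+2)) (c ⟨m, by omega⟩)} : Set (Perm (Fin (m+2)))) = ⊤ := by
      rw [hcdef]
      exact closure_cycle_adjacent_swap isCycle_finRotate support_finRotate _
    rw [hcm] at h1
    rw [eq_top_iff, ← h1, Subgroup.closure_le]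
    intro x hx
    rcases hx with rfl | hx
    · exact SetLike.mem_coe.mpr (Subgroup.subset_closure (Set.mem_insert _ _))
    · rw [Set.mem_singleton_iff] at hx
      subst hx
      rw [SetLike.mem_coe]
      have h3 : c⁻¹ * (c * τ) ∈ Subgroup.closure ({c, c * τ} : Set (Perm (Fin (m+2)))) :=
        Subgroup.mul_mem _ (Subgroup.inv_mem _ (Subgroup.subset_closure (Set.mem_insert _ _)))
          (Subgroup.subset_closure (Set.mem_insert_of_mem _ rfl))
      rwa [inv_mul_cancel_left] at h3
  have hmonoid : ∀ x : Perm (Fin (m+2)), x ∈ Submonoid.closure ({c, c * τ} : Set (Perm (Fin (m+2)))) := by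
    intro x
    have hx : x ∈ Subgroup.closure ({c, c * τ} : Set (Perm (Fin (m+2)))) :=
      hsubgrp ▸ Subgroup.mem_top x
    induction hx using Subgroup.closure_induction with
    | mem y hy => exact Submonoid.subset_closure hy
    | one => exact Submonoid.one_mem _
    | mul y z _ _ hy hz => exact Submonoid.mul_mem _ hy hz
    | inv y _ hy =>
        have hy1 : y * y ^ (orderOf y - 1) = 1 := by
          rw [← pow_succ']
          have hpos := orderOf_pos y
          have h2 : orderOf y - 1 + 1 = orderOf y := by omega
          rw [h2]
          exact pow_orderOf_eq_one y
        rw [inv_eq_of_mul_eq_one_right hy1]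
        exact Submonoid.pow_mem _ hy _
  have hstep : ∀ (π g : Perm (Fin (m+2))), g = c ∨ g = c * τ →
      Relation.ReflTransGen
        (fun x y => y ∈ (Finset.univ : Finset (Perm (Fin (m+2)))) ∧ t x = s y) π (π * g) := by
    intro π g hg
    apply Relation.ReflTransGen.single
    rcases hg with rfl | rfl
    · exact ⟨Finset.mem_univ _, hts π⟩
    · exact ⟨Finset.mem_univ _, hts2 π⟩
  have hprod : ∀ x ∈ Submonoid.closure ({c, c * τ} : Set (Perm (Fin (m+2)))),
      ∀ π, Relation.ReflTransGen
        (fun x y => y ∈ (Finset.univ : Finset (Perm (Fin (m+2)))) ∧ t x = s y) π (π * x) := by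
    intro x hx
    induction hx using Submonoid.closure_induction with
    | mem y hy =>
        intro π
        apply hstep
        rcases hy with rfl | hy
        · exact Or.inl rfl
        · exact Or.inr (Set.mem_singleton_iff.mp hy)
    | one => intro π; rw [mul_one]
    | mul y z _ _ hy hz =>
        intro π
        have h1 := hy π
        have h2 := hz (π * y)
        rw [mul_assoc] at h2
        exact h1.trans h2
  have hconn : ∀ e ∈ (Finset.univ : Finset (Perm (Fin (m+2)))),
      ∀ f ∈ (Finset.univ : Finset (Perm (Fin (m+2)))),
      Relation.ReflTransGen
        (fun x y => y ∈ (Finset.univ : Finset (Perm (Fin (m+2)))) ∧ t x = s y) e f := by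
    intro e _ f _
    have := hprod (e⁻¹ * f) (hmonoid _) e
    rwa [mul_inv_cancel_left] at this
  -- the Eulerian circuit
  obtain ⟨L, u, hne, htr, hnd, hfin⟩ :=
    EulerAux.exists_euler (s := s) (t := t) Finset.univ ⟨1, Finset.mem_univ 1⟩ hbal hconn
  have hlen : L.length = (m+2).factorial := by
    have h1 := List.toFinset_card_of_nodup hnd
    rw [hfin, Finset.card_univ, Fintype.card_perm, Fintype.card_fin] at h1
    omega
  have hlpos : 0 < L.length := List.length_pos_iff.mpr hne
  have h2len : 2 ≤ L.length := by
    rw [hlen]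
    calc 2 ≤ m + 2 := by omega
    _ ≤ (m+2).factorial := Nat.self_le_factorial _
  have hgetD : ∀ (i : ℕ) (h : i < L.length), L.getD i 1 = L[i]'h :=
    fun i h => List.getD_eq_getElem L 1 h
  -- getD versions of the trail structure
  have hsucc' : ∀ q, q + 1 < L.length → t (L.getD q 1) = s (L.getD (q+1) 1) := by
    intro q hq
    rw [hgetD q (by omega), hgetD (q+1) hq]
    exact htr.getElem_succ q hq
  have hhead' : s (L.getD 0 1) = u := by
    rw [hgetD 0 hlpos]
    exact htr.s_head hne
  have hlast' : t (L.getD (L.length - 1) 1) = u := by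
    rw [hgetD (L.length - 1) (by omega)]
    exact htr.t_last hne
  -- the cyclic sequence of permutations
  set G : ℕ → Perm (Fin (m+2)) := fun i => L.getD (i % L.length) 1 with hGdef
  have hG : ∀ p, t (G p) = s (G (p + 1)) := by
    intro p
    have hqlt : p % L.length < L.length := Nat.mod_lt _ hlpos
    have hmod : (p + 1) % L.length = (p % L.length + 1) % L.length := by
      rw [Nat.add_mod p 1, Nat.mod_eq_of_lt (by omega : 1 < L.length)]
    rw [hGdef]
    simp only
    rw [hmod]
    by_cases hcase : p % L.length + 1 < L.length
    · rw [Nat.mod_eq_of_lt hcase]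
      exact hsucc' _ hcase
    · have hq1 : p % L.length + 1 = L.length := by omega
      rw [hq1, Nat.mod_self]
      rw [show p % L.length = L.length - 1 from by omega]
      rw [hhead', hlast']
  have hpoint : ∀ (π π' : Perm (Fin (m+2))), t π = s π' → ∀ (k : ℕ) (hk : k < m),
      π' (⟨k, by omega⟩ : Fin (m+2)) = π (⟨k+1, by omega⟩ : Fin (m+2)) := by
    intro π π' h k hk
    rw [hsdef, htdef] at h
    simp only at h
    have h1 := List.ofFn_inj.mp h
    have h2 := congrFun h1 ⟨k, hk⟩
    exact Fin.val_injective h2.symm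
  have hGpt : ∀ p (k : ℕ) (hk : k < m),
      G (p+1) (⟨k, by omega⟩ : Fin (m+2)) = G p (⟨k+1, by omega⟩ : Fin (m+2)) :=
    fun p => hpoint _ _ (hG p)
  -- the universal cycle
  set a : ℕ → ℕ := fun i => ((G i (⟨0, by omega⟩ : Fin (m+2))) : ℕ) with hadef
  have haper : ∀ x, a (x % L.length) = a x := by
    intro x
    rw [hadef]
    simp only
    rw [hGdef]
    simp only
    rw [Nat.mod_mod_of_dvd x dvd_rfl]
  have hkey : ∀ (j : ℕ) (hj : j ≤ m) (i : ℕ), a (i + j) = ((G i (⟨j, by omega⟩ : Fin (m+2))) : ℕ) := by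
    intro j
    induction j with
    | zero => intro _ i; rfl
    | succ j ih =>
        intro hj i
        rw [show i + (j+1) = (i+1) + j from by omega]
        rw [ih (by omega) (i+1)]
        have := hGpt i j (by omega)
        rw [this]
  have hwin : ∀ i : ℕ,
      (List.ofFn fun j : Fin (m+1) => a ((i + j.val) % (m+2).factorial))
        = (List.ofFn fun k : Fin (m+2) => ((G i k) : ℕ)).dropLast := by
    intro i
    apply List.ext_getElem (by simp)
    intro j h1 h2
    have hjm : j < m + 1 := by rw [List.length_ofFn] at h1; exact h1
    rw [List.getElem_ofFn, List.getElem_dropLast, List.getElem_ofFn]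
    show a ((i + j) % (m+2).factorial) = ((G i) (⟨j, by omega⟩ : Fin (m+2)) : ℕ)
    rw [← hlen, haper]
    exact hkey j (by omega) i
  have hGmem : ∀ i : ℕ, (List.ofFn fun k : Fin (m+2) => ((G i k) : ℕ)) ∈ permWords (m+2) :=
    fun i => ofFn_val_perm (G i)
  have hGeq : ∀ (i : ℕ) (h : i < L.length), G i = L[i]'h := by
    intro i h
    rw [hGdef]
    simp only
    rw [Nat.mod_eq_of_lt h, hgetD i h]
  refine ⟨a, fun i _ => (G i ⟨0, by omega⟩).isLt, ?_, ?_⟩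
  · intro i _
    have h1 : (List.ofFn fun j : Fin (m+1) => a ((i + j.val) % (m+2).factorial))
        ∈ List.dropLast '' permWords (m+2) := by
      rw [hwin i]
      exact Set.mem_image_of_mem _ (hGmem i)
    exact h1
  · intro cw hcw
    obtain ⟨w, hwperm, rfl⟩ := hcw
    obtain ⟨π, hπ⟩ := exists_perm_ofFn (K := m+2) hwperm
    have hπL : π ∈ L := List.mem_toFinset.mp (by rw [hfin]; exact Finset.mem_univ π)
    have hilt : L.idxOf π < L.length := List.idxOf_lt_length_iff.mpr hπL
    have hGidx : G (L.idxOf π) = π := by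
      rw [hGeq _ hilt]
      exact List.getElem_idxOf hilt
    have hWi : (List.ofFn fun k : Fin (m+2) => ((G (L.idxOf π) k) : ℕ)) = w := by
      rw [hGidx]; exact hπ
    refine ⟨L.idxOf π, ⟨by omega, ?_⟩, ?_⟩
    · have h1 : (List.ofFn fun j : Fin (m+1) => a ((L.idxOf π + j.val) % (m+2).factorial))
          = w.dropLast := by
        rw [hwin, hWi]
      exact h1
    · rintro i' ⟨hi'N, hwi'⟩
      have hi'len : i' < L.length := by omega
      have hw' : (List.ofFn fun k : Fin (m+2) => ((G i' k) : ℕ)).dropLast = w.dropLast := by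
        rw [← hwin i']
        exact hwi'
      have hWeq : (List.ofFn fun k : Fin (m+2) => ((G i' k) : ℕ)) = w :=
        dropLast_inj_on_perm (by omega) (hGmem i') hwperm hw'
      have hfun : G i' = π := by
        apply Equiv.ext
        intro x
        have h1 := congrFun (List.ofFn_inj.mp (hWeq.trans hπ.symm)) x
        exact Fin.val_injective h1
      have hx1 : L.get ⟨i', hi'len⟩ = L.get ⟨L.idxOf π, hilt⟩ := by
        rw [List.get_eq_getElem, List.get_eq_getElem, ← hGeq i' hi'len, ← hGeq _ hilt, hfun, hGidx]
      have hx2 := List.nodup_iff_injective_get.mp hnd hx1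
      exact congrArg Fin.val hx2
end

section
/- Let k be a positive integer and let h, b be the unique natural numbers with 0 ≤ b ≤ h and k = h(h+1)/2 + b, and let n be an integer with n ≥ h + 2. Define the word w of length n as the concatenation w = 0^{n−h−2} · (0,1,…,b−1) · (b,b) · (b+1,…,h) (that is, n−h−2 zeros, then the increasing run from 0 to b−1, then two copies of b, then the increasing run from b+1 to h). Then w ∈ W_k(n), and the word w₁…w_{n−2} consisting of the first n−2 letters of w is the lexicographically smallest element of the set {u₁…u_{n−2} : u ∈ W_k(n)}. -/
set_option maxHeartbeats 1000000

private lemma gaussWO (t : ℕ) : 2 * (∑ x ∈ Finset.range t, x) + t = t * t := by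
  induction t with
  | zero => simp
  | succ s ih => rw [Finset.sum_range_succ]; nlinarith [ih]

private lemma sumRWO : ∀ (n s : ℕ), (List.range' s n).sum * 2 + n = n * (2 * s + n) := by
  intro n
  induction n with
  | zero => simp
  | succ m ih =>
    intro s
    rw [List.range'_succ, List.sum_cons]
    nlinarith [ih (s + 1)]

private lemma toFinset_sum_leWO (l : List ℕ) : ∑ x ∈ l.toFinset, x ≤ l.sum := by
  induction l with
  | nil => simp
  | cons a t ih =>
    by_cases ha : a ∈ t.toFinset
    · rw [List.toFinset_cons, Finset.insert_eq_self.2 ha, List.sum_cons]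
      omega
    · rw [List.toFinset_cons, Finset.sum_insert ha, List.sum_cons]
      omega

private lemma count_boundWO : ∀ (s : List ℕ) (T : Finset ℕ) (M : ℕ),
    (∀ x ∈ s, x ≤ M) → T ⊆ s.toFinset →
    T.card ≤ s.length ∧ s.sum ≤ (∑ x ∈ T, x) + (s.length - T.card) * M := by
  intro s
  induction s with
  | nil =>
    intro T M _ hT
    simp only [List.toFinset_nil, Finset.subset_empty] at hT
    subst hT; simp
  | cons a t ih =>
    intro T M hM hT
    by_cases ha : a ∈ T
    · have hsub : T.erase a ⊆ t.toFinset := by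
        intro x hx
        have hxa : x ≠ a := Finset.ne_of_mem_erase hx
        have := hT (Finset.mem_of_mem_erase hx)
        simp only [List.toFinset_cons, Finset.mem_insert] at this
        tauto
      obtain ⟨hc, hs⟩ := ih (T.erase a) M (fun x hx => hM x (List.mem_cons_of_mem a hx)) hsub
      have hc1 : 1 ≤ T.card := Finset.card_pos.2 ⟨a, ha⟩
      have hce : (T.erase a).card = T.card - 1 := Finset.card_erase_of_mem ha
      constructor
      · simp only [List.length_cons]; omega
      · have e1 : ∑ x ∈ T, x = a + ∑ x ∈ T.erase a, x := (Finset.add_sum_erase _ _ ha).symm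
        have e2 : t.length - (T.erase a).card = (a :: t).length - T.card := by
          simp only [List.length_cons]; omega
        rw [List.sum_cons, e1, ← e2]
        omega
    · have hsub : T ⊆ t.toFinset := by
        intro x hx
        have := hT hx
        simp only [List.toFinset_cons, Finset.mem_insert] at this
        rcases this with h | h
        · exact absurd (h ▸ hx) ha
        · exact h
      obtain ⟨hc, hs⟩ := ih T M (fun x hx => hM x (List.mem_cons_of_mem a hx)) hsub
      refine ⟨by simp only [List.length_cons]; omega, ?_⟩
      have e : ((a :: t).length - T.card) * M = (t.length - T.card) * M + M := by
        have : (a :: t).length - T.card = (t.length - T.card) + 1 := by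
          simp only [List.length_cons]; omega
        rw [this, add_mul, one_mul]
      rw [List.sum_cons, e]
      have haM : a ≤ M := hM a List.mem_cons_self
      omega

private lemma lex_extractWO : ∀ {p q : List ℕ}, List.Lex (· < ·) p q → p.length = q.length →
    ∃ (pre s₁ s₂ : List ℕ) (c d : ℕ), c < d ∧ p = pre ++ c :: s₁ ∧ q = pre ++ d :: s₂ := by
  intro p q hlex
  induction hlex with
  | nil => intro hl; simp at hl
  | @cons a l₁ l₂ h ih =>
    intro hl
    obtain ⟨pre, s₁, s₂, c, d, h1, h2, h3⟩ := ih (by simpa using hl)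
    exact ⟨a :: pre, s₁, s₂, c, d, h1, by simp [h2], by simp [h3]⟩
  | @rel a l₁ b l₂ hab => intro _; exact ⟨[], l₁, l₂, a, b, hab, rfl, rfl⟩

private lemma arithA1WO (h b c i h' k XS SS IS RA RB : ℕ)
    (K2 : 2*k = h*(h+1) + 2*b) (hXS : 2*XS + i = i*i) (hk : k = XS + (c + SS))
    (hSS : SS ≤ IS + (h - h')*h') (hIS : IS + RA = RB) (hRA : 2*RA + i = i*i)
    (hRB : 2*RB + (h'+1) = (h'+1)*(h'+1))
    (hh : h' ≤ h) (hcb : c < b) : False := by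
  have hd : h - h' + h' = h := by omega
  nlinarith [hd, Nat.sub_le h h', sq_nonneg (h - h')]

private lemma arithA2WO (h b c i h' k XS SS : ℕ)
    (K2 : 2*k = h*(h+1) + 2*b) (hXS : 2*XS + i = i*i) (hk : k = XS + (c + SS))
    (hSS : SS ≤ (h + 1 - i)*h')
    (hih : h' < i) (hihh : i + 1 ≤ h) (hcb : c < b) : False := by
  have hd : h + 1 - i + i = h + 1 := by omega
  nlinarith [hd, Nat.sub_le (h+1) i,
    mul_le_mul_left (Nat.le_of_lt_succ (Nat.lt_succ_of_lt hih)) (h+1-i)]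

private lemma arithB1WO (b c m h' r k XS SS IS RA RB : ℕ) (h : ℕ)
    (hh : h = r + h' + 1)
    (K2 : 2*k = h*(h+1) + 2*b) (hXS : 2*XS + m = m*m + 2*b) (hk : k = XS + (c + SS))
    (hSS : SS ≤ IS + r*h') (hIS : IS + RA = RB) (hRA : 2*RA + m = m*m)
    (hRB : 2*RB + (h'+1) = (h'+1)*(h'+1))
    (hihh : m + 2 ≤ h) (hc : c < m) : False := by
  subst hh; nlinarith

private lemma arithB2WO (b c m h' w k XS SS : ℕ) (h : ℕ)
    (hh : h = w + m)
    (K2 : 2*k = h*(h+1) + 2*b) (hXS : 2*XS + m = m*m + 2*b) (hk : k = XS + (c + SS))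
    (hSS : SS ≤ w*h')
    (hih : h' + 1 ≤ m) (hihh : m + 2 ≤ h) (hc : c < m) : False := by
  subst hh
  nlinarith [mul_le_mul_right (show h' + 1 ≤ m from hih) w]

private lemma hpleWO (h b h' k RB : ℕ) (K2 : 2*k = h*(h+1)+2*b) (hbh : b ≤ h)
    (hRB : 2*RB + (h'+1) = (h'+1)*(h'+1)) (hle : RB ≤ k) : h' ≤ h := by
  by_contra hcon
  push_neg at hcon
  nlinarith

private lemma finalAWO (h b c i h' k XS SS : ℕ)
    (K2 : 2*k = h*(h+1) + 2*b)
    (hXS : 2*XS + i = i*i) (hk : k = XS + (c + SS))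
    (hSS : SS ≤ (∑ x ∈ Finset.Ico i (h'+1), x) + (h + 1 - i - (h'+1-i))*h')
    (hh'h : h' ≤ h) (hcb : c < b) (hih : i + 1 ≤ h) : False := by
  rcases le_or_gt i h' with hcase | hcase
  · have hIS : (∑ x ∈ Finset.range i, x) + (∑ x ∈ Finset.Ico i (h'+1), x)
        = ∑ x ∈ Finset.range (h'+1), x := by
      simp only [Finset.range_eq_Ico]
      exact Finset.sum_Ico_consecutive _ (Nat.zero_le i) (by omega)
    have e : h + 1 - i - (h'+1-i) = h - h' := by omega
    rw [e] at hSS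
    exact arithA1WO h b c i h' k XS SS _ _ _ K2 hXS hk hSS
      (by rw [add_comm] at hIS; exact hIS) (gaussWO i) (gaussWO (h'+1)) hh'h hcb
  · have hempty : Finset.Ico i (h'+1) = ∅ := Finset.Ico_eq_empty (by omega)
    rw [hempty, Finset.sum_empty, zero_add] at hSS
    have e : h + 1 - i - (h'+1-i) = h + 1 - i := by omega
    rw [e] at hSS
    exact arithA2WO h b c i h' k XS SS K2 hXS hk hSS hcase hih hcb

private lemma finalBWO (h b c m h' k XS SS : ℕ)
    (K2 : 2*k = h*(h+1) + 2*b)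
    (hXS : 2*XS + m = m*m + 2*b) (hk : k = XS + (c + SS))
    (hSS : SS ≤ (∑ x ∈ Finset.Ico m (h'+1), x) + (h - m - (h'+1-m))*h')
    (hcard : h' + 1 - m ≤ h - m)
    (hh'h : h' ≤ h) (hc : c < m) (hmh : m + 2 ≤ h) : False := by
  rcases le_or_gt m h' with hcase | hcase
  · have hIS : (∑ x ∈ Finset.range m, x) + (∑ x ∈ Finset.Ico m (h'+1), x)
        = ∑ x ∈ Finset.range (h'+1), x := by
      simp only [Finset.range_eq_Ico]
      exact Finset.sum_Ico_consecutive _ (Nat.zero_le m) (by omega)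
    have e : h - m - (h'+1-m) = h - 1 - h' := by omega
    rw [e] at hSS
    exact arithB1WO b c m h' (h - 1 - h') k XS SS _ _ _ h (by omega) K2 hXS hk hSS
      (by rw [add_comm] at hIS; exact hIS) (gaussWO m) (gaussWO (h'+1)) hmh hc
  · have hempty : Finset.Ico m (h'+1) = ∅ := Finset.Ico_eq_empty (by omega)
    rw [hempty, Finset.sum_empty, zero_add] at hSS
    have e : h - m - (h'+1-m) = h - m := by omega
    rw [e] at hSS
    exact arithB2WO b c m h' (h - m) k XS SS h (by omega) K2 hXS hk hSS hcase hmh hc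

/-- A word `w` over ℕ is a *weak order word* of length `n` if it has length `n`
and its set of letters is `{0, 1, …, h}` for some `h`. `weakOrders n` is the set
`W(n)` of all such words. -/
def weakOrders (n : ℕ) : Set (List ℕ) :=
  {w | w.length = n ∧ ∃ h : ℕ, w.toFinset = Finset.range (h + 1)}

/-- `W_k(n)`: the weak order words of length `n` with weight (sum of letters) `k`. -/
def weightWeakOrders (n k : ℕ) : Set (List ℕ) :=
  {w ∈ weakOrders n | w.sum = k}

/-- Let `k > 0`, let `b ≤ h` satisfy `k = h(h+1)/2 + b`, and let `n ≥ h + 2`.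
Then the word `w = 0^{n-h-2} · (0,…,b-1) · (b,b) · (b+1,…,h)` lies in `W_k(n)`,
and its first `n - 2` letters form the lexicographically smallest element of
`{u₁…u_{n-2} : u ∈ W_k(n)}`. -/
theorem minimum_vertex_weightWeakOrders (k h b n : ℕ) (hk : 0 < k) (hb : b ≤ h)
    (hkhb : k = h * (h + 1) / 2 + b) (hn : h + 2 ≤ n) :
    (List.replicate (n - h - 2) 0 ++ List.range b ++ [b, b] ++
        List.range' (b + 1) (h - b)) ∈ weightWeakOrders n k ∧
      ∀ u ∈ weightWeakOrders n k,
        (List.replicate (n - h - 2) 0 ++ List.range b ++ [b, b] ++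
              List.range' (b + 1) (h - b)).take (n - 2) = u.take (n - 2) ∨
          List.Lex (· < ·)
            ((List.replicate (n - h - 2) 0 ++ List.range b ++ [b, b] ++
                List.range' (b + 1) (h - b)).take (n - 2)) (u.take (n - 2)) := by
  have hev : (2:ℕ) ∣ h * (h + 1) := (Nat.even_mul_succ_self h).two_dvd
  have K2 : 2 * k = h * (h + 1) + 2 * b := by
    rw [hkhb, Nat.mul_add, Nat.mul_div_cancel' hev]
  clear hkhb hk
  obtain ⟨N0, rfl⟩ : ∃ m, n = m + h + 2 := ⟨n - h - 2, by omega⟩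
  obtain ⟨dd, rfl⟩ : ∃ e, h = b + e := ⟨h - b, by omega⟩
  clear hb hn
  simp only [show N0 + (b + dd) + 2 - (b + dd) - 2 = N0 from by omega,
    show b + dd - b = dd from by omega,
    show N0 + (b + dd) + 2 - 2 = N0 + (b + dd) from by omega]
  set w : List ℕ := List.replicate N0 0 ++ List.range b ++ [b, b] ++ List.range' (b + 1) dd
    with hwdef
  have hwlen : w.length = N0 + (b + dd) + 2 := by simp [hwdef]; omega
  have hwsum : w.sum = k := by
    have s1 := sumRWO b 0
    have s2 := sumRWO dd (b + 1)
    have hs : w.sum = (List.range' 0 b).sum + (b + (b + (List.range' (b + 1) dd).sum)) := by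
      simp [hwdef, List.range_eq_range']
    rw [hs]
    nlinarith [s1, s2]
  have hwfin : w.toFinset = Finset.range (b + dd + 1) := by
    ext x
    simp only [hwdef, List.toFinset_append, Finset.mem_union, List.mem_toFinset,
      List.mem_replicate, List.mem_range, List.mem_range'_1, List.mem_cons,
      List.not_mem_nil, or_false, Finset.mem_range]
    omega
  constructor
  · simp only [weightWeakOrders, weakOrders, Set.mem_setOf_eq]
    exact ⟨⟨hwlen, b + dd, hwfin⟩, hwsum⟩
  intro u hu
  simp only [weightWeakOrders, weakOrders, Set.mem_setOf_eq] at hu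
  obtain ⟨⟨hulen, h', hufin⟩, husum⟩ := hu
  set n2 := N0 + (b + dd) with hn2
  rcases trichotomous_of (List.Lex (· < ·) : List ℕ → List ℕ → Prop)
      (w.take n2) (u.take n2) with hlt | heq | hgt
  · exact Or.inr hlt
  · exact Or.inl heq
  exfalso
  have hwtl : (w.take n2).length = n2 := by rw [List.length_take, hwlen]; omega
  have hutl : (u.take n2).length = n2 := by rw [List.length_take, hulen]; omega
  obtain ⟨pre, s₁, s₂, c, d, hcd, hu1, hw1⟩ := lex_extractWO hgt (hutl.trans hwtl.symm)
  set s : List ℕ := s₁ ++ u.drop n2 with hsdef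
  have hueq : u = pre ++ c :: s := by
    conv_lhs => rw [← List.take_append_drop n2 u]
    rw [hu1, hsdef]; simp
  have hweq : w = pre ++ d :: (s₂ ++ w.drop n2) := by
    conv_lhs => rw [← List.take_append_drop n2 w]
    rw [hw1]; simp
  have hjs : pre.length + 1 + s₂.length = n2 := by
    have h1 := congrArg List.length hw1
    rw [hwtl] at h1
    simp at h1
    omega
  have hslen : pre.length + 1 + s.length = N0 + (b + dd) + 2 := by
    have h1 := congrArg List.length hueq
    rw [hulen] at h1
    simp at h1
    omega
  have hj1 : pre.length + 1 ≤ n2 := by omega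
  have hRBle : (∑ x ∈ Finset.range (h' + 1), x) ≤ k := by
    rw [← hufin, ← husum]; exact toFinset_sum_leWO u
  have hh' : h' ≤ b + dd :=
    hpleWO (b + dd) b h' k _ K2 (by omega) (gaussWO (h' + 1)) hRBle
  rcases Nat.lt_or_ge pre.length N0 with hc0 | hc0
  · -- first difference inside the zero block : impossible since d would be 0
    obtain ⟨q, hq⟩ : ∃ q, N0 = pre.length + (q + 1) := ⟨N0 - pre.length - 1, by omega⟩
    have hw2 : w = List.replicate pre.length 0 ++ 0 :: (List.replicate q 0 ++
        (List.range b ++ [b, b] ++ List.range' (b + 1) dd)) := by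
      rw [hwdef, hq, List.replicate_add, List.replicate_succ]
      simp [List.append_assoc]
    obtain ⟨hpre, hdr⟩ := List.append_inj (hw2.symm.trans hweq) (by simp)
    have : (0 : ℕ) = d := (List.cons_eq_cons.mp hdr).1
    omega
  obtain ⟨i, hi⟩ : ∃ i, pre.length = N0 + i := ⟨pre.length - N0, by omega⟩
  have hi1 : i + 1 ≤ b + dd := by omega
  rcases Nat.lt_or_ge i (b + 2) with hcase | hcase
  · -- case A : i ≤ b + 1
    have hstruct : ∃ (X rest : List ℕ) (dv : ℕ), w = X ++ dv :: rest ∧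
        X.length = N0 + i ∧ 2 * X.sum + i = i * i ∧
        (∀ x ∈ X, x = 0 ∨ x < i) ∧ dv ≤ b ∧ dv ≤ i := by
      rcases Nat.lt_or_ge i b with hib | hib
      · -- i < b
        obtain ⟨p, hp⟩ : ∃ p, b = i + (p + 1) := ⟨b - i - 1, by omega⟩
        have key : List.range b = List.range' 0 i ++ i :: List.range' (i + 1) p := by
          rw [List.range_eq_range', hp,
            ← List.range'_append_1]
          congr 1
          rw [Nat.zero_add, List.range'_succ]
        refine ⟨List.replicate N0 0 ++ List.range' 0 i,
          List.range' (i + 1) p ++ ([b, b] ++ List.range' (b + 1) dd), i,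
          ?_, ?_, ?_, ?_, by omega, le_refl i⟩
        · rw [hwdef, key]; simp [List.append_assoc]
        · simp
        · rw [List.sum_append, List.sum_replicate, smul_zero, zero_add]
          nlinarith [sumRWO i 0]
        · intro x hx
          simp only [List.mem_append, List.mem_replicate, List.mem_range'_1] at hx
          omega
      rcases Nat.lt_or_ge i (b + 1) with hib2 | hib2
      · -- i = b
        have hib3 : i = b := by omega
        subst hib3
        refine ⟨List.replicate N0 0 ++ List.range' 0 i,
          [i] ++ List.range' (i + 1) dd, i,
          ?_, ?_, ?_, ?_, le_refl i, le_refl i⟩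
        · rw [hwdef, List.range_eq_range']; simp [List.append_assoc]
        · simp
        · rw [List.sum_append, List.sum_replicate, smul_zero, zero_add]
          nlinarith [sumRWO i 0]
        · intro x hx
          simp only [List.mem_append, List.mem_replicate, List.mem_range'_1] at hx
          omega
      · -- i = b + 1
        have hib3 : i = b + 1 := by omega
        subst hib3
        refine ⟨List.replicate N0 0 ++ List.range' 0 b ++ [b],
          List.range' (b + 1) dd, b,
          ?_, ?_, ?_, ?_, le_refl b, by omega⟩
        · rw [hwdef, List.range_eq_range']; simp [List.append_assoc]
        · simp
        · simp only [List.sum_append, List.sum_replicate, smul_zero, zero_add,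
            List.sum_cons, List.sum_nil]
          nlinarith [sumRWO b 0]
        · intro x hx
          simp only [List.mem_append, List.mem_replicate, List.mem_range'_1,
            List.mem_singleton] at hx
          omega
    obtain ⟨X, rest, dv, hw2, hXlen, hXsum, hXmem, hdvb, hdvi⟩ := hstruct
    obtain ⟨hpre, hdr⟩ := List.append_inj (hw2.symm.trans hweq) (by rw [hXlen, hi])
    have hdv : dv = d := (List.cons_eq_cons.mp hdr).1
    have hcb : c < b := by omega
    have hci : c < i := by omega
    have hk2 : k = X.sum + (c + s.sum) := by
      rw [← husum, hueq, ← hpre]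
      simp only [List.sum_append, List.sum_cons]
      try omega
    have hsmem : ∀ x ∈ s, x ≤ h' := by
      intro x hx
      have hxu : x ∈ u.toFinset := by
        rw [hueq, List.mem_toFinset]
        simp [hx]
      rw [hufin, Finset.mem_range] at hxu
      omega
    have hMsub : Finset.Ico i (h' + 1) ⊆ s.toFinset := by
      intro x hx
      rw [Finset.mem_Ico] at hx
      have hxu : x ∈ u.toFinset := by
        rw [hufin, Finset.mem_range]; omega
      rw [hueq, ← hpre, List.mem_toFinset] at hxu
      simp only [List.mem_append, List.mem_cons] at hxu
      rcases hxu with hX | hc | hs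
      · rcases hXmem x hX with rfl | hlt <;> omega
      · omega
      · exact List.mem_toFinset.2 hs
    obtain ⟨hcard, hsum⟩ := count_boundWO s (Finset.Ico i (h' + 1)) h' hsmem hMsub
    rw [Nat.card_Ico] at hcard hsum
    have hsl : s.length = b + dd + 1 - i := by omega
    rw [hsl] at hsum
    exact finalAWO (b + dd) b c i h' k X.sum s.sum K2 hXsum hk2 hsum hh' hcb (by omega)
  · -- case B : b + 2 ≤ i
    obtain ⟨p, hp⟩ : ∃ p, i = b + 2 + p := ⟨i - b - 2, by omega⟩
    obtain ⟨q, hq⟩ : ∃ q, dd = (q + 1) + p := ⟨dd - p - 1, by omega⟩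
    have key2 : List.range' (b + 1) dd
        = List.range' (b + 1) p ++ (b + 1 + p) :: List.range' (b + 1 + p + 1) q := by
      rw [hq, show q + 1 + p = p + (q + 1) from by omega, ← List.range'_append_1, List.range'_succ]
    have hw2 : w = (List.replicate N0 0 ++ List.range' 0 b ++ [b, b] ++
        List.range' (b + 1) p) ++ (b + 1 + p) :: List.range' (b + 1 + p + 1) q := by
      rw [hwdef, List.range_eq_range', key2]
      simp [List.append_assoc]
    obtain ⟨hpre, hdr⟩ := List.append_inj (hw2.symm.trans hweq) (by simp [hi, hp]; omega)
    have hdv : b + 1 + p = d := (List.cons_eq_cons.mp hdr).1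
    have hcm : c < b + 1 + p := by omega
    have hXsum : 2 * (List.replicate N0 0 ++ List.range' 0 b ++ [b, b] ++
        List.range' (b + 1) p).sum + (b + 1 + p) = (b + 1 + p) * (b + 1 + p) + 2 * b := by
      simp only [List.sum_append, List.sum_replicate, smul_zero, zero_add,
        List.sum_cons, List.sum_nil]
      nlinarith only [sumRWO b 0, sumRWO p (b + 1)]
    have hk2 : k = (List.replicate N0 0 ++ List.range' 0 b ++ [b, b] ++
        List.range' (b + 1) p).sum + (c + s.sum) := by
      rw [← husum, hueq, ← hpre]
      simp only [List.sum_append, List.sum_cons]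
      try omega
    have hsmem : ∀ x ∈ s, x ≤ h' := by
      intro x hx
      have hxu : x ∈ u.toFinset := by
        rw [hueq, List.mem_toFinset]
        simp [hx]
      rw [hufin, Finset.mem_range] at hxu
      omega
    have hMsub : Finset.Ico (b + 1 + p) (h' + 1) ⊆ s.toFinset := by
      intro x hx
      rw [Finset.mem_Ico] at hx
      have hxu : x ∈ u.toFinset := by
        rw [hufin, Finset.mem_range]; omega
      rw [hueq, ← hpre, List.mem_toFinset] at hxu
      simp only [List.mem_append, List.mem_cons, List.mem_replicate, List.mem_range'_1,
        List.mem_singleton, List.not_mem_nil, or_false] at hxu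
      rcases hxu with ((((hX | hX) | hX) | hX) | hX)
      · omega
      · omega
      · omega
      · omega
      · rcases hX with hX | hX
        · omega
        · exact List.mem_toFinset.2 hX
    obtain ⟨hcard, hsum⟩ := count_boundWO s (Finset.Ico (b + 1 + p) (h' + 1)) h' hsmem hMsub
    rw [Nat.card_Ico] at hcard hsum
    have hsl : s.length = b + dd - (b + 1 + p) := by omega
    rw [hsl] at hcard hsum
    exact finalBWO (b + dd) b c (b + 1 + p) h' k _ s.sum K2 hXsum hk2 hsum hcard hh' hcm
      (by omega)
end

section
/- For all positive integers n and s with 1 ≤ s ≤ n−1, there exists an s-overlap cycle for W(n). -/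
/-- `IsOCycle s N C f` says `f 0, f 1, …, f (N-1)` is an `s`-overlap cycle for the
set `C` of strings: it is a cyclic ordering of all elements of `C` (each occurring
exactly once) in which the last `s` letters of each word equal the first `s`
letters of the cyclically next word. -/
def IsOCycle (s N : ℕ) (C : Set (List ℕ)) (f : ℕ → List ℕ) : Prop :=
  (∀ i < N, f i ∈ C) ∧
    (∀ c ∈ C, ∃! i, i < N ∧ f i = c) ∧
    ∀ i < N, (f i).drop ((f i).length - s) = (f ((i + 1) % N)).take s



namespace OCW

variable (n s : ℕ)

/-- source vertex of an edge (word): first `s` letters -/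
def src (w : List ℕ) : List ℕ := w.take s
/-- destination vertex: last `s` letters -/
def dst (w : List ℕ) : List ℕ := w.drop (n - s)

lemma weak_length {n : ℕ} {w : List ℕ} (h : w ∈ weakOrders n) : w.length = n := h.1

lemma weak_reverse {n : ℕ} {w : List ℕ} (h : w ∈ weakOrders n) : w.reverse ∈ weakOrders n := by
  obtain ⟨h1, hh, h2⟩ := h
  exact ⟨by simpa using h1, hh, by simpa using h2⟩

lemma weak_rot {n : ℕ} {w : List ℕ} (h : w ∈ weakOrders n) (k : ℕ) :
    (w.drop k ++ w.take k) ∈ weakOrders n := by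
  obtain ⟨h1, hh, h2⟩ := h
  refine ⟨by simp [← h1]; omega, hh, ?_⟩
  rw [List.toFinset_append, Finset.union_comm, ← List.toFinset_append, List.take_append_drop, h2]

lemma weak_finite (n : ℕ) : (weakOrders n).Finite := by
  classical
  have : weakOrders n ⊆ ↑((Finset.univ : Finset (Fin n → Fin n)).image
      (fun f => List.ofFn (fun i => (f i : ℕ)))) := by
    intro w hw
    obtain ⟨h1, hh, h2⟩ := hw
    have hlt : ∀ x ∈ w, x < n := by
      intro x hx
      have hx' : x ∈ Finset.range (hh + 1) := h2 ▸ List.mem_toFinset.2 hx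
      have hcard : (Finset.range (hh + 1)).card ≤ w.length := by
        rw [← h2]; exact w.toFinset_card_le
      simp only [Finset.card_range, h1] at hcard
      have := Finset.mem_range.1 hx'
      omega
    simp only [Finset.coe_image, Set.mem_image, Finset.mem_coe, Finset.mem_univ, true_and,
      Finset.coe_univ, Set.image_univ, Set.mem_range]
    subst h1
    refine ⟨fun i => ⟨w.get i, hlt _ (w.get_mem i)⟩, ?_⟩
    simp [List.ofFn_get]
  exact Set.Finite.subset (Finset.finite_toSet _) this

/-- the set of weak order words as a Finset -/
noncomputable def Cf (n : ℕ) : Finset (List ℕ) := (weak_finite n).toFinset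

lemma mem_Cf {n : ℕ} {w : List ℕ} : w ∈ Cf n ↔ w ∈ weakOrders n := Set.Finite.mem_toFinset _

lemma coe_Cf (n : ℕ) : (↑(Cf n) : Set (List ℕ)) = weakOrders n := Set.Finite.coe_toFinset _

end OCW
open List
namespace OCW2
variable (n s : ℕ)
def src (s : ℕ) (w : List ℕ) : List ℕ := w.take s
def dst (n s : ℕ) (w : List ℕ) : List ℕ := w.drop (n - s)

/-- rotate an edge by n-s -/
def rot (n s : ℕ) (w : List ℕ) : List ℕ := w.drop (n - s) ++ w.take (n - s)

lemma length_src {w : List ℕ} (hw : w.length = n) (hs : s ≤ n) : (src s w).length = s := by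
  simp [src, hw, hs]

lemma length_dst {w : List ℕ} (hw : w.length = n) (hs : s ≤ n) : (dst n s w).length = s := by
  simp [dst, hw]; omega

lemma src_rot {w : List ℕ} (hw : w.length = n) (hs : s ≤ n) :
    src s (rot n s w) = dst n s w := by
  rw [rot, src, dst, List.take_append]
  have h1 : (w.drop (n-s)).length = s := by simp [hw]; omega
  simp [h1]

lemma rot_rot {w : List ℕ} (hw : w.length = n) (hs : s ≤ n) :
    (rot n s w).drop s ++ (rot n s w).take s = w := by
  have h1 : (w.drop (n-s)).length = s := by simp [hw]; omega
  rw [rot, List.drop_append, List.take_append, h1]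
  have h2 : n - s + s = n := by omega
  simp [h2, hw, List.take_of_length_le (le_of_eq h1)]

lemma src_reverse {w : List ℕ} (hw : w.length = n) (hs : s ≤ n) :
    src s w.reverse = (dst n s w).reverse := by
  rw [src, dst, List.reverse_drop, hw]
  congr 1
  omega

lemma dst_reverse {w : List ℕ} (hw : w.length = n) :
    dst n s w.reverse = (src s w).reverse := by
  rw [src, dst, List.reverse_take]
  congr 1
  simp [hw]

end OCW2
open List

namespace OCW3
variable {E V : Type} [DecidableEq E] [DecidableEq V] [Inhabited E] (σ τ : E → V)

def Adj (a b : E) : Prop := τ a = σ b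

def Balanced (R : Finset E) : Prop :=
  ∀ v, (R.filter (fun e => σ e = v)).card = (R.filter (fun e => τ e = v)).card

def IsTrail (R : Finset E) (t : List E) : Prop :=
  (∀ e ∈ t, e ∈ R) ∧ t.Chain' (Adj σ τ) ∧ t.Nodup

/-- counting in/out degrees along a chain -/
lemma count_chain (x : V) : ∀ (t : List E) (a : E), (a :: t).Chain' (Adj σ τ) →
    ((a :: t).countP (fun e => decide (τ e = x))) + (if σ a = x then 1 else 0)
    = ((a :: t).countP (fun e => decide (σ e = x)))
      + (if τ ((a :: t).getLastD default) = x then 1 else 0) := by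
  intro t
  induction t with
  | nil =>
    intro a _
    simp only [List.countP_cons, List.countP_nil, List.getLastD_cons, List.getLastD_nil, decide_eq_true_eq]
    split_ifs <;> simp_all
  | cons b r ih =>
    intro a hch
    have hab : τ a = σ b := (List.isChain_cons_cons.1 hch).1
    have ih' := ih b (List.isChain_cons_cons.1 hch).2
    simp only [List.countP_cons, List.getLastD_cons, decide_eq_true_eq] at ih' ⊢
    rw [hab]
    split_ifs at ih' ⊢ <;> omega

lemma countP_eq_card (p : E → Prop) [DecidablePred p] {t : List E} (ht : t.Nodup) :
    (t.countP (fun e => decide (p e))) = (t.toFinset.filter p).card := by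
  classical
  rw [List.countP_eq_length_filter, ← List.toFinset_card_of_nodup (List.Nodup.filter _ ht)]
  congr 1
  rw [List.toFinset_filter]
  ext e
  simp

lemma exists_mem_notMem {A B : Finset E} (hsub : A ⊆ B) (hlt : A.card < B.card) :
    ∃ e ∈ B, e ∉ A := by
  by_contra hc
  push_neg at hc
  exact absurd (Finset.card_le_card hc) (by omega)

/-- a non-closed trail in a balanced graph can be extended -/
lemma exists_extension {R : Finset E} (hbal : Balanced σ τ R) {t : List E}
    (htrail : IsTrail σ τ R t) (hne : t ≠ [])
    (hnc : τ (t.getLastD default) ≠ σ (t.headD default)) :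
    ∃ e ∈ R, e ∉ t ∧ σ e = τ (t.getLastD default) := by
  classical
  obtain ⟨a, t', rfl⟩ := List.exists_cons_of_ne_nil hne
  set u := τ ((a :: t').getLastD default) with hu
  have hcount := count_chain σ τ u (t') a htrail.2.1
  have h0 : (if σ ((a :: t').headD default) = u then 1 else 0) = 0 := by
    simp only [List.headD_cons]
    exact if_neg (fun h => hnc h.symm)
  simp only [List.headD_cons] at h0
  rw [if_neg (show ¬ σ a = u from fun h => hnc h.symm), if_pos rfl] at hcount
  -- countP τ = countP σ + 1
  have hsub1 : ((a :: t').toFinset.filter (fun e => τ e = u)) ⊆ R.filter (fun e => τ e = u) :=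
    Finset.filter_subset_filter _ (fun e he => htrail.1 e (List.mem_toFinset.1 he))
  have hc1 : ((a :: t').countP (fun e => decide (τ e = u))) ≤ (R.filter (fun e => τ e = u)).card := by
    rw [countP_eq_card (fun e => τ e = u) htrail.2.2]
    exact Finset.card_le_card hsub1
  have hc2 : ((a :: t').countP (fun e => decide (σ e = u)))
      = ((a :: t').toFinset.filter (fun e => σ e = u)).card := countP_eq_card (fun e => σ e = u) htrail.2.2
  have hlt : ((a :: t').toFinset.filter (fun e => σ e = u)).card
      < (R.filter (fun e => σ e = u)).card := by
    rw [hbal u]; omega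
  obtain ⟨e, heR, heT⟩ := exists_mem_notMem
    (Finset.filter_subset_filter _ (fun e he => htrail.1 e (List.mem_toFinset.1 he))) hlt
  have heu : σ e = u := (Finset.mem_filter.1 heR).2
  refine ⟨e, (Finset.mem_filter.1 heR).1, ?_, heu⟩
  intro hmem
  exact heT (Finset.mem_filter.2 ⟨List.mem_toFinset.2 hmem, heu⟩)

lemma headD_append_left {t : List E} (e : E) (hne : t ≠ []) :
    (t ++ [e]).headD default = t.headD default := by
  cases t with
  | nil => exact absurd rfl hne
  | cons a l => simp

lemma exists_closed_aux {R : Finset E} (hbal : Balanced σ τ R) :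
    ∀ (k : ℕ) (t : List E), R.card - t.length ≤ k → IsTrail σ τ R t → t ≠ [] →
    ∃ t', IsTrail σ τ R t' ∧ t' ≠ [] ∧ t'.headD default = t.headD default ∧
      τ (t'.getLastD default) = σ (t'.headD default) := by
  intro k
  induction k with
  | zero =>
    intro t hk htrail hne
    by_cases hcl : τ (t.getLastD default) = σ (t.headD default)
    · exact ⟨t, htrail, hne, rfl, hcl⟩
    · obtain ⟨e, heR, het, hse⟩ := exists_extension σ τ hbal htrail hne hcl
      exfalso
      have hnodup : (t ++ [e]).Nodup := by
        rw [List.nodup_append]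
        exact ⟨htrail.2.2, List.nodup_singleton _, by intro a ha b hb hab; simp at hb; subst hb hab; exact het ha⟩
      have hsub : (t ++ [e]).toFinset ⊆ R := by
        intro x hx
        rcases List.mem_append.1 (List.mem_toFinset.1 hx) with h | h
        · exact htrail.1 _ (by simpa using h)
        · simp_all
      have := Finset.card_le_card hsub
      rw [List.toFinset_card_of_nodup hnodup] at this
      simp at this
      omega
  | succ k ih =>
    intro t hk htrail hne
    by_cases hcl : τ (t.getLastD default) = σ (t.headD default)
    · exact ⟨t, htrail, hne, rfl, hcl⟩
    · obtain ⟨e, heR, het, hse⟩ := exists_extension σ τ hbal htrail hne hcl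
      have htrail' : IsTrail σ τ R (t ++ [e]) := by
        refine ⟨?_, ?_, ?_⟩
        · intro x hx
          rcases List.mem_append.1 hx with h | h
          · exact htrail.1 _ h
          · simp_all
        · show List.IsChain _ _; rw [List.isChain_append]
          refine ⟨htrail.2.1, List.isChain_singleton _, ?_⟩
          intro x hx y hy
          simp only [List.head?_cons, Option.mem_def, Option.some.injEq] at hy
          have hx' : t.getLastD default = x := by
            rw [List.getLastD_eq_getLast?, hx]
            rfl
          subst hy
          show τ x = σ e
          rw [← hx', hse]
        · rw [List.nodup_append]
          exact ⟨htrail.2.2, List.nodup_singleton _, by intro a ha b hb hab; simp at hb; subst hb hab; exact het ha⟩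
      obtain ⟨t', h1, h2, h3, h4⟩ := ih (t ++ [e]) (by simp; omega) htrail' (by simp)
      exact ⟨t', h1, h2, by rw [h3, headD_append_left e hne], h4⟩

/-- in a balanced graph, from any edge there is a nonempty closed trail starting with it -/
lemma exists_closed {R : Finset E} (hbal : Balanced σ τ R) {e : E} (he : e ∈ R) :
    ∃ t, IsTrail σ τ R t ∧ t ≠ [] ∧ t.headD default = e ∧
      τ (t.getLastD default) = σ (t.headD default) := by
  obtain ⟨t, h1, h2, h3, h4⟩ := exists_closed_aux σ τ hbal (R.card) [e] (by simp)
    ⟨by simpa using he, List.isChain_singleton _, List.nodup_singleton _⟩ (by simp)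
  exact ⟨t, h1, h2, by simpa using h3, h4⟩

def IsClosed (t : List E) : Prop :=
  t ≠ [] ∧ τ (t.getLastD default) = σ (t.headD default)

lemma headD_mem {t : List E} (h : t ≠ []) : t.headD default ∈ t := by
  cases t with
  | nil => exact absurd rfl h
  | cons a l => simp

lemma getLastD_append_right {l₁ l₂ : List E} (h : l₂ ≠ []) (d : E) :
    (l₁ ++ l₂).getLastD d = l₂.getLastD d := by
  cases l₂ with
  | nil => exact absurd rfl h
  | cons b m =>
    rw [List.getLastD_eq_getLast?, List.getLastD_eq_getLast?, List.getLast?_append_of_ne_nil]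
    simp

lemma headD_append_left' {t₁ : List E} (l : List E) (h : t₁ ≠ []) (d : E) :
    (t₁ ++ l).headD d = t₁.headD d := by
  cases t₁ with
  | nil => exact absurd rfl h
  | cons a m => simp

/-- destination of any edge of a closed chain is a source of some edge -/
lemma closed_dst_mem {t : List E} (hch : t.Chain' (Adj σ τ)) (hcl : IsClosed σ τ t)
    {e : E} (he : e ∈ t) : τ e ∈ t.map σ := by
  obtain ⟨t₁, t₂, rfl⟩ := List.append_of_mem he
  cases t₂ with
  | nil =>
    have hlast : (t₁ ++ [e]).getLastD default = e := by
      rw [getLastD_append_right (by simp) default]; rfl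
    obtain ⟨hne, heq⟩ := hcl
    rw [hlast] at heq
    rw [heq]
    exact List.mem_map_of_mem (f := σ) (headD_mem hne)
  | cons b r =>
    have hsuf : (e :: b :: r).Chain' (Adj σ τ) := hch.suffix ⟨t₁, rfl⟩
    have : τ e = σ b := (List.isChain_cons_cons.1 hsuf).1
    rw [this]
    exact List.mem_map_of_mem (f := σ) (by simp)

/-- closed chains use each vertex equally as source and destination -/
lemma closed_count {t : List E} (hch : t.Chain' (Adj σ τ)) (hcl : IsClosed σ τ t) (x : V) :
    t.countP (fun e => decide (σ e = x)) = t.countP (fun e => decide (τ e = x)) := by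
  obtain ⟨a, t', rfl⟩ := List.exists_cons_of_ne_nil hcl.1
  have h := count_chain σ τ x t' a hch
  have h2 := hcl.2
  simp only [List.headD_cons] at h2 ⊢
  rw [h2] at h
  omega

lemma balanced_sdiff {G : Finset E} (hbal : Balanced σ τ G) {t : List E}
    (htrail : IsTrail σ τ G t) (hcl : IsClosed σ τ t) :
    Balanced σ τ (G \ t.toFinset) := by
  classical
  intro v
  have key : ∀ (f : E → V),
      ((G \ t.toFinset).filter (fun e => f e = v)).card
        = (G.filter (fun e => f e = v)).card - (t.toFinset.filter (fun e => f e = v)).card := by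
    intro f
    have h1 : (G \ t.toFinset).filter (fun e => f e = v)
        = G.filter (fun e => f e = v) \ t.toFinset.filter (fun e => f e = v) := by
      ext e
      simp only [Finset.mem_filter, Finset.mem_sdiff]
      tauto
    rw [h1, Finset.card_sdiff_of_subset]
    exact Finset.filter_subset_filter _ (fun e he => htrail.1 e (List.mem_toFinset.1 he))
  rw [key σ, key τ, ← countP_eq_card (fun e => σ e = v) htrail.2.2,
    ← countP_eq_card (fun e => τ e = v) htrail.2.2, closed_count σ τ htrail.2.1 hcl, hbal v]

def StepR (G : Finset E) (v u : V) : Prop := ∃ e ∈ G, σ e = v ∧ τ e = u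

/-- first-exit: if a vertex of a closed trail reaches the source of an edge outside
the trail, then some edge outside the trail has its source on the trail -/
lemma exists_exit {G : Finset E} {t : List E} (hch : t.Chain' (Adj σ τ))
    (hcl : IsClosed σ τ t) {v u : V}
    (hre : Relation.ReflTransGen (StepR σ τ G) v u) (hv : v ∈ t.map σ)
    {e : E} (heG : e ∈ G) (het : e ∉ t.toFinset) (hσ : σ e = u) :
    ∃ e', e' ∈ G ∧ e' ∉ t.toFinset ∧ σ e' ∈ t.map σ := by
  classical
  induction hre using Relation.ReflTransGen.head_induction_on with
  | refl => exact ⟨e, heG, het, by rw [hσ]; exact hv⟩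
  | head hstep hrest ih =>
    rename_i a c
    obtain ⟨w, hwG, hwv, hwc⟩ := hstep
    by_cases hwt : w ∈ t.toFinset
    · exact ih (by rw [← hwc]; exact closed_dst_mem σ τ hch hcl (List.mem_toFinset.1 hwt))
    · exact ⟨w, hwG, hwt, by rw [hwv]; exact hv⟩

lemma head?_eq_headD {t : List E} (h : t ≠ []) : t.head? = some (t.headD default) := by
  cases t with
  | nil => exact absurd rfl h
  | cons a l => rfl

lemma trail_length_le {G : Finset E} {t : List E} (htrail : IsTrail σ τ G t) :
    t.length ≤ G.card := by
  rw [← List.toFinset_card_of_nodup htrail.2.2]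
  exact Finset.card_le_card (fun x hx => htrail.1 x (List.mem_toFinset.1 hx))

lemma splice {G : Finset E} (hbal : Balanced σ τ G)
    (hconn : ∀ e₁ ∈ G, ∀ e₂ ∈ G, Relation.ReflTransGen (StepR σ τ G) (σ e₁) (σ e₂))
    {t : List E} (htrail : IsTrail σ τ G t) (hcl : IsClosed σ τ t)
    (hne : t.toFinset ≠ G) :
    ∃ t', IsTrail σ τ G t' ∧ IsClosed σ τ t' ∧ t.length < t'.length := by
  classical
  have hsub : t.toFinset ⊆ G := fun x hx => htrail.1 x (List.mem_toFinset.1 hx)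
  obtain ⟨e, heG, het⟩ := Finset.exists_of_ssubset (hsub.ssubset_of_ne hne)
  have he₀t : t.headD default ∈ t := headD_mem hcl.1
  have he₀G : t.headD default ∈ G := htrail.1 _ he₀t
  have hre := hconn _ he₀G e heG
  obtain ⟨e', he'G, he't, hσ'⟩ := exists_exit σ τ htrail.2.1 hcl hre
    (List.mem_map_of_mem (f := σ) he₀t) heG het rfl
  obtain ⟨a, hat, haσ⟩ := List.mem_map.1 hσ'
  have hbal' : Balanced σ τ (G \ t.toFinset) := balanced_sdiff σ τ hbal htrail hcl
  have he'R : e' ∈ G \ t.toFinset := Finset.mem_sdiff.2 ⟨he'G, he't⟩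
  obtain ⟨S, hStrail, hSne, hShead, hSclosed⟩ := exists_closed σ τ hbal' he'R
  have hSdisj : ∀ x ∈ S, x ∉ t := by
    intro x hx
    exact fun hxt => (Finset.mem_sdiff.1 (hStrail.1 x hx)).2 (List.mem_toFinset.2 hxt)
  have hSsubG : ∀ x ∈ S, x ∈ G := fun x hx => (Finset.mem_sdiff.1 (hStrail.1 x hx)).1
  obtain ⟨t₁, t₂, rfl⟩ := List.append_of_mem hat
  set t := t₁ ++ a :: t₂ with hteq
  have hperm : (t₁ ++ (S ++ a :: t₂)).Perm (S ++ t) := by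
    calc t₁ ++ (S ++ a :: t₂) = (t₁ ++ S) ++ a :: t₂ := by rw [List.append_assoc]
    _ ~ (S ++ t₁) ++ a :: t₂ := List.Perm.append_right _ List.perm_append_comm
    _ = S ++ t := by rw [List.append_assoc]
  have hSaeq : σ (S.headD default) = σ a := by rw [hShead, ← haσ]
  refine ⟨t₁ ++ (S ++ a :: t₂), ⟨?_, ?_, ?_⟩, ⟨by simp, ?_⟩, ?_⟩
  · intro x hx
    rcases (hperm.mem_iff).1 hx with h
    rcases List.mem_append.1 h with h | h
    · exact hSsubG x h
    · exact htrail.1 x h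
  · -- chain'
    show List.IsChain _ _; rw [List.isChain_append]
    refine ⟨htrail.2.1.prefix ⟨a :: t₂, rfl⟩, ?_, ?_⟩
    · show List.IsChain _ _; rw [List.isChain_append]
      refine ⟨hStrail.2.1, htrail.2.1.suffix ⟨t₁, rfl⟩, ?_⟩
      intro x hx y hy
      simp only [List.head?_cons, Option.mem_def, Option.some.injEq] at hy
      subst hy
      have hx' : S.getLastD default = x := by
        rw [List.getLastD_eq_getLast?, hx]; rfl
      show τ x = σ a
      rw [← hx', hSclosed, hSaeq]
    · intro x hx y hy
      rw [List.head?_append_of_ne_nil _ hSne, head?_eq_headD hSne] at hy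
      simp only [Option.mem_def, Option.some.injEq] at hy
      subst hy
      have hlink := (List.isChain_append.1 htrail.2.1).2.2 x hx a (by simp)
      show τ x = σ (S.headD default)
      rw [hSaeq]
      exact hlink
  · -- nodup
    exact (hperm.nodup_iff).2 (List.nodup_append.2 ⟨hStrail.2.2, htrail.2.2, fun x hx y hy hxy => hSdisj x hx (hxy ▸ hy)⟩)
  · -- closed
    have hlastnew : (t₁ ++ (S ++ a :: t₂)).getLastD default = (a :: t₂).getLastD default := by
      rw [getLastD_append_right (by simp) default, getLastD_append_right (by simp) default]
    have hlastt : t.getLastD default = (a :: t₂).getLastD default :=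
      getLastD_append_right (by simp) default
    rw [hlastnew]
    cases t₁ with
    | nil =>
      rw [List.nil_append, headD_append_left' _ hSne default, hSaeq]
      have h5 := hcl.2
      rw [hlastt] at h5
      simpa [hteq] using h5
    | cons b m =>
      rw [List.cons_append, List.headD_cons]
      have h5 := hcl.2
      rw [hlastt] at h5
      simpa [hteq] using h5
  · -- length
    have := List.length_pos_iff.2 hSne
    simp only [List.length_append, List.length_cons, hteq]
    omega

lemma euler_aux {G : Finset E} (hbal : Balanced σ τ G)
    (hconn : ∀ e₁ ∈ G, ∀ e₂ ∈ G, Relation.ReflTransGen (StepR σ τ G) (σ e₁) (σ e₂)) :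
    ∀ (k : ℕ) (t : List E), G.card - t.length ≤ k → IsTrail σ τ G t → IsClosed σ τ t →
    ∃ t', IsTrail σ τ G t' ∧ IsClosed σ τ t' ∧ t'.toFinset = G := by
  intro k
  induction k with
  | zero =>
    intro t hk htrail hcl
    by_cases hfull : t.toFinset = G
    · exact ⟨t, htrail, hcl, hfull⟩
    · obtain ⟨t', htrail', _, hlen⟩ := splice σ τ hbal hconn htrail hcl hfull
      have h1 := trail_length_le σ τ htrail'
      omega
  | succ k ih =>
    intro t hk htrail hcl
    by_cases hfull : t.toFinset = G
    · exact ⟨t, htrail, hcl, hfull⟩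
    · obtain ⟨t', htrail', hcl', hlen⟩ := splice σ τ hbal hconn htrail hcl hfull
      exact ih t' (by omega) htrail' hcl'

/-- Euler circuit existence for balanced, connected finite multidigraphs -/
theorem euler {G : Finset E} (hbal : Balanced σ τ G)
    (hconn : ∀ e₁ ∈ G, ∀ e₂ ∈ G, Relation.ReflTransGen (StepR σ τ G) (σ e₁) (σ e₂))
    {e₀ : E} (he₀ : e₀ ∈ G) :
    ∃ t : List E, IsTrail σ τ G t ∧ IsClosed σ τ t ∧ t.toFinset = G := by
  obtain ⟨S, h1, h2, _, h4⟩ := exists_closed σ τ hbal he₀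
  exact euler_aux σ τ hbal hconn G.card S (by omega) h1 ⟨h2, h4⟩

end OCW3

namespace OCW4
open List OCW OCW2 OCW3

variable (n s : ℕ)

lemma indexOf_append_right {x : ℕ} {l1 l2 : List ℕ} (h : x ∉ l1) :
    List.idxOf x (l1 ++ l2) = l1.length + List.idxOf x l2 := by
  induction l1 with
  | nil => simp
  | cons a m ih =>
    simp only [List.cons_append, List.idxOf_cons, List.length_cons]
    have hax : (a == x) = false := by simp; rintro rfl; exact h (by simp)
    rw [hax]
    simp only [cond_false]
    rw [ih (fun hx => h (by simp [hx]))]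
    omega

/-- maximum letter -/
def mx (u : List ℕ) : ℕ := u.foldr max 0

lemma le_mx {u : List ℕ} {x : ℕ} (h : x ∈ u) : x ≤ mx u := by
  induction u with
  | nil => simp at h
  | cons a l ih =>
    rcases List.mem_cons.1 h with rfl | h
    · exact le_max_left _ _
    · exact le_trans (ih h) (le_max_right _ _)

lemma mx_mem {u : List ℕ} (h : mx u ≠ 0) : mx u ∈ u := by
  induction u with
  | nil => simp [mx] at h
  | cons a l ih =>
    have : mx (a :: l) = max a (mx l) := rfl
    rw [this] at h ⊢
    rcases le_or_gt (mx l) a with hc | hc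
    · rw [max_eq_left hc]; exact List.mem_cons_self
    · rw [max_eq_right hc.le] at h ⊢
      exact List.mem_cons_of_mem _ (ih (by omega))

lemma toFinset_subset_mx (u : List ℕ) : u.toFinset ⊆ Finset.range (mx u + 1) := by
  intro x hx
  exact Finset.mem_range.2 (by have := le_mx (List.mem_toFinset.1 hx); omega)

/-- extendable vertices: prefixes of weak order words -/
def Ext (u : List ℕ) : Prop := ∃ w ∈ Cf n, OCW2.src s w = u

lemma ext_length {u : List ℕ} (hsn : s ≤ n) (h : Ext n s u) : u.length = s := by
  obtain ⟨w, hw, rfl⟩ := h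
  exact length_src n s (weak_length (mem_Cf.1 hw)) hsn

lemma ext_dst {w : List ℕ} (hsn : s ≤ n) (hw : w ∈ Cf n) : Ext n s (OCW2.dst n s w) := by
  refine ⟨OCW2.rot n s w, ?_, ?_⟩
  · exact mem_Cf.2 (weak_rot (mem_Cf.1 hw) (n - s))
  · exact src_rot n s (weak_length (mem_Cf.1 hw)) hsn

lemma ext_rev {u : List ℕ} (hsn : s ≤ n) (h : Ext n s u) : Ext n s u.reverse := by
  obtain ⟨w, hw, rfl⟩ := h
  have h1 : w.reverse ∈ Cf n := mem_Cf.2 (weak_reverse (mem_Cf.1 hw))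
  have h2 : OCW2.dst n s w.reverse = (OCW2.src s w).reverse :=
    dst_reverse n s (weak_length (mem_Cf.1 hw))
  rw [← h2]
  exact ext_dst n s hsn h1

/-- missing letters -/
def Mset (u : List ℕ) : Finset ℕ := Finset.range (mx u + 1) \ u.toFinset

def fill (n s : ℕ) (u : List ℕ) : List ℕ :=
  (Mset u).sort (· ≤ ·) ++ List.replicate (n - s - (Mset u).card) 0

def stepW (n s : ℕ) (u : List ℕ) : List ℕ := u ++ fill n s u

lemma Mset_card_le (hsn : s ≤ n) {u : List ℕ} (hExt : Ext n s u) :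
    (Mset u).card ≤ n - s := by
  obtain ⟨w, hw, rfl⟩ := hExt
  obtain ⟨hwlen, H, hwfin⟩ := mem_Cf.1 hw
  set u := OCW2.src s w with hu
  have hmx : mx u ≤ H := by
    by_cases h0 : mx u = 0
    · omega
    · have h1 : mx u ∈ u := mx_mem h0
      have h2 : mx u ∈ w := (List.take_sublist s w).subset h1
      have h3 : mx u ∈ Finset.range (H + 1) := hwfin ▸ List.mem_toFinset.2 h2
      have := Finset.mem_range.1 h3
      omega
  have hsubd : Mset u ⊆ (w.drop s).toFinset := by
    intro x hx
    obtain ⟨hx1, hx2⟩ := Finset.mem_sdiff.1 hx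
    have hxw : x ∈ w.toFinset := by
      rw [hwfin]
      exact Finset.mem_range.2 (by have := Finset.mem_range.1 hx1; omega)
    have : x ∈ u.toFinset ∪ (w.drop s).toFinset := by
      rw [hu, OCW2.src, ← List.toFinset_append, List.take_append_drop]
      exact hxw
    rcases Finset.mem_union.1 this with h | h
    · exact absurd h hx2
    · exact h
  calc (Mset u).card ≤ (w.drop s).toFinset.card := Finset.card_le_card hsubd
  _ ≤ (w.drop s).length := List.toFinset_card_le _
  _ = n - s := by rw [List.length_drop, hwlen]

lemma fill_length (hsn : s ≤ n) {u : List ℕ} (hExt : Ext n s u) :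
    (fill n s u).length = n - s := by
  have := Mset_card_le n s hsn hExt
  simp [fill, Finset.length_sort]
  omega

lemma fill_lt {u x : ℕ → ℕ} : True := trivial

lemma mem_fill_lt {u : List ℕ} {x : ℕ} (hx : x ∈ fill n s u)
    (hm : 1 ≤ mx u) (hmem : mx u ∈ u) : x < mx u := by
  rcases List.mem_append.1 hx with h | h
  · have := Finset.mem_sdiff.1 ((Finset.mem_sort _).1 h)
    have h1 := Finset.mem_range.1 this.1
    have h2 : x ≠ mx u := fun he => this.2 (List.mem_toFinset.2 (he ▸ hmem))
    omega
  · have := List.eq_of_mem_replicate h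
    omega

lemma stepW_mem (hs1 : 1 ≤ s) (hsn : s ≤ n) {u : List ℕ} (hExt : Ext n s u) :
    stepW n s u ∈ Cf n := by
  have hlen : u.length = s := ext_length n s hsn hExt
  refine mem_Cf.2 ⟨?_, mx u, ?_⟩
  · rw [stepW, List.length_append, hlen, fill_length n s hsn hExt]
    omega
  · apply subset_antisymm
    · intro x hx
      rcases List.mem_append.1 (List.mem_toFinset.1 hx) with h | h
      · exact toFinset_subset_mx u (List.mem_toFinset.2 h)
      · rcases List.mem_append.1 h with h | h
        · exact Finset.mem_range.2 (Finset.mem_range.1 (Finset.mem_sdiff.1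
            ((Finset.mem_sort _).1 h)).1)
        · have := List.eq_of_mem_replicate h
          exact Finset.mem_range.2 (by omega)
    · intro x hx
      rw [List.mem_toFinset, stepW, fill]
      by_cases hxu : x ∈ u
      · exact List.mem_append.2 (Or.inl hxu)
      · refine List.mem_append.2 (Or.inr (List.mem_append.2 (Or.inl ?_)))
        exact (Finset.mem_sort _).2 (Finset.mem_sdiff.2 ⟨hx, fun hc => hxu (List.mem_toFinset.1 hc)⟩)

lemma src_stepW (hsn : s ≤ n) {u : List ℕ} (hExt : Ext n s u) :
    OCW2.src s (stepW n s u) = u := by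
  have hlen : u.length = s := ext_length n s hsn hExt
  rw [OCW2.src, stepW, ← hlen, List.take_left]

/-- index of last occurrence of the max, counted from the right -/
def idxR (u : List ℕ) : ℕ := List.idxOf (mx u) u.reverse

def meas (s : ℕ) (u : List ℕ) : ℕ := mx u * s + (s - 1 - idxR u)

lemma step_decreases (hs1 : 1 ≤ s) (hsn : s < n) {u : List ℕ} (hExt : Ext n s u)
    (hne : u ≠ List.replicate s 0) :
    meas s (OCW2.dst n s (stepW n s u)) < meas s u := by
  have hlen : u.length = s := ext_length n s (le_of_lt hsn) hExt
  have hm1 : 1 ≤ mx u := by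
    have hno : ¬ (∀ b ∈ u, b = 0) := fun h => hne (List.eq_replicate_iff.2 ⟨hlen, h⟩)
    push_neg at hno
    obtain ⟨x, hx, hx0⟩ := hno
    have := le_mx hx
    omega
  have hmmem : mx u ∈ u := mx_mem (by omega)
  set d := n - s with hd
  have hd1 : 1 ≤ d := by omega
  have hfd : (fill n s u).length = d := fill_length n s (le_of_lt hsn) hExt
  have hv : OCW2.dst n s (stepW n s u) = u.drop d ++ (fill n s u).drop (d - s) := by
    rw [OCW2.dst, stepW, List.drop_append, hlen, ← hd]
  set v := OCW2.dst n s (stepW n s u) with hveq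
  have hvlen : v.length = s := by
    rw [hveq, OCW2.dst, List.length_drop, stepW, List.length_append, hlen, hfd]
    omega
  have hfill_lt : ∀ x ∈ fill n s u, x < mx u := fun x hx => mem_fill_lt n s hx hm1 hmmem
  by_cases hA : mx u ∈ u.drop d
  · -- max survives: last occurrence shifts left
    have hds : d < s := by
      have h1 : u.drop d ≠ [] := List.ne_nil_of_mem hA
      have h2 : (u.drop d).length = s - d := by rw [List.length_drop, hlen]
      have h3 : (u.drop d).length ≠ 0 := fun hc => h1 (List.eq_nil_of_length_eq_zero hc)
      omega
    have hv2 : v = u.drop d ++ fill n s u := by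
      rw [hv]
      congr 1
      rw [show d - s = 0 by omega, List.drop_zero]
    have hmv : mx u ∈ v := hv2 ▸ List.mem_append.2 (Or.inl hA)
    have hvle : ∀ x ∈ v, x ≤ mx u := by
      intro x hx
      rcases List.mem_append.1 (hv2 ▸ hx) with h | h
      · exact le_mx (List.drop_subset _ _ h)
      · exact le_of_lt (hfill_lt x h)
    have hmxv : mx v = mx u := by
      refine le_antisymm ?_ (le_mx hmv)
      have h0 : mx v ≠ 0 := by have := le_mx hmv; omega
      exact hvle _ (mx_mem h0)
    have hrev : v.reverse = (fill n s u).reverse ++ (u.drop d).reverse := by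
      rw [hv2, List.reverse_append]
    have hmnotfill : mx u ∉ (fill n s u).reverse := by
      intro hc
      exact absurd (hfill_lt _ (List.mem_reverse.1 hc)) (by omega)
    have hidxv : idxR v = d + List.idxOf (mx u) (u.drop d).reverse := by
      rw [idxR, hmxv, hrev, indexOf_append_right hmnotfill, List.length_reverse, hfd]
    have hidxu : idxR u = List.idxOf (mx u) (u.drop d).reverse := by
      have hu2 : u.reverse = (u.drop d).reverse ++ (u.take d).reverse := by
        rw [← List.reverse_append, List.take_append_drop]
      rw [idxR, hu2, List.idxOf_append_of_mem (List.mem_reverse.2 hA)]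
    have hlt : idxR v < s := by
      rw [idxR, hmxv, ← hvlen, ← List.length_reverse]
      exact List.idxOf_lt_length_iff.2 (List.mem_reverse.2 hmv)
    rw [meas, meas, hmxv]
    omega
  · -- max dies: mx strictly decreases
    have hvlt : ∀ x ∈ v, x < mx u := by
      intro x hx
      rw [hv] at hx
      rcases List.mem_append.1 hx with h | h
      · have h1 := le_mx (List.drop_subset _ _ h)
        have h2 : x ≠ mx u := fun hc => hA (hc ▸ h)
        omega
      · exact hfill_lt x (List.drop_subset _ _ h)
    have hmxv : mx v < mx u := by
      by_cases h0 : mx v = 0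
      · omega
      · exact hvlt _ (mx_mem h0)
    have h1 : (mx v + 1) * s ≤ mx u * s := Nat.mul_le_mul_right _ (by omega)
    rw [add_mul, one_mul] at h1
    rw [meas, meas]
    omega

abbrev Step (n s : ℕ) : List ℕ → List ℕ → Prop :=
  OCW3.StepR (OCW2.src s) (OCW2.dst n s) (Cf n)

lemma psi_dst {w : List ℕ} (hw : w.length = n) (hs : s ≤ n) :
    OCW2.dst n s (w.drop s ++ w.take s) = OCW2.src s w := by
  rw [OCW2.dst, OCW2.src, List.drop_append, List.length_drop, hw]
  have h1 : (w.drop s).drop (n - s) = [] := by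
    apply List.drop_eq_nil_of_le
    simp [hw]
  simp [h1, Nat.sub_self]

lemma phi_psi {w : List ℕ} (hw : w.length = n) (hs : s ≤ n) :
    OCW2.rot n s (w.drop s ++ w.take s) = w := by
  have h2 : (w.drop s ++ w.take s).drop (n - s) = w.take s := psi_dst n s hw hs
  have h3 : (w.drop s ++ w.take s).take (n - s) = w.drop s := by
    have : n - s = (w.drop s).length := by simp [hw]
    rw [this, List.take_left]
  rw [OCW2.rot, h2, h3, List.take_append_drop]

lemma balanced_Cf (hs : s ≤ n) :
    OCW3.Balanced (OCW2.src s) (OCW2.dst n s) (Cf n) := by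
  intro v
  refine Finset.card_bij' (fun w _ => w.drop s ++ w.take s)
    (fun w _ => OCW2.rot n s w) ?_ ?_ ?_ ?_
  · intro w hw
    obtain ⟨hw1, hw2⟩ := Finset.mem_filter.1 hw
    have hwlen := weak_length (mem_Cf.1 hw1)
    refine Finset.mem_filter.2 ⟨mem_Cf.2 (weak_rot (mem_Cf.1 hw1) s), ?_⟩
    rw [psi_dst n s hwlen hs, hw2]
  · intro w hw
    obtain ⟨hw1, hw2⟩ := Finset.mem_filter.1 hw
    have hwlen := weak_length (mem_Cf.1 hw1)
    refine Finset.mem_filter.2 ⟨mem_Cf.2 (weak_rot (mem_Cf.1 hw1) (n - s)), ?_⟩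
    rw [src_rot n s hwlen hs, hw2]
  · intro w hw
    obtain ⟨hw1, _⟩ := Finset.mem_filter.1 hw
    exact phi_psi n s (weak_length (mem_Cf.1 hw1)) hs
  · intro w hw
    obtain ⟨hw1, _⟩ := Finset.mem_filter.1 hw
    exact rot_rot n s (weak_length (mem_Cf.1 hw1)) hs

lemma ext_src {w : List ℕ} (hw : w ∈ Cf n) : Ext n s (OCW2.src s w) := ⟨w, hw, rfl⟩

lemma reach_zs (hs1 : 1 ≤ s) (hsn : s < n) :
    ∀ (k : ℕ) (u : List ℕ), meas s u ≤ k → Ext n s u →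
    Relation.ReflTransGen (Step n s) u (List.replicate s 0) := by
  intro k
  induction k with
  | zero =>
    intro u hk hExt
    by_cases hne : u = List.replicate s 0
    · exact hne ▸ Relation.ReflTransGen.refl
    · have := step_decreases n s hs1 hsn hExt hne
      omega
  | succ k ih =>
    intro u hk hExt
    by_cases hne : u = List.replicate s 0
    · exact hne ▸ Relation.ReflTransGen.refl
    · have hmem := stepW_mem n s hs1 (le_of_lt hsn) hExt
      have hstep : Step n s u (OCW2.dst n s (stepW n s u)) :=
        ⟨stepW n s u, hmem, src_stepW n s (le_of_lt hsn) hExt, rfl⟩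
      have hdec := step_decreases n s hs1 hsn hExt hne
      exact Relation.ReflTransGen.head hstep
        (ih _ (by omega) (ext_dst n s (le_of_lt hsn) hmem))

lemma step_rev {a b : List ℕ} (hs : s ≤ n) (h : Step n s a b) :
    Step n s b.reverse a.reverse := by
  obtain ⟨w, hw, hsrc, hdst⟩ := h
  have hwlen := weak_length (mem_Cf.1 hw)
  exact ⟨w.reverse, mem_Cf.2 (weak_reverse (mem_Cf.1 hw)),
    by rw [src_reverse n s hwlen hs, hdst], by rw [dst_reverse n s hwlen, hsrc]⟩

lemma reach_rev {a b : List ℕ} (hs : s ≤ n)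
    (h : Relation.ReflTransGen (Step n s) a b) :
    Relation.ReflTransGen (Step n s) b.reverse a.reverse := by
  induction h with
  | refl => exact Relation.ReflTransGen.refl
  | tail h1 h2 ih => exact Relation.ReflTransGen.head (step_rev n s hs h2) ih

lemma reach_from_zs (hs1 : 1 ≤ s) (hsn : s < n) {x : List ℕ} (hx : Ext n s x) :
    Relation.ReflTransGen (Step n s) (List.replicate s 0) x := by
  have h1 := reach_zs n s hs1 hsn (meas s x.reverse) x.reverse le_rfl
    (ext_rev n s (le_of_lt hsn) hx)
  have h2 := reach_rev n s (le_of_lt hsn) h1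
  simpa [List.reverse_replicate, List.reverse_reverse] using h2

lemma conn_Cf (hs1 : 1 ≤ s) (hsn : s < n) :
    ∀ e₁ ∈ Cf n, ∀ e₂ ∈ Cf n, Relation.ReflTransGen (Step n s)
      (OCW2.src s e₁) (OCW2.src s e₂) := by
  intro e₁ h₁ e₂ h₂
  exact Relation.ReflTransGen.trans
    (reach_zs n s hs1 hsn _ _ le_rfl (ext_src n s h₁))
    (reach_from_zs n s hs1 hsn (ext_src n s h₂))

lemma zero_word_mem (hn : 1 ≤ n) : List.replicate n 0 ∈ Cf n := by
  refine mem_Cf.2 ⟨by simp, 0, ?_⟩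
  ext x
  simp [List.mem_replicate, Nat.lt_one_iff]
  omega

end OCW4

namespace OCW4

lemma headD_eq_getD {α : Type} [Inhabited α] {t : List α} (h : t ≠ []) :
    t.headD default = t.getD 0 default := by
  cases t with
  | nil => rfl
  | cons a l => rfl

lemma getLastD_eq_getD {α : Type} [Inhabited α] {t : List α} (h : t ≠ []) :
    t.getLastD default = t.getD (t.length - 1) default := by
  rw [List.getLastD_eq_getLast?, List.getLast?_eq_getLast h, Option.getD_some,
    List.getD_eq_getElem _ _ (by have := List.length_pos_iff.2 h; omega)]
  exact List.getLast_eq_getElem h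

end OCW4

/-- For all positive integers `n, s` with `1 ≤ s ≤ n - 1`, there exists an
`s`-overlap cycle for `W(n)`. -/
theorem exists_ocycle_weakOrders (n s : ℕ) (hn : 0 < n) (hs1 : 1 ≤ s)
    (hs2 : s ≤ n - 1) :
    ∃ f : ℕ → List ℕ, IsOCycle s (Nat.card (weakOrders n)) (weakOrders n) f := by
  classical
  have hn2 : 2 ≤ n := by omega
  have hsn : s < n := by omega
  obtain ⟨t, htrail, hcl, hfull⟩ := OCW3.euler (OCW2.src s) (OCW2.dst n s)
    (OCW4.balanced_Cf n s hsn.le) (OCW4.conn_Cf n s hs1 hsn) (OCW4.zero_word_mem n hn)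
  have hdef : (default : List ℕ) = [] := rfl
  have htne : t ≠ [] := hcl.1
  have htpos : 0 < t.length := List.length_pos_iff.2 htne
  have hN : Nat.card (weakOrders n) = t.length := by
    rw [← OCW.coe_Cf n, Nat.card_coe_set_eq, Set.ncard_coe_finset, ← hfull,
      List.toFinset_card_of_nodup htrail.2.2]
  have hmemt : ∀ i, i < t.length → t.getD i [] ∈ t := by
    intro i hi
    rw [List.getD_eq_getElem _ _ hi]
    exact List.getElem_mem hi
  have hmemC : ∀ i, i < t.length → t.getD i [] ∈ weakOrders n := by
    intro i hi
    exact OCW.mem_Cf.1 (htrail.1 _ (hmemt i hi))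
  refine ⟨fun i => t.getD i [], ?_, ?_, ?_⟩
  · intro i hi
    exact hmemC i (hN ▸ hi)
  · intro c hc
    have hct : c ∈ t := List.mem_toFinset.1 (hfull ▸ (OCW.mem_Cf.2 hc))
    obtain ⟨i, hi, hgi⟩ := List.getElem_of_mem hct
    refine ⟨i, ⟨by omega, ?_⟩, ?_⟩
    · show t.getD i [] = c
      rw [List.getD_eq_getElem _ _ hi]
      exact hgi
    · rintro j ⟨hj, hgj⟩
      rw [hN] at hj
      have hgj' : t[j] = c := by
        rw [← List.getD_eq_getElem _ _ hj]
        exact hgj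
      have heq : t[j] = t[i] := by rw [hgj', hgi]
      have h1 : t.get ⟨j, hj⟩ = t.get ⟨i, hi⟩ := by
        simpa [List.get_eq_getElem] using heq
      exact congrArg Fin.val ((List.Nodup.get_inj_iff htrail.2.2).1 h1)
  · intro i hi
    rw [hN] at hi ⊢
    have hlenfi : (t.getD i []).length = n :=
      OCW.weak_length (hmemC i hi)
    show (t.getD i []).drop ((t.getD i []).length - s) = (t.getD ((i+1) % t.length) []).take s
    rw [hlenfi]
    by_cases h : i + 1 < t.length
    · rw [Nat.mod_eq_of_lt h]
      have hadj := List.isChain_iff_getElem.1 htrail.2.1 i (by omega)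
      have : OCW2.dst n s (t.get ⟨i, by omega⟩) = OCW2.src s (t.get ⟨i + 1, h⟩) := hadj
      rw [List.get_eq_getElem, List.get_eq_getElem, ← List.getD_eq_getElem _ _ (by omega : i < t.length),
        ← List.getD_eq_getElem _ _ h] at this
      exact this
    · have hieq : i + 1 = t.length := by omega
      have hmod : (i + 1) % t.length = 0 := by rw [hieq, Nat.mod_self]
      rw [hmod]
      have hclose := hcl.2
      rw [OCW4.getLastD_eq_getD htne, OCW4.headD_eq_getD htne, hdef] at hclose
      have : t.length - 1 = i := by omega
      rw [this] at hclose
      exact hclose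
end

section
/- Let n, s, k be positive integers and h a natural number with 1 ≤ s ≤ n−2, k ≤ n(n−1)/2, 0 ≤ h < n, and W_k(n,h) nonempty. If gcd(s, n) = 1, then there exists an s-overlap cycle for W_k(n,h), the set of weak order words of length n with weight k and height h. -/
open List

set_option linter.unusedSectionVars false
set_option maxHeartbeats 1000000

/-- `W_k(n,h)`: the weak order words of length `n` with weight (sum of letters)
`k` and height exactly `h`. -/
def weightHeightWeakOrders (n k h : ℕ) : Set (List ℕ) :=
  {w | w.length = n ∧ w.toFinset = Finset.range (h + 1) ∧ w.sum = k}

section conn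


section conn
variable {n s k h}

lemma memC_def {a : List ℕ} : a ∈ weightHeightWeakOrders n k h ↔
    a.length = n ∧ a.toFinset = Finset.range (h + 1) ∧ a.sum = k := Iff.rfl

lemma memC_of_perm {a b : List ℕ} (hab : a.Perm b) (ha : a ∈ weightHeightWeakOrders n k h) : b ∈ weightHeightWeakOrders n k h := by
  obtain ⟨h1, h2, h3⟩ := ha
  have ht : b.toFinset = a.toFinset := by
    ext v; simp [List.mem_toFinset, hab.mem_iff]
  exact ⟨hab.length_eq ▸ h1, ht ▸ h2, hab.sum_eq ▸ h3⟩

lemma memC_rotate {a : List ℕ} (ha : a ∈ weightHeightWeakOrders n k h) (j : ℕ) : a.rotate j ∈ weightHeightWeakOrders n k h :=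
  memC_of_perm (a.rotate_perm j).symm ha

/-- one step of the connectivity relation -/
def RL (a b : List ℕ) : Prop :=
  a ∈ weightHeightWeakOrders n k h ∧ b ∈ weightHeightWeakOrders n k h ∧
    (a.drop (n - s) = b.drop (n - s) ∨ b = a.rotate (n - s) ∨ a = b.rotate (n - s))

def Conn (a b : List ℕ) : Prop := Relation.ReflTransGen (RL (n := n) (s := s) (k := k) (h := h)) a b

lemma RL_symm : Symmetric (RL (n := n) (s := s) (k := k) (h := h)) := by
  rintro a b ⟨ha, hb, hc⟩
  exact ⟨hb, ha, by tauto⟩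

lemma Conn.trans {a b c : List ℕ} (h1 : Conn (n := n) (s := s) (k := k) (h := h) a b)
    (h2 : Conn (n := n) (s := s) (k := k) (h := h) b c) :
    Conn (n := n) (s := s) (k := k) (h := h) a c := Relation.ReflTransGen.trans h1 h2

lemma Conn.symm {a b : List ℕ} (h1 : Conn (n := n) (s := s) (k := k) (h := h) a b) :
    Conn (n := n) (s := s) (k := k) (h := h) b a := by
  unfold Conn at h1 ⊢
  induction h1 with
  | refl => exact Relation.ReflTransGen.refl
  | tail _ hbc ih => exact Relation.ReflTransGen.head (RL_symm hbc) ih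

lemma Conn.refl {a : List ℕ} : Conn (n := n) (s := s) (k := k) (h := h) a a :=
  Relation.ReflTransGen.refl

lemma conn_rotate_base {a : List ℕ} (ha : a ∈ weightHeightWeakOrders n k h) :
    Conn (n := n) (s := s) (k := k) (h := h) a (a.rotate (n - s)) :=
  Relation.ReflTransGen.single ⟨ha, memC_rotate ha _, Or.inr (Or.inl rfl)⟩

lemma conn_rotate_mul {a : List ℕ} (ha : a ∈ weightHeightWeakOrders n k h) (m : ℕ) :
    Conn (n := n) (s := s) (k := k) (h := h) a (a.rotate ((n - s) * m)) := by
  induction m with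
  | zero => simpa using (Conn.refl (n := n) (s := s) (k := k) (h := h) (a := a))
  | succ m ih =>
      have := conn_rotate_base (n := n) (s := s) (memC_rotate ha ((n - s) * m))
      rw [List.rotate_rotate] at this
      have e : (n - s) * m + (n - s) = (n - s) * (m + 1) := by ring
      rw [e] at this
      exact ih.trans this

/-- full rotation lemma, using gcd(s,n)=1 -/
lemma conn_rotate (hn : 0 < n) (hsn : s ≤ n) (hgcd : Nat.gcd s n = 1)
    {a : List ℕ} (ha : a ∈ weightHeightWeakOrders n k h) (j : ℕ) :
    Conn (n := n) (s := s) (k := k) (h := h) a (a.rotate j) := by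
  haveI : NeZero n := ⟨hn.ne'⟩
  have hlen : a.length = n := ha.1
  have hu : IsUnit ((n - s : ℕ) : ZMod n) := by
    have : ((n - s : ℕ) : ZMod n) = -(s : ZMod n) := by
      have : ((n - s : ℕ) : ZMod n) = (n : ZMod n) - (s : ZMod n) := by
        push_cast [Nat.cast_sub hsn]; ring
      simp [this]
    rw [this]
    exact (ZMod.isUnit_iff_coprime s n |>.2 hgcd).neg
  set m : ℕ := ((j : ZMod n) * ((n - s : ℕ) : ZMod n)⁻¹).val with hm
  have key : ((n - s) * m : ℕ) ≡ j [MOD n] := by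
    rw [← ZMod.natCast_eq_natCast_iff]
    push_cast [hm]
    rw [ZMod.natCast_val, ZMod.cast_id]
    calc ((n - s : ℕ) : ZMod n) * ((j : ZMod n) * ((n - s : ℕ) : ZMod n)⁻¹)
        = (j : ZMod n) * (((n - s : ℕ) : ZMod n) * ((n - s : ℕ) : ZMod n)⁻¹) := by ring
      _ = (j : ZMod n) := by rw [ZMod.mul_inv_of_unit _ hu, mul_one]
  have : a.rotate ((n - s) * m) = a.rotate j := by
    rw [← List.rotate_mod a ((n - s) * m), ← List.rotate_mod a j, hlen]
    exact congrArg _ key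
  rw [← this]
  exact conn_rotate_mul ha m

/-- same suffix move -/
lemma conn_suffix {a b : List ℕ} (ha : a ∈ weightHeightWeakOrders n k h) (hb : b ∈ weightHeightWeakOrders n k h)
    (hd : a.drop (n - s) = b.drop (n - s)) :
    Conn (n := n) (s := s) (k := k) (h := h) a b :=
  Relation.ReflTransGen.single ⟨ha, hb, Or.inl hd⟩

/-- swap the first two letters -/
lemma conn_swap2 (hs2 : s ≤ n - 2) (hn : 2 ≤ n) {x y : ℕ} {t : List ℕ}
    (ha : (x :: y :: t) ∈ weightHeightWeakOrders n k h) :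
    Conn (n := n) (s := s) (k := k) (h := h) (x :: y :: t) (y :: x :: t) := by
  have hb : (y :: x :: t) ∈ weightHeightWeakOrders n k h := memC_of_perm (List.Perm.swap y x t) ha
  apply conn_suffix ha hb
  obtain ⟨m, hm⟩ : ∃ m, n - s = m + 2 := by
    refine ⟨n - s - 2, ?_⟩
    omega
  simp [hm]


variable (hn : 0 < n) (hsn : s ≤ n) (hgcd : Nat.gcd s n = 1) (hs2 : s ≤ n - 2) (hn2 : 2 ≤ n)

include hn hsn hgcd hs2 hn2 in
lemma conn_moveToFront : ∀ (p t : List ℕ) (c : ℕ), c ∈ p → (p ++ t) ∈ weightHeightWeakOrders n k h →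
    Conn (n := n) (s := s) (k := k) (h := h) (p ++ t) (c :: (p.erase c ++ t)) := by
  intro p
  induction p with
  | nil => intro t c hc; exact absurd hc List.not_mem_nil
  | cons a p' ih =>
      intro t c hc hmem
      by_cases hac : a = c
      · subst hac
        rw [List.erase_cons_head]
        exact Conn.refl
      · have hc' : c ∈ p' := by
          rcases List.mem_cons.1 hc with h1 | h1
          · exact absurd h1.symm hac
          · exact h1
        -- step 1 : rotate by 1
        have e1 : ((a :: p') ++ t).rotate 1 = p' ++ (t ++ [a]) := by
          simp [List.rotate_cons_succ]
        have s1 : Conn (n := n) (s := s) (k := k) (h := h) ((a :: p') ++ t) (p' ++ (t ++ [a])) := by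
          have := conn_rotate hn hsn hgcd hmem 1
          rwa [e1] at this
        have hmem1 : p' ++ (t ++ [a]) ∈ weightHeightWeakOrders n k h := by
          rw [← e1]; exact memC_rotate hmem 1
        -- step 2 : IH
        have s2 := ih (t ++ [a]) c hc' hmem1
        -- step 3 : rotate back
        have hmem2 : c :: (p'.erase c ++ (t ++ [a])) ∈ weightHeightWeakOrders n k h := by
          refine memC_of_perm ?_ hmem1
          exact List.Perm.append_right (t ++ [a]) (List.perm_cons_erase hc')
        have e3 : c :: (p'.erase c ++ (t ++ [a])) = (c :: (p'.erase c ++ t)) ++ [a] := by simp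
        have e4 : (c :: (p'.erase c ++ (t ++ [a]))).rotate ((c :: (p'.erase c ++ t)).length)
            = a :: c :: (p'.erase c ++ t) := by
          rw [e3, List.rotate_append_length_eq]; simp
        have s3 : Conn (n := n) (s := s) (k := k) (h := h)
            (c :: (p'.erase c ++ (t ++ [a]))) (a :: c :: (p'.erase c ++ t)) := by
          have := conn_rotate hn hsn hgcd hmem2 ((c :: (p'.erase c ++ t)).length)
          rwa [e4] at this
        have hmem3 : (a :: c :: (p'.erase c ++ t)) ∈ weightHeightWeakOrders n k h := by
          rw [← e4]; exact memC_rotate hmem2 _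
        have s4 : Conn (n := n) (s := s) (k := k) (h := h)
            (a :: c :: (p'.erase c ++ t)) (c :: a :: (p'.erase c ++ t)) :=
          conn_swap2 hs2 hn2 hmem3
        have e5 : c :: ((a :: p').erase c ++ t) = c :: a :: (p'.erase c ++ t) := by
          rw [List.erase_cons_tail]
          · simp
          · simp [hac]
        rw [e5]
        exact ((s1.trans s2).trans s3).trans s4

include hn hsn hgcd hs2 hn2 in
lemma conn_perm_aux : ∀ (q p t : List ℕ), p.Perm q → (p ++ t) ∈ weightHeightWeakOrders n k h →
    Conn (n := n) (s := s) (k := k) (h := h) (p ++ t) (q ++ t) := by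
  intro q
  induction q with
  | nil =>
      intro p t hpq hmem
      have : p = [] := List.Perm.eq_nil hpq
      subst this; exact Conn.refl
  | cons c q' ih =>
      intro p t hpq hmem
      have hc : c ∈ p := hpq.symm.subset (List.mem_cons_self (a := c) (l := q'))
      have s1 := conn_moveToFront hn hsn hgcd hs2 hn2 p t c hc hmem
      have hmem1 : c :: (p.erase c ++ t) ∈ weightHeightWeakOrders n k h := by
        refine memC_of_perm ?_ hmem
        exact List.Perm.append_right t (List.perm_cons_erase hc)
      have e1 : (c :: (p.erase c ++ t)).rotate 1 = p.erase c ++ (t ++ [c]) := by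
        simp [List.rotate_cons_succ]
      have s2 : Conn (n := n) (s := s) (k := k) (h := h)
          (c :: (p.erase c ++ t)) (p.erase c ++ (t ++ [c])) := by
        have := conn_rotate hn hsn hgcd hmem1 1
        rwa [e1] at this
      have hmem2 : p.erase c ++ (t ++ [c]) ∈ weightHeightWeakOrders n k h := by
        rw [← e1]; exact memC_rotate hmem1 1
      have hpq' : (p.erase c).Perm q' := by
        have := hpq.erase c
        rwa [List.erase_cons_head] at this
      have s3 := ih (p.erase c) (t ++ [c]) hpq' hmem2
      have hmem3 : q' ++ (t ++ [c]) ∈ weightHeightWeakOrders n k h := memC_of_perm (hpq'.append_right _) hmem2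
      have e4 : (q' ++ (t ++ [c])).rotate ((q' ++ t).length) = c :: (q' ++ t) := by
        have e : q' ++ (t ++ [c]) = (q' ++ t) ++ [c] := by simp
        rw [e, List.rotate_append_length_eq]; simp
      have s4 : Conn (n := n) (s := s) (k := k) (h := h)
          (q' ++ (t ++ [c])) (c :: (q' ++ t)) := by
        have := conn_rotate hn hsn hgcd hmem3 ((q' ++ t).length)
        rwa [e4] at this
      exact ((s1.trans s2).trans s3).trans s4

include hn hsn hgcd hs2 hn2 in
lemma conn_of_perm {a b : List ℕ} (hab : a.Perm b) (ha : a ∈ weightHeightWeakOrders n k h) :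
    Conn (n := n) (s := s) (k := k) (h := h) a b := by
  have := conn_perm_aux hn hsn hgcd hs2 hn2 b a [] hab (by simpa using ha)
  simpa using this




/-- terminal multisets -/
def Term (h : ℕ) (E : Multiset ℕ) : Prop :=
  ∀ x ∈ E, ∀ y ∈ E.erase x, y ≤ x → x < h → y = 0

lemma term_max {E : Multiset ℕ} (hne : E ≠ 0) (hb : ∀ x ∈ E, x ≤ h) (ht : Term h E) :
    ∃ m ∈ E, (∀ y ∈ E, y ≤ m) ∧ m = min h E.sum := by
  have hne' : E.toFinset.Nonempty := by
    rw [Multiset.toFinset_nonempty]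
    exact hne
  obtain ⟨m, hmF, hmax⟩ := Finset.exists_max_image E.toFinset id hne'
  simp only [Multiset.mem_toFinset] at hmF
  have hmax' : ∀ y ∈ E, y ≤ m := fun y hy => hmax y (Multiset.mem_toFinset.2 hy)
  refine ⟨m, hmF, hmax', ?_⟩
  have h1 : m ≤ h := hb m hmF
  have h2 : m ≤ E.sum := Multiset.single_le_sum (fun x _ => Nat.zero_le x) m hmF
  have h3 : ¬(m < h ∧ m < E.sum) := by
    rintro ⟨hlt1, hlt2⟩
    have hsum : E.sum = m + (E.erase m).sum := by
      conv_lhs => rw [← Multiset.cons_erase hmF]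
      rw [Multiset.sum_cons]
    have hpos : 0 < (E.erase m).sum := by omega
    have : ∃ y ∈ E.erase m, y ≠ 0 := by
      by_contra hcon
      push_neg at hcon
      have : (E.erase m).sum = 0 := Multiset.sum_eq_zero hcon
      omega
    obtain ⟨y, hy, hy0⟩ := this
    have := ht m hmF y hy (hmax' y (Multiset.mem_of_mem_erase hy)) hlt1
    exact hy0 this
  omega

lemma term_unique : ∀ (c : ℕ) (E₁ E₂ : Multiset ℕ), Multiset.card E₁ = c →
    Multiset.card E₂ = c → E₁.sum = E₂.sum → (∀ x ∈ E₁, x ≤ h) → (∀ x ∈ E₂, x ≤ h) →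
    Term h E₁ → Term h E₂ → E₁ = E₂ := by
  intro c
  induction c with
  | zero =>
      intro E₁ E₂ h1 h2 _ _ _ _ _
      rw [Multiset.card_eq_zero] at h1 h2
      rw [h1, h2]
  | succ c ih =>
      intro E₁ E₂ h1 h2 hsum hb₁ hb₂ ht₁ ht₂
      have hne₁ : E₁ ≠ 0 := by
        intro hc; rw [hc] at h1; simp at h1
      have hne₂ : E₂ ≠ 0 := by
        intro hc; rw [hc] at h2; simp at h2
      obtain ⟨m₁, hm₁, hmax₁, hmin₁⟩ := term_max hne₁ hb₁ ht₁
      obtain ⟨m₂, hm₂, hmax₂, hmin₂⟩ := term_max hne₂ hb₂ ht₂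
      have hmm : m₁ = m₂ := by rw [hmin₁, hmin₂, hsum]
      subst hmm
      have key : E₁.erase m₁ = E₂.erase m₁ := by
        apply ih
        · rw [Multiset.card_erase_of_mem hm₁, h1]; rfl
        · rw [Multiset.card_erase_of_mem hm₂, h2]; rfl
        · have e1 : E₁.sum = m₁ + (E₁.erase m₁).sum := by
            conv_lhs => rw [← Multiset.cons_erase hm₁]; rw [Multiset.sum_cons]
          have e2 : E₂.sum = m₁ + (E₂.erase m₁).sum := by
            conv_lhs => rw [← Multiset.cons_erase hm₂]; rw [Multiset.sum_cons]
          omega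
        · exact fun x hx => hb₁ x (Multiset.mem_of_mem_erase hx)
        · exact fun x hx => hb₂ x (Multiset.mem_of_mem_erase hx)
        · intro x hx y hy hyx hxh
          refine ht₁ x (Multiset.mem_of_mem_erase hx) y ?_ hyx hxh
          rw [Multiset.erase_comm] at hy
          exact Multiset.mem_of_mem_erase hy
        · intro x hx y hy hyx hxh
          refine ht₂ x (Multiset.mem_of_mem_erase hx) y ?_ hyx hxh
          rw [Multiset.erase_comm] at hy
          exact Multiset.mem_of_mem_erase hy
      calc E₁ = m₁ ::ₘ E₁.erase m₁ := (Multiset.cons_erase hm₁).symm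
        _ = m₁ ::ₘ E₂.erase m₁ := by rw [key]
        _ = E₂ := Multiset.cons_erase hm₂


/-- the extra part of a word -/
def Eres (h : ℕ) (a : List ℕ) : Multiset ℕ := (↑a : Multiset ℕ) - Multiset.range (h + 1)

/-- sum of squares of the extra part -/
def msq (h : ℕ) (a : List ℕ) : ℕ := ((Eres h a).map (fun z => z * z)).sum

lemma mem_iff_lt {a : List ℕ} (ha : a ∈ weightHeightWeakOrders n k h) {v : ℕ} : v ∈ a ↔ v < h + 1 := by
  obtain ⟨_, h2, _⟩ := memC_def.1 ha
  rw [← List.mem_toFinset, h2, Finset.mem_range]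

lemma base_le {a : List ℕ} (ha : a ∈ weightHeightWeakOrders n k h) :
    Multiset.range (h + 1) ≤ (↑a : Multiset ℕ) := by
  rw [Multiset.le_iff_subset (Multiset.nodup_range _)]
  intro v hv
  rw [Multiset.mem_range] at hv
  rw [Multiset.mem_coe]
  exact (mem_iff_lt ha).2 hv

lemma base_add_Eres {a : List ℕ} (ha : a ∈ weightHeightWeakOrders n k h) :
    Multiset.range (h + 1) + Eres h a = (↑a : Multiset ℕ) := by
  rw [Eres, add_comm]
  exact tsub_add_cancel_of_le (base_le ha)

lemma Eres_le {a : List ℕ} : Eres h a ≤ (↑a : Multiset ℕ) := tsub_le_self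

lemma Eres_card {a : List ℕ} (ha : a ∈ weightHeightWeakOrders n k h) :
    Multiset.card (Eres h a) + (h + 1) = n := by
  have := congrArg Multiset.card (base_add_Eres ha)
  rw [Multiset.card_add, Multiset.coe_card, (memC_def.1 ha).1, Multiset.card_range] at this
  omega

lemma Eres_sum {a : List ℕ} (ha : a ∈ weightHeightWeakOrders n k h) :
    (Eres h a).sum + (Multiset.range (h + 1)).sum = k := by
  have := congrArg Multiset.sum (base_add_Eres ha)
  rw [Multiset.sum_add] at this
  have hs : (↑a : Multiset ℕ).sum = k := by
    rw [Multiset.sum_coe]; exact (memC_def.1 ha).2.2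
  omega

lemma Eres_bound {a : List ℕ} (ha : a ∈ weightHeightWeakOrders n k h) {x : ℕ} (hx : x ∈ Eres h a) : x ≤ h := by
  have : x ∈ a := Multiset.mem_coe.1 (Multiset.mem_of_le Eres_le hx)
  have := (mem_iff_lt ha).1 this
  omega

lemma msq_bound {a : List ℕ} (ha : a ∈ weightHeightWeakOrders n k h) : msq h a ≤ n * (h * h) := by
  have h1 : ((Eres h a).map (fun z => z * z)).sum ≤
      Multiset.card ((Eres h a).map (fun z => z * z)) • (h * h) := by
    apply Multiset.sum_le_card_nsmul
    intro x hx
    obtain ⟨z, hz, rfl⟩ := Multiset.mem_map.1 hx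
    exact Nat.mul_le_mul (Eres_bound ha hz) (Eres_bound ha hz)
  rw [Multiset.card_map] at h1
  have h2 : Multiset.card (Eres h a) ≤ n := by have := Eres_card ha; omega
  calc msq h a ≤ Multiset.card (Eres h a) • (h * h) := h1
    _ = Multiset.card (Eres h a) * (h * h) := by rw [smul_eq_mul]
    _ ≤ n * (h * h) := Nat.mul_le_mul_right _ h2

/-- the key move: increase the sum of squares -/
lemma conn_move (hn : 0 < n) (hsn : s ≤ n) (hgcd : Nat.gcd s n = 1) (hs2 : s ≤ n - 2)
    (hn2 : 2 ≤ n) {a : List ℕ} (ha : a ∈ weightHeightWeakOrders n k h) {x y : ℕ}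
    (hx : x ∈ Eres h a) (hy : y ∈ (Eres h a).erase x) (hyx : y ≤ x) (hxh : x < h)
    (hy0 : 0 < y) :
    ∃ b ∈ weightHeightWeakOrders n k h, Conn (n := n) (s := s) (k := k) (h := h) a b ∧ msq h a < msq h b := by
  classical
  set E := Eres h a with hE
  set F := (E.erase x).erase y with hF
  set base := Multiset.range (h + 1) with hbase
  have hEx : x ::ₘ E.erase x = E := Multiset.cons_erase hx
  have hExy : y ::ₘ F = E.erase x := Multiset.cons_erase hy
  set t := (base + F).toList with ht
  have htm : (↑t : Multiset ℕ) = base + F := by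
    rw [ht]; exact (base + F).coe_toList
  have hw₁ : (↑(x :: y :: t) : Multiset ℕ) = (↑a : Multiset ℕ) := by
    rw [← base_add_Eres ha, ← hE, ← hEx, ← hExy]
    rw [← Multiset.cons_coe, ← Multiset.cons_coe, htm]
    simp only [← Multiset.singleton_add]
    abel
  have hperm : a.Perm (x :: y :: t) := Multiset.coe_eq_coe.1 hw₁.symm
  have hmem₁ : (x :: y :: t) ∈ weightHeightWeakOrders n k h := memC_of_perm hperm ha
  have s1 : Conn (n := n) (s := s) (k := k) (h := h) a (x :: y :: t) :=
    conn_of_perm hn hsn hgcd hs2 hn2 hperm ha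
  -- the new word
  set b := (x + 1) :: (y - 1) :: t with hb
  have hbm : (↑b : Multiset ℕ) = ((x + 1) ::ₘ (y - 1) ::ₘ F) + base := by
    rw [hb]
    rw [← Multiset.cons_coe, ← Multiset.cons_coe, htm]
    simp only [← Multiset.singleton_add]
    abel
  have hmemb : b ∈ weightHeightWeakOrders n k h := by
    rw [memC_def]
    obtain ⟨h1, h2, h3⟩ := memC_def.1 hmem₁
    refine ⟨?_, ?_, ?_⟩
    · simp only [hb, List.length_cons] at h1 ⊢
      omega
    · ext v
      simp only [List.mem_toFinset, Finset.mem_range, hb, List.mem_cons]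
      constructor
      · rintro (rfl | rfl | hv)
        · omega
        · omega
        · have hv' : v ∈ (↑t : Multiset ℕ) := Multiset.mem_coe.2 hv
          rw [htm, Multiset.mem_add] at hv'
          rcases hv' with hv' | hv'
          · rwa [hbase, Multiset.mem_range] at hv'
          · have : v ∈ E := by
              rw [← hEx, ← hExy]
              exact Multiset.mem_cons_of_mem (Multiset.mem_cons_of_mem hv')
            have := Eres_bound ha (hE ▸ this)
            omega
      · intro hv
        right; right
        have : v ∈ (↑t : Multiset ℕ) := by
          rw [htm, Multiset.mem_add]
          left
          rw [hbase, Multiset.mem_range]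
          exact hv
        exact Multiset.mem_coe.1 this
    · simp only [hb, List.sum_cons]
      simp only [List.sum_cons] at h3
      omega
  -- b is connected to x :: y :: t by a suffix move
  have s2 : Conn (n := n) (s := s) (k := k) (h := h) (x :: y :: t) b := by
    apply conn_suffix hmem₁ hmemb
    obtain ⟨m, hm⟩ : ∃ m, n - s = m + 2 := ⟨n - s - 2, by omega⟩
    rw [hb]; simp [hm]
  -- the measure increases
  have hEb : Eres h b = (x + 1) ::ₘ (y - 1) ::ₘ F := by
    rw [Eres, hbm, ← hbase, add_tsub_cancel_right]
  have hmsq : msq h a < msq h b := by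
    rw [msq, msq, hEb, ← hE, ← hEx, ← hExy]
    simp only [Multiset.map_cons, Multiset.sum_cons]
    have hxy : y - 1 < x := by omega
    obtain ⟨z, rfl⟩ : ∃ z, y = z + 1 := ⟨y - 1, by omega⟩
    simp only [Nat.add_sub_cancel]
    have hzx : z < x := by omega
    nlinarith [((F.map (fun z => z * z)).sum), hzx]
  exact ⟨b, hmemb, s1.trans s2, hmsq⟩

include hn hsn hgcd hs2 hn2 in
lemma conn_terminalize : ∀ (d : ℕ) (a : List ℕ), a ∈ weightHeightWeakOrders n k h →
    n * (h * h) + 1 - msq h a ≤ d →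
    ∃ b ∈ weightHeightWeakOrders n k h, Conn (n := n) (s := s) (k := k) (h := h) a b ∧ Term h (Eres h b) := by
  intro d
  induction d with
  | zero =>
      intro a ha hd
      have := msq_bound ha
      omega
  | succ d ih =>
      intro a ha hd
      by_cases hterm : Term h (Eres h a)
      · exact ⟨a, ha, Conn.refl, hterm⟩
      · rw [show Term h (Eres h a) ↔ ∀ x ∈ Eres h a, ∀ y ∈ (Eres h a).erase x,
            y ≤ x → x < h → y = 0 from Iff.rfl] at hterm
        push_neg at hterm
        obtain ⟨x, hx, y, hy, hyx, hxh, hy0⟩ := hterm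
        obtain ⟨b, hbm, hconn, hlt⟩ :=
          conn_move hn hsn hgcd hs2 hn2 ha hx hy hyx hxh (Nat.pos_of_ne_zero hy0)
        have hmb := msq_bound hbm
        obtain ⟨c, hcm, hconn', hterm'⟩ := ih b hbm (by omega)
        exact ⟨c, hcm, hconn.trans hconn', hterm'⟩

include hn hsn hgcd hs2 hn2 in
lemma conn_all {a b : List ℕ} (ha : a ∈ weightHeightWeakOrders n k h) (hb : b ∈ weightHeightWeakOrders n k h) :
    Conn (n := n) (s := s) (k := k) (h := h) a b := by
  obtain ⟨ta, hta, hca, hterma⟩ :=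
    conn_terminalize hn hsn hgcd hs2 hn2 (n * (h * h) + 1 - msq h a) a ha (le_refl _)
  obtain ⟨tb, htb, hcb, htermb⟩ :=
    conn_terminalize hn hsn hgcd hs2 hn2 (n * (h * h) + 1 - msq h b) b hb (le_refl _)
  have hE : Eres h ta = Eres h tb := by
    apply term_unique (Multiset.card (Eres h ta))
    · rfl
    · have := Eres_card hta; have := Eres_card htb; omega
    · have := Eres_sum hta; have := Eres_sum htb; omega
    · exact fun x hx => Eres_bound hta hx
    · exact fun x hx => Eres_bound htb hx
    · exact hterma
    · exact htermb
  have hperm : ta.Perm tb := by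
    rw [← Multiset.coe_eq_coe, ← base_add_Eres hta, ← base_add_Eres htb, hE]
  have : Conn (n := n) (s := s) (k := k) (h := h) ta tb :=
    conn_of_perm hn hsn hgcd hs2 hn2 hperm hta
  exact (hca.trans this).trans hcb.symm

end conn


set_option linter.unusedSectionVars false
section perm
variable {α : Type} [Fintype α] [DecidableEq α]

/-- natural-number same cycle -/
def SC (π : Equiv.Perm α) (x y : α) : Prop := ∃ i : ℕ, (π ^ i) x = y

lemma SC.refl (π : Equiv.Perm α) (x : α) : SC π x x := ⟨0, rfl⟩

lemma SC.step (π : Equiv.Perm α) (x : α) : SC π x (π x) := ⟨1, by simp⟩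

lemma SC.trans {π : Equiv.Perm α} {x y z : α} (h1 : SC π x y) (h2 : SC π y z) : SC π x z := by
  obtain ⟨i, rfl⟩ := h1
  obtain ⟨j, rfl⟩ := h2
  exact ⟨i + j, by rw [add_comm, pow_add]; rfl⟩

lemma SC.symm {π : Equiv.Perm α} {x y : α} (h1 : SC π x y) : SC π y x := by
  obtain ⟨i, rfl⟩ := h1
  refine ⟨i * (orderOf π - 1), ?_⟩
  have h0 : 0 < orderOf π := orderOf_pos π
  have h1 : (π ^ (i * (orderOf π - 1) + i)) x = (π ^ (i * (orderOf π - 1))) ((π ^ i) x) := by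
    rw [pow_add]; rfl
  rw [← h1]
  have he : i * (orderOf π - 1) + i = orderOf π * i := by
    have h2 : orderOf π - 1 + 1 = orderOf π := Nat.succ_pred_eq_of_pos h0
    calc i * (orderOf π - 1) + i = i * (orderOf π - 1 + 1) := (Nat.mul_succ _ _).symm
      _ = i * orderOf π := by rw [h2]
      _ = orderOf π * i := mul_comm _ _
  rw [he, pow_mul, pow_orderOf_eq_one, one_pow]
  rfl

lemma exists_period (π : Equiv.Perm α) (v : α) : ∃ j : ℕ, 0 < j ∧ (π ^ j) v = v :=
  ⟨orderOf π, orderOf_pos π, by rw [pow_orderOf_eq_one]; rfl⟩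

/-- the merge lemma -/
lemma sc_merge (π : Equiv.Perm α) (u v : α) (huv : ¬ SC π u v) :
    SC (π * Equiv.swap u v) u v ∧
      ∀ a b, SC π a b → SC (π * Equiv.swap u v) a b := by
  classical
  set π' := π * Equiv.swap u v with hπ'
  have happ : ∀ a, π' a = π (Equiv.swap u v a) := fun a => Equiv.Perm.mul_apply _ _ _
  have hex : ∃ j : ℕ, 0 < j ∧ (π ^ j) v = v := exists_period π v
  set m := Nat.find hex with hm
  obtain ⟨hm0, hmv⟩ : 0 < m ∧ (π ^ m) v = v := Nat.find_spec hex
  have hmin : ∀ j, 0 < j → j < m → (π ^ j) v ≠ v := fun j hj0 hjm hjv =>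
    Nat.find_min hex hjm ⟨hj0, hjv⟩
  have hnotu : ∀ i, (π ^ i) v ≠ u := fun i hi => huv (SC.symm ⟨i, hi⟩)
  have traj : ∀ i, 1 ≤ i → i ≤ m → (π' ^ i) u = (π ^ i) v := by
    intro i
    induction i with
    | zero => omega
    | succ i ih =>
        intro _ him
        by_cases hi0 : i = 0
        · subst hi0
          rw [pow_one, pow_one, happ, Equiv.swap_apply_left]
        · have h1i : 1 ≤ i := Nat.pos_of_ne_zero hi0
          have hile : i ≤ m := by omega
          have hilt : i < m := by omega
          have hiv := ih h1i hile
          rw [pow_succ', pow_succ', Equiv.Perm.mul_apply, hiv, happ,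
            Equiv.swap_apply_of_ne_of_ne (hnotu i) (hmin i h1i hilt)]
          rfl
  have huv' : SC π' u v := ⟨m, by rw [traj m hm0 (le_refl m), hmv]⟩
  have claimB : ∀ a, SC π' a (π a) := by
    intro a
    by_cases hau : a = u
    · rw [hau]
      have h2 : π' v = π u := by rw [happ, Equiv.swap_apply_right]
      exact huv'.trans (h2 ▸ SC.step π' v)
    · by_cases hav : a = v
      · rw [hav]
        have h2 : π' u = π v := by rw [happ, Equiv.swap_apply_left]
        exact (huv'.symm).trans (h2 ▸ SC.step π' u)
      · have h2 : π' a = π a := by rw [happ, Equiv.swap_apply_of_ne_of_ne hau hav]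
        exact h2 ▸ SC.step π' a
  refine ⟨huv', ?_⟩
  rintro a b ⟨i, rfl⟩
  induction i with
  | zero => exact SC.refl π' a
  | succ i ih =>
      rw [pow_succ', Equiv.Perm.mul_apply]
      exact ih.trans (claimB _)
end perm

section perm2
variable {α : Type} [Fintype α] [DecidableEq α]

lemma rtg_cross {r : α → α → Prop} {P : α → Prop} :
    ∀ {x y}, Relation.ReflTransGen r x y → P x → ¬ P y →
      ∃ u v, r u v ∧ P u ∧ ¬ P v := by
  intro x y hxy
  induction hxy with
  | refl => intro h1 h2; exact absurd h1 h2
  | @tail b c _ hr ih =>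
      intro hx hc
      by_cases hb : P b
      · exact ⟨b, c, hr, hb, hc⟩
      · exact ih hx hb

lemma exists_single_cycle (g g' : α → List ℕ) (π₀ : Equiv.Perm α)
    (h₀ : ∀ x, g' (π₀ x) = g x)
    (hconn : ∀ x y : α, Relation.ReflTransGen (fun a b => g a = g b ∨ b = π₀ a ∨ a = π₀ b) x y)
    (x₀ : α) :
    ∃ π : Equiv.Perm α, (∀ x, g' (π x) = g x) ∧ ∀ y, SC π x₀ y := by
  classical
  suffices H : ∀ (d : ℕ) (π : Equiv.Perm α), (∀ x, g' (π x) = g x) → (∀ x, SC π x (π₀ x)) →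
      (Finset.univ.filter fun y => ¬ SC π x₀ y).card ≤ d →
      ∃ π' : Equiv.Perm α, (∀ x, g' (π' x) = g x) ∧ ∀ y, SC π' x₀ y by
    exact H (Fintype.card α) π₀ h₀ (fun x => SC.step π₀ x)
      (le_trans (Finset.card_filter_le _ _) (by rw [Finset.card_univ]))
  intro d
  induction d with
  | zero =>
      intro π hg _ hcard
      refine ⟨π, hg, ?_⟩
      intro y
      by_contra hy
      have hmem : y ∈ Finset.univ.filter (fun y => ¬ SC π x₀ y) := by
        simp [hy]
      have := Finset.card_pos.2 ⟨y, hmem⟩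
      omega
  | succ d ih =>
      intro π hg hinv hcard
      by_cases hall : ∀ y, SC π x₀ y
      · exact ⟨π, hg, hall⟩
      · push_neg at hall
        obtain ⟨y₀, hy₀⟩ := hall
        obtain ⟨u, v, hr, hu, hv⟩ := rtg_cross (P := fun y => SC π x₀ y)
          (hconn x₀ y₀) (SC.refl π x₀) hy₀
        have hedge : g u = g v := by
          rcases hr with hh | hh | hh
          · exact hh
          · exact absurd (hu.trans (hh ▸ hinv u)) hv
          · exact absurd (hu.trans ((hh ▸ hinv v : SC π v u).symm)) hv
        have huvSC : ¬ SC π u v := fun hc => hv (hu.trans hc)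
        obtain ⟨hmerge, hpres⟩ := sc_merge π u v huvSC
        set π' := π * Equiv.swap u v with hπ'
        have hg' : ∀ x, g' (π' x) = g x := by
          intro x
          by_cases hxu : x = u
          · rw [hxu]
            have h2 : π' u = π v := by
              rw [hπ', Equiv.Perm.mul_apply, Equiv.swap_apply_left]
            rw [h2, hg v, ← hedge]
          · by_cases hxv : x = v
            · rw [hxv]
              have h2 : π' v = π u := by
                rw [hπ', Equiv.Perm.mul_apply, Equiv.swap_apply_right]
              rw [h2, hg u, hedge]
            · have h2 : π' x = π x := by
                rw [hπ', Equiv.Perm.mul_apply, Equiv.swap_apply_of_ne_of_ne hxu hxv]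
              rw [h2, hg x]
        have hinv' : ∀ x, SC π' x (π₀ x) := fun x => hpres _ _ (hinv x)
        have hsub : (Finset.univ.filter fun y => ¬ SC π' x₀ y) ⊆
            (Finset.univ.filter fun y => ¬ SC π x₀ y) := by
          intro y hy
          simp only [Finset.mem_filter, Finset.mem_univ, true_and] at hy ⊢
          exact fun hc => hy (hpres _ _ hc)
        have hvnew : SC π' x₀ v := (hpres _ _ hu).trans hmerge
        have hss : (Finset.univ.filter fun y => ¬ SC π' x₀ y) ⊂
            (Finset.univ.filter fun y => ¬ SC π x₀ y) := by
          refine ⟨hsub, fun hc => ?_⟩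
          have : v ∈ (Finset.univ.filter fun y => ¬ SC π x₀ y) := by simp [hv]
          have := hc this
          simp only [Finset.mem_filter, Finset.mem_univ, true_and] at this
          exact this hvnew
        have := Finset.card_lt_card hss
        exact ih π' hg' hinv' (by omega)

lemma pow_apply_add (π : Equiv.Perm α) (a b : ℕ) (x : α) :
    (π ^ (a + b)) x = (π ^ a) ((π ^ b) x) := by rw [pow_add]; rfl

lemma pow_apply_comm (π : Equiv.Perm α) (a b : ℕ) (x : α) :
    (π ^ a) ((π ^ b) x) = (π ^ b) ((π ^ a) x) :=
  calc (π ^ a) ((π ^ b) x) = (π ^ (a + b)) x := (pow_apply_add π a b x).symm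
    _ = (π ^ (b + a)) x := by rw [Nat.add_comm]
    _ = (π ^ b) ((π ^ a) x) := pow_apply_add π b a x

lemma cycle_structure (π : Equiv.Perm α) (x₀ : α) (hall : ∀ y, SC π x₀ y) :
    (∀ y, ∃ i < Fintype.card α, (π ^ i) x₀ = y) ∧
    (∀ i j, i < j → j < Fintype.card α → (π ^ i) x₀ ≠ (π ^ j) x₀) ∧
    (π ^ Fintype.card α) x₀ = x₀ := by
  classical
  have hex : ∃ j : ℕ, 0 < j ∧ (π ^ j) x₀ = x₀ := exists_period π x₀
  set d := Nat.find hex with hd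
  obtain ⟨hd0, hdx⟩ : 0 < d ∧ (π ^ d) x₀ = x₀ := Nat.find_spec hex
  have hmin : ∀ j, 0 < j → j < d → (π ^ j) x₀ ≠ x₀ := fun j hj0 hjd hjx =>
    Nat.find_min hex hjd ⟨hj0, hjx⟩
  have hmod : ∀ i, (π ^ i) x₀ = (π ^ (i % d)) x₀ := by
    intro i
    induction i using Nat.strong_induction_on with
    | _ i ihm =>
      by_cases hid : i < d
      · rw [Nat.mod_eq_of_lt hid]
      · have h1 : i - d + d = i := by omega
        have h2 : (π ^ i) x₀ = (π ^ (i - d)) x₀ := by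
          conv_lhs => rw [← h1]
          rw [pow_apply_add, hdx]
        rw [h2, ihm (i - d) (by omega), Nat.mod_eq_sub_mod (show d ≤ i by omega)]
  have hinj : ∀ i j, i < j → j < d → (π ^ i) x₀ ≠ (π ^ j) x₀ := by
    intro i j hij hjd heq
    have h1 : (π ^ j) x₀ = (π ^ (j - i)) ((π ^ i) x₀) := by
      have e : j - i + i = j := by omega
      conv_lhs => rw [← e]
      rw [pow_apply_add]
    have h2 : (π ^ (j - i)) ((π ^ i) x₀) = (π ^ i) x₀ := by rw [← h1, heq]
    have h3 : (π ^ (j - i)) x₀ = x₀ := by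
      have e2 : (π ^ (d - i)) ((π ^ i) x₀) = x₀ := by
        have e : d - i + i = d := by omega
        rw [← pow_apply_add, e, hdx]
      calc (π ^ (j - i)) x₀ = (π ^ (j - i)) ((π ^ (d - i)) ((π ^ i) x₀)) := by rw [e2]
        _ = (π ^ (d - i)) ((π ^ (j - i)) ((π ^ i) x₀)) := pow_apply_comm π _ _ _
        _ = (π ^ (d - i)) ((π ^ i) x₀) := by rw [h2]
        _ = x₀ := e2
    exact hmin (j - i) (by omega) (by omega) h3
  have hsurj : ∀ y, ∃ i < d, (π ^ i) x₀ = y := by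
    intro y
    obtain ⟨i, hi⟩ := hall y
    exact ⟨i % d, Nat.mod_lt _ hd0, by rw [← hmod, hi]⟩
  -- d = card α
  have hdcard : d = Fintype.card α := by
    have hle : d ≤ Fintype.card α := by
      have : Function.Injective (fun i : Fin d => (π ^ (i : ℕ)) x₀) := by
        intro i j hij
        by_contra hne
        rcases lt_or_gt_of_ne (fun hc : (i : ℕ) = (j : ℕ) => hne (Fin.ext hc)) with hlt | hlt
        · exact hinj i j hlt j.isLt hij
        · exact hinj j i hlt i.isLt hij.symm
      calc d = Fintype.card (Fin d) := (Fintype.card_fin d).symm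
        _ ≤ Fintype.card α := Fintype.card_le_of_injective _ this
    have hge : Fintype.card α ≤ d := by
      rcases Nat.eq_zero_or_pos d with h0 | h0
      · omega
      have : Function.Surjective (fun i : Fin d => (π ^ (i : ℕ)) x₀) := by
        intro y
        obtain ⟨i, hi, hiy⟩ := hsurj y
        exact ⟨⟨i, hi⟩, hiy⟩
      calc Fintype.card α ≤ Fintype.card (Fin d) := Fintype.card_le_of_surjective _ this
        _ = d := Fintype.card_fin d
    omega
  rw [← hdcard]
  exact ⟨hsurj, hinj, hdx⟩
end perm2


/-- For positive integers `n, s, k` and natural `h` with `1 ≤ s ≤ n - 2`,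
`k ≤ C(n,2)`, `h < n`, `W_k(n,h)` nonempty and `gcd(s,n) = 1`, there exists an
`s`-overlap cycle for `W_k(n,h)`. -/
theorem exists_ocycle_weightHeightWeakOrders (n s k h : ℕ) (hn : 0 < n)
    (hk : 0 < k) (hs1 : 1 ≤ s) (hs2 : s ≤ n - 2) (hkn : k ≤ n.choose 2)
    (hh : h < n) (hne : (weightHeightWeakOrders n k h).Nonempty)
    (hgcd : Nat.gcd s n = 1) :
    ∃ f : ℕ → List ℕ,
      IsOCycle s (Nat.card (weightHeightWeakOrders n k h))
        (weightHeightWeakOrders n k h) f := by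
  classical
  have hn3 : 3 ≤ n := by omega
  have hn2 : 2 ≤ n := by omega
  have hsn : s ≤ n := by omega
  set C := weightHeightWeakOrders n k h with hCdef
  -- C is finite
  have hlen : ∀ a ∈ C, a.length = n := fun a ha => ha.1
  have hmemlt : ∀ a ∈ C, ∀ v ∈ a, v < h + 1 := by
    intro a ha v hv
    have := ha.2.1
    rw [← Finset.mem_range, ← this, List.mem_toFinset]
    exact hv
  have hfin : C.Finite := by
    set F : List ℕ → (Fin n → ℕ) := fun l i => l.getD i 0 with hF
    have hfin2 : (Set.pi Set.univ fun _ : Fin n => Set.Iic h).Finite :=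
      Set.Finite.pi fun _ => Set.finite_Iic h
    have himg : F '' C ⊆ Set.pi Set.univ fun _ : Fin n => Set.Iic h := by
      rintro _ ⟨l, hl, rfl⟩ i _
      have hi : (i : ℕ) < l.length := by rw [hlen l hl]; exact i.isLt
      have : F l i = l[(i : ℕ)] := List.getD_eq_getElem l 0 hi
      rw [Set.mem_Iic, this]
      exact Nat.lt_succ_iff.mp (hmemlt l hl _ (List.getElem_mem hi))
    have hinj : Set.InjOn F C := by
      intro a ha b hb hab
      apply List.ext_getElem (by rw [hlen a ha, hlen b hb])
      intro i hia hib
      have h1 : F a ⟨i, by rwa [hlen a ha] at hia⟩ = a[i] := List.getD_eq_getElem a 0 hia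
      have h2 : F b ⟨i, by rwa [hlen b hb] at hib⟩ = b[i] := List.getD_eq_getElem b 0 hib
      rw [← h1, ← h2, hab]
    exact Set.Finite.of_finite_image (hfin2.subset himg) hinj
  haveI hft : Fintype ↥C := hfin.fintype
  -- the rotation permutation
  have hrotC : ∀ (x : ↥C) (j : ℕ), (x : List ℕ).rotate j ∈ C := fun x j => memC_rotate x.2 j
  set π₀ : Equiv.Perm ↥C := {
    toFun := fun x => ⟨(x : List ℕ).rotate (n - s), hrotC x _⟩
    invFun := fun x => ⟨(x : List ℕ).rotate s, hrotC x _⟩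
    left_inv := by
      intro x
      apply Subtype.ext
      show ((x : List ℕ).rotate (n - s)).rotate s = (x : List ℕ)
      rw [List.rotate_rotate, show n - s + s = n by omega, ← hlen x x.2, List.rotate_length]
    right_inv := by
      intro x
      apply Subtype.ext
      show ((x : List ℕ).rotate s).rotate (n - s) = (x : List ℕ)
      rw [List.rotate_rotate, show s + (n - s) = n by omega, ← hlen x x.2,
        List.rotate_length] } with hπ₀
  set g : ↥C → List ℕ := fun x => (x : List ℕ).drop (n - s) with hg
  set g' : ↥C → List ℕ := fun x => (x : List ℕ).take s with hg'
  have h₀ : ∀ x, g' (π₀ x) = g x := by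
    intro x
    show ((x : List ℕ).rotate (n - s)).take s = (x : List ℕ).drop (n - s)
    rw [List.rotate_eq_drop_append_take (by rw [hlen x x.2]; omega)]
    apply List.take_left'
    rw [List.length_drop, hlen x x.2]
    omega
  -- connectivity
  have hconn : ∀ x y : ↥C,
      Relation.ReflTransGen (fun a b => g a = g b ∨ b = π₀ a ∨ a = π₀ b) x y := by
    have hlift : ∀ a b : List ℕ, Conn (n := n) (s := s) (k := k) (h := h) a b →
        ∀ (ha : a ∈ C) (hb : b ∈ C),
        Relation.ReflTransGen (fun a b : ↥C => g a = g b ∨ b = π₀ a ∨ a = π₀ b) ⟨a, ha⟩ ⟨b, hb⟩ := by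
      intro a b hab
      induction hab with
      | refl => intro ha hb; exact Relation.ReflTransGen.refl
      | @tail c d hac hcd ih =>
          intro ha hb
          obtain ⟨hc, hd, hstep⟩ := hcd
          refine Relation.ReflTransGen.tail (ih ha hc) ?_
          rcases hstep with hs' | hs' | hs'
          · exact Or.inl hs'
          · exact Or.inr (Or.inl (Subtype.ext hs'))
          · exact Or.inr (Or.inr (Subtype.ext hs'))
    intro x y
    have := conn_all hn hsn hgcd hs2 hn2 (a := (x : List ℕ)) (b := (y : List ℕ)) x.2 y.2
    have h2 := hlift _ _ this x.2 y.2
    simpa using h2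
  -- a single cycle permutation
  obtain ⟨x₀, hx₀⟩ := hne
  obtain ⟨π, hπg, hπall⟩ := exists_single_cycle g g' π₀ h₀ hconn ⟨x₀, hx₀⟩
  obtain ⟨hsurj, hinj, hperiod⟩ := cycle_structure π ⟨x₀, hx₀⟩ hπall
  set N := Fintype.card ↥C with hN
  have hNcard : Nat.card ↥C = N := Nat.card_eq_fintype_card
  have hN0 : 0 < N := by
    rw [hN]
    exact Fintype.card_pos_iff.2 ⟨⟨x₀, hx₀⟩⟩
  refine ⟨fun i => ((π ^ i) ⟨x₀, hx₀⟩ : ↥C), ?_, ?_, ?_⟩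
  · intro i _
    exact ((π ^ i) ⟨x₀, hx₀⟩).2
  · intro c hc
    rw [hNcard]
    obtain ⟨i, hiN, hi⟩ := hsurj ⟨c, hc⟩
    refine ⟨i, ⟨hiN, congrArg Subtype.val hi⟩, ?_⟩
    rintro j ⟨hjN, hj⟩
    have hj' : (((π ^ j) ⟨x₀, hx₀⟩ : ↥C) : List ℕ) = c := hj
    by_contra hne'
    have hval : (π ^ j) ⟨x₀, hx₀⟩ = (π ^ i) ⟨x₀, hx₀⟩ :=
      Subtype.ext (by rw [hj']; exact (congrArg Subtype.val hi).symm)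
    rcases Nat.lt_or_ge j i with hlt | hge
    · exact hinj j i hlt hiN hval
    · have hlt : i < j := by omega
      exact hinj i j hlt hjN hval.symm
  · intro i hiN
    rw [hNcard] at hiN ⊢
    show (((π ^ i) ⟨x₀, hx₀⟩ : ↥C) : List ℕ).drop
        ((((π ^ i) ⟨x₀, hx₀⟩ : ↥C) : List ℕ).length - s)
      = (((π ^ ((i + 1) % N)) ⟨x₀, hx₀⟩ : ↥C) : List ℕ).take s
    have hli : (((π ^ i) ⟨x₀, hx₀⟩ : ↥C) : List ℕ).length = n := hlen _ ((π ^ i) ⟨x₀, hx₀⟩).2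
    rw [hli]
    have hkey : ∀ x : ↥C, ((π x : ↥C) : List ℕ).take s = ((x : ↥C) : List ℕ).drop (n - s) :=
      fun x => hπg x
    by_cases hlast : i + 1 < N
    · rw [Nat.mod_eq_of_lt hlast]
      have heq : (π ^ (i + 1)) ⟨x₀, hx₀⟩ = π ((π ^ i) ⟨x₀, hx₀⟩) := by
        rw [pow_succ']
        rfl
      rw [heq, hkey]
    · have hmod : (i + 1) % N = 0 := by
        rw [show i + 1 = N by omega, Nat.mod_self]
      rw [hmod]
      have h1 : (π ^ (0 : ℕ)) ⟨x₀, hx₀⟩ = π ((π ^ i) ⟨x₀, hx₀⟩) := by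
        have h2 : (π ^ N) ⟨x₀, hx₀⟩ = π ((π ^ i) ⟨x₀, hx₀⟩) := by
          rw [show N = i + 1 by omega, pow_succ']
          rfl
        rw [pow_zero, ← h2, hperiod]
        rfl
      rw [h1, hkey]
end conn
end
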